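/- arXiv:2602.22672 — 10 statements merged into one kernel-verified Lean document; each statement's English description precedes it below -/
import Mathlib

section
/- Let w : ℝ → ℝ be a twice continuously differentiable even function satisfying -w''(r) + w(r) = w(r)³ for all r ∈ ℝ, and suppose there exist constants C, η > 0 such that |w(r)| + |w'(r)| ≤ C·e^{-η|r|} for all r ∈ ℝ. Then 3·∫₀^∞ w(r)⁴ dr = 4·∫₀^∞ w(r)² dr and 4·∫₀^∞ w(r)² dr = 12·∫₀^∞ |w'(r)|² dr. -/
open MeasureTheory

theorem pohozaev_single (w : ℝ → ℝ)
    (hw : ContDiff ℝ 2 w)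
    (heven : ∀ r : ℝ, w (-r) = w r)
    (hode : ∀ r : ℝ, -(deriv (deriv w) r) + w r = (w r) ^ 3)
    (hdecay : ∃ C > (0:ℝ), ∃ η > (0:ℝ), ∀ r : ℝ,
      |w r| + |deriv w r| ≤ C * Real.exp (-η * |r|)) :
    3 * (∫ r in Set.Ioi (0:ℝ), (w r) ^ 4) = 4 * (∫ r in Set.Ioi (0:ℝ), (w r) ^ 2) ∧
    4 * (∫ r in Set.Ioi (0:ℝ), (w r) ^ 2) =
      12 * (∫ r in Set.Ioi (0:ℝ), |deriv w r| ^ 2) := by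
  obtain ⟨C, hC, η, hη, hbd⟩ := hdecay
  -- basic regularity
  have hw1 : ContDiff ℝ 1 (deriv w) := by
    have := (contDiff_succ_iff_deriv (n := 1)).mp (by exact_mod_cast hw)
    exact this.2.2
  have hwd : Differentiable ℝ w := hw.differentiable (by norm_num)
  have hwd' : Differentiable ℝ (deriv w) := hw1.differentiable (by norm_num)
  have hcw : Continuous w := hw.continuous
  have hcw' : Continuous (deriv w) := hw1.continuous
  have hode' : ∀ r : ℝ, deriv (deriv w) r = w r - (w r) ^ 3 := by
    intro r; have := hode r; linarith
  -- w' is odd, so w'(0) = 0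
  have hderiv0 : deriv w 0 = 0 := by
    have h1 : ∀ r : ℝ, deriv (fun x => w (-x)) r = deriv w r := by
      intro r
      congr 1
      funext x; exact heven x
    have h2 : deriv (fun x => w (-x)) 0 = -deriv w 0 := by
      rw [deriv_comp_neg]
      norm_num
    have := (h1 0).symm.trans h2
    linarith
  -- integrability helper
  have hint : ∀ (f : ℝ → ℝ) (C' η' : ℝ), 0 < η' → Continuous f →
      (∀ r : ℝ, 0 ≤ r → |f r| ≤ C' * Real.exp (-η' * r)) →
      IntegrableOn f (Set.Ioi (0:ℝ)) := by
    intro f C' η' hη' hcf hb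
    have hexp : IntegrableOn (fun r => C' * Real.exp (-η' * r)) (Set.Ioi (0:ℝ)) :=
      (exp_neg_integrableOn_Ioi 0 hη').const_mul C'
    refine Integrable.mono' hexp (hcf.aestronglyMeasurable.restrict) ?_
    filter_upwards [ae_restrict_mem measurableSet_Ioi] with r hr
    exact hb r (le_of_lt hr)
  have hbw : ∀ r : ℝ, 0 ≤ r → |w r| ≤ C * Real.exp (-η * r) := by
    intro r hr
    have := hbd r
    rw [abs_of_nonneg hr] at this
    have : |w r| + |deriv w r| ≤ C * Real.exp (-η * r) := this
    have h2 : (0:ℝ) ≤ |deriv w r| := abs_nonneg _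
    linarith
  have hbw' : ∀ r : ℝ, 0 ≤ r → |deriv w r| ≤ C * Real.exp (-η * r) := by
    intro r hr
    have := hbd r
    rw [abs_of_nonneg hr] at this
    have h2 : (0:ℝ) ≤ |w r| := abs_nonneg _
    linarith
  have hsq : ∀ (f : ℝ → ℝ), (∀ r : ℝ, 0 ≤ r → |f r| ≤ C * Real.exp (-η * r)) →
      ∀ r : ℝ, 0 ≤ r → |(f r) ^ 2| ≤ C ^ 2 * Real.exp (-(2*η) * r) := by
    intro f hb r hr
    have h := hb r hr
    have h0 : (0:ℝ) ≤ |f r| := abs_nonneg _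
    calc |(f r) ^ 2| = |f r| ^ 2 := by rw [abs_pow, sq_abs]
    _ ≤ (C * Real.exp (-η * r)) ^ 2 := by exact pow_le_pow_left₀ h0 h 2
    _ = C ^ 2 * Real.exp (-(2*η) * r) := by
        rw [mul_pow, ← Real.exp_nat_mul]
        ring_nf
  have hintw2 : IntegrableOn (fun r => (w r) ^ 2) (Set.Ioi (0:ℝ)) :=
    hint _ (C^2) (2*η) (by linarith) (hcw.pow 2) (hsq w hbw)
  have hintw'2 : IntegrableOn (fun r => (deriv w r) ^ 2) (Set.Ioi (0:ℝ)) :=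
    hint _ (C^2) (2*η) (by linarith) (hcw'.pow 2) (hsq (deriv w) hbw')
  have hintw4 : IntegrableOn (fun r => (w r) ^ 4) (Set.Ioi (0:ℝ)) := by
    refine hint _ (C^4) (4*η) (by linarith) (hcw.pow 4) ?_
    intro r hr
    have h := hbw r hr
    have h0 : (0:ℝ) ≤ |w r| := abs_nonneg _
    calc |(w r) ^ 4| = |w r| ^ 4 := by rw [abs_pow]
    _ ≤ (C * Real.exp (-η * r)) ^ 4 := pow_le_pow_left₀ h0 h 4
    _ = C ^ 4 * Real.exp (-(4*η) * r) := by
        rw [mul_pow, ← Real.exp_nat_mul]; ring_nf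
  -- exponential bound tends to zero
  have hexpt : Filter.Tendsto (fun r : ℝ => Real.exp (-(2*η) * r))
      Filter.atTop (nhds 0) := by
    have h1 : Filter.Tendsto (fun r : ℝ => (2*η) * r) Filter.atTop Filter.atTop :=
      Filter.Tendsto.const_mul_atTop (by linarith) Filter.tendsto_id
    have := Real.tendsto_exp_neg_atTop_nhds_zero.comp h1
    convert this using 2 with r
    simp [neg_mul]
  have hconstmul : ∀ c : ℝ, Filter.Tendsto (fun r : ℝ => c * Real.exp (-(2*η) * r))
      Filter.atTop (nhds 0) := by
    intro c
    rw [show (0:ℝ) = c * 0 by ring]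
    exact hexpt.const_mul c
  have hexp0 : Filter.Tendsto (fun r : ℝ => C^2 * Real.exp (-(2*η) * r))
      Filter.atTop (nhds 0) := hconstmul _
  have hee : ∀ r : ℝ, Real.exp (-η * r) * Real.exp (-η * r) = Real.exp (-(2*η) * r) := by
    intro r; rw [← Real.exp_add]; ring_nf
  have hsqueeze : ∀ (f : ℝ → ℝ),
      (∀ r : ℝ, 0 ≤ r → |f r| ≤ C^2 * Real.exp (-(2*η) * r)) →
      Filter.Tendsto f Filter.atTop (nhds 0) := by
    intro f hb
    apply squeeze_zero_norm' _ hexp0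
    filter_upwards [Filter.eventually_ge_atTop (0:ℝ)] with r hr
    exact hb r hr
  -- energy identity: (w')² - w² + w⁴/2 = 0 pointwise
  set E : ℝ → ℝ := fun r => (deriv w r)^2 - (w r)^2 + (w r)^4 / 2 with hE
  have hEderiv : ∀ r : ℝ, HasDerivAt E 0 r := by
    intro r
    have h1 : HasDerivAt w (deriv w r) r := (hwd r).hasDerivAt
    have h2 : HasDerivAt (deriv w) (deriv (deriv w) r) r := (hwd' r).hasDerivAt
    have := (((h2.pow 2).sub (h1.pow 2)).add ((h1.pow 4).div_const 2))
    refine this.congr_deriv ?_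
    rw [hode' r]
    ring
  have hEconst : ∀ r : ℝ, E r = E 0 := by
    intro r
    exact is_const_of_deriv_eq_zero (fun x => (hEderiv x).differentiableAt)
      (fun x => (hEderiv x).deriv) r 0
  have hEzero : ∀ r : ℝ, E r = 0 := by
    have htend : Filter.Tendsto E Filter.atTop (nhds 0) := by
      have hb : ∀ r : ℝ, 0 ≤ r → |E r| ≤ (2*C^2 + C^4/2) * Real.exp (-(2*η) * r) := by
        intro r hr
        have h1 := hbw r hr
        have h2 := hbw' r hr
        have h0 : (0:ℝ) ≤ |w r| := abs_nonneg _
        have h0' : (0:ℝ) ≤ |deriv w r| := abs_nonneg _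
        have he1 : Real.exp (-η * r) ≤ 1 := by
          rw [Real.exp_le_one_iff]; nlinarith
        have he0 : (0:ℝ) < Real.exp (-η * r) := Real.exp_pos _
        have hq2 : (deriv w r)^2 ≤ C^2 * Real.exp (-(2*η)*r) := by
          have : |deriv w r|^2 ≤ (C * Real.exp (-η*r))^2 := pow_le_pow_left₀ h0' h2 2
          rw [sq_abs] at this
          calc (deriv w r)^2 ≤ (C * Real.exp (-η*r))^2 := this
          _ = C^2 * Real.exp (-(2*η)*r) := by
              rw [mul_pow, ← Real.exp_nat_mul]; ring_nf
        have hw2 : (w r)^2 ≤ C^2 * Real.exp (-(2*η)*r) := by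
          have : |w r|^2 ≤ (C * Real.exp (-η*r))^2 := pow_le_pow_left₀ h0 h1 2
          rw [sq_abs] at this
          calc (w r)^2 ≤ (C * Real.exp (-η*r))^2 := this
          _ = C^2 * Real.exp (-(2*η)*r) := by
              rw [mul_pow, ← Real.exp_nat_mul]; ring_nf
        have hw4 : (w r)^4 ≤ C^4 * Real.exp (-(2*η)*r) := by
          have h4 : |w r|^4 ≤ (C * Real.exp (-η*r))^4 := pow_le_pow_left₀ h0 h1 4
          rw [show |w r|^4 = (w r)^4 by rw [← abs_pow, abs_of_nonneg]; positivity] at h4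
          calc (w r)^4 ≤ (C * Real.exp (-η*r))^4 := h4
          _ = C^4 * (Real.exp (-η*r))^2 * (Real.exp (-η*r))^2 := by ring
          _ ≤ C^4 * 1 * (Real.exp (-η*r))^2 := by
              have he2 : (Real.exp (-η*r))^2 ≤ 1 := by nlinarith
              have hpos : (0:ℝ) ≤ C^4 * (Real.exp (-η*r))^2 := by positivity
              nlinarith [mul_le_of_le_one_right hpos he2]
          _ = C^4 * Real.exp (-(2*η)*r) := by
              rw [← Real.exp_nat_mul]; ring_nf
        have hnn2 : (0:ℝ) ≤ (w r)^2 := by positivity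
        have hnn2' : (0:ℝ) ≤ (deriv w r)^2 := by positivity
        have hnn4 : (0:ℝ) ≤ (w r)^4 := by positivity
        rw [abs_le]
        constructor <;> simp only [hE] <;> nlinarith [Real.exp_pos (-(2*η)*r)]
      apply squeeze_zero_norm' ?_ (hconstmul (2*C^2 + C^4/2))
      filter_upwards [Filter.eventually_ge_atTop (0:ℝ)] with r hr
      exact hb r hr
    have h0 : Filter.Tendsto E Filter.atTop (nhds (E 0)) := by
      have : E = fun _ => E 0 := funext hEconst
      rw [this]; exact tendsto_const_nhds
    have := tendsto_nhds_unique h0 htend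
    intro r; rw [hEconst r, this]
  have hpoint : ∀ r : ℝ, (deriv w r)^2 = (w r)^2 - (w r)^4 / 2 := by
    intro r; have := hEzero r; simp only [hE] at this; linarith
  -- first integral identity via FTC on F = w * w'
  set F : ℝ → ℝ := fun r => w r * deriv w r with hF
  have hFderiv : ∀ r : ℝ, HasDerivAt F ((deriv w r)^2 + (w r)^2 - (w r)^4) r := by
    intro r
    have h1 : HasDerivAt w (deriv w r) r := (hwd r).hasDerivAt
    have h2 : HasDerivAt (deriv w) (deriv (deriv w) r) r := (hwd' r).hasDerivAt
    have := h1.mul h2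
    refine this.congr_deriv ?_
    rw [hode' r]; ring
  have hFint : IntegrableOn (fun r => (deriv w r)^2 + (w r)^2 - (w r)^4)
      (Set.Ioi (0:ℝ)) := (hintw'2.add hintw2).sub hintw4
  have hFtend : Filter.Tendsto F Filter.atTop (nhds 0) := by
    apply hsqueeze
    intro r hr
    have h1 := hbw r hr
    have h2 := hbw' r hr
    calc |F r| = |w r| * |deriv w r| := abs_mul _ _
    _ ≤ (C * Real.exp (-η*r)) * (C * Real.exp (-η*r)) := by
        exact mul_le_mul h1 h2 (abs_nonneg _) (by positivity)
    _ = C^2 * Real.exp (-(2*η)*r) := by rw [← hee r]; ring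
  have hident1 : (∫ r in Set.Ioi (0:ℝ), ((deriv w r)^2 + (w r)^2 - (w r)^4)) = 0 := by
    have := integral_Ioi_of_hasDerivAt_of_tendsto'
      (f := F) (f' := fun r => (deriv w r)^2 + (w r)^2 - (w r)^4)
      (fun x _ => hFderiv x) hFint hFtend
    rw [this, hF]
    simp [hderiv0]
  -- put it all together
  set A := ∫ r in Set.Ioi (0:ℝ), (w r) ^ 4 with hA
  set B := ∫ r in Set.Ioi (0:ℝ), (w r) ^ 2 with hB
  set D := ∫ r in Set.Ioi (0:ℝ), (deriv w r) ^ 2 with hD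
  have habs : (∫ r in Set.Ioi (0:ℝ), |deriv w r| ^ 2) = D := by
    rw [hD]; congr 1; funext r; rw [sq_abs]
  have hadd : IntegrableOn (fun a => deriv w a ^ 2 + w a ^ 2) (Set.Ioi 0) volume :=
    hintw'2.add hintw2
  have heq1 : D + B - A = 0 := by
    have h2 : (∫ r in Set.Ioi (0:ℝ), ((deriv w r)^2 + (w r)^2 - (w r)^4)) = D + B - A := by
      rw [integral_sub hadd hintw4, integral_add hintw'2 hintw2, hD, hB, hA]
    linarith [hident1, h2]
  have heq2 : D = B - A / 2 := by
    have : (∫ r in Set.Ioi (0:ℝ), (deriv w r)^2) =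
        ∫ r in Set.Ioi (0:ℝ), ((w r)^2 - (w r)^4 / 2) := by
      congr 1; funext r; exact hpoint r
    rw [hD, this, integral_sub hintw2 (hintw4.div_const 2), integral_div]
  constructor
  · linarith
  · rw [habs]; linarith
end

section
/- Let α, β, γ ∈ ℝ and let U, V : ℝ → ℝ be twice continuously differentiable even functions satisfying -U''(r) + U(r) = α·U(r)³ + β·U(r)·V(r)² and -V''(r) + V(r) = γ·V(r)³ + β·U(r)²·V(r) for all r ∈ ℝ, and suppose there exist constants C, η > 0 such that |U(r)| + |U'(r)| + |V(r)| + |V'(r)| ≤ C·e^{-η|r|} for all r ∈ ℝ. Then ∫₀^∞ (U(r)² + V(r)²) dr = (3/4)·∫₀^∞ (α·U(r)⁴ + γ·V(r)⁴ + 2β·U(r)²·V(r)²) dr. -/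
open MeasureTheory Filter Real Topology

theorem pohozaev_system_1 (α β γ : ℝ) (U V : ℝ → ℝ)
    (hU : ContDiff ℝ 2 U) (hV : ContDiff ℝ 2 V)
    (hUeven : ∀ r : ℝ, U (-r) = U r) (hVeven : ∀ r : ℝ, V (-r) = V r)
    (hUode : ∀ r : ℝ, -(deriv (deriv U) r) + U r
      = α * (U r) ^ 3 + β * U r * (V r) ^ 2)
    (hVode : ∀ r : ℝ, -(deriv (deriv V) r) + V r
      = γ * (V r) ^ 3 + β * (U r) ^ 2 * V r)
    (hdecay : ∃ C > (0:ℝ), ∃ η > (0:ℝ), ∀ r : ℝ,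
      |U r| + |deriv U r| + |V r| + |deriv V r| ≤ C * Real.exp (-η * |r|)) :
    (∫ r in Set.Ioi (0:ℝ), ((U r) ^ 2 + (V r) ^ 2))
      = (3 / 4) * ∫ r in Set.Ioi (0:ℝ),
          (α * (U r) ^ 4 + γ * (V r) ^ 4 + 2 * β * (U r) ^ 2 * (V r) ^ 2) := by
  obtain ⟨C, hC, η, hη, hdec⟩ := hdecay
  -- differentiability facts
  have hUdiff : Differentiable ℝ U := hU.differentiable two_ne_zero
  have hVdiff : Differentiable ℝ V := hV.differentiable two_ne_zero
  have hU1 : ContDiff ℝ 1 (deriv U) := by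
    have h2 : ContDiff ℝ (1+1) U := by norm_num; exact hU
    exact (contDiff_succ_iff_deriv.mp h2).2.2
  have hV1 : ContDiff ℝ 1 (deriv V) := by
    have h2 : ContDiff ℝ (1+1) V := by norm_num; exact hV
    exact (contDiff_succ_iff_deriv.mp h2).2.2
  have hU'diff : Differentiable ℝ (deriv U) := hU1.differentiable one_ne_zero
  have hV'diff : Differentiable ℝ (deriv V) := hV1.differentiable one_ne_zero
  have hUd : ∀ r : ℝ, HasDerivAt U (deriv U r) r := fun r => (hUdiff r).hasDerivAt
  have hVd : ∀ r : ℝ, HasDerivAt V (deriv V r) r := fun r => (hVdiff r).hasDerivAt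
  have hU'd : ∀ r : ℝ, HasDerivAt (deriv U) (deriv (deriv U) r) r :=
    fun r => (hU'diff r).hasDerivAt
  have hV'd : ∀ r : ℝ, HasDerivAt (deriv V) (deriv (deriv V) r) r :=
    fun r => (hV'diff r).hasDerivAt
  -- derivative vanishes at 0 (evenness)
  have hU'zero : deriv U 0 = 0 := by
    have h1 : HasDerivAt (fun x : ℝ => U (-x)) (deriv U (-(0:ℝ)) * (-1)) 0 :=
      (hUd (-(0:ℝ))).comp 0 (hasDerivAt_neg 0)
    rw [funext hUeven] at h1
    have h2 := h1.unique (hUd 0)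
    simp only [neg_zero] at h2
    linarith
  have hV'zero : deriv V 0 = 0 := by
    have h1 : HasDerivAt (fun x : ℝ => V (-x)) (deriv V (-(0:ℝ)) * (-1)) 0 :=
      (hVd (-(0:ℝ))).comp 0 (hasDerivAt_neg 0)
    rw [funext hVeven] at h1
    have h2 := h1.unique (hVd 0)
    simp only [neg_zero] at h2
    linarith
  -- limits at infinity
  have hexp : Tendsto (fun r : ℝ => C * Real.exp (-η * r)) atTop (𝓝 0) := by
    have h1 : Tendsto (fun r : ℝ => η * r) atTop atTop := Tendsto.const_mul_atTop hη tendsto_id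
    have h2 : Tendsto (fun r : ℝ => -(η * r)) atTop atBot := tendsto_neg_atTop_atBot.comp h1
    have h3 := (Real.tendsto_exp_atBot.comp h2).const_mul C
    simpa [Function.comp, neg_mul] using h3
  have hW : ∀ r : ℝ, 0 ≤ r →
      |U r| + |deriv U r| + |V r| + |deriv V r| ≤ C * Real.exp (-η * r) := by
    intro r hr
    have := hdec r
    rwa [abs_of_nonneg hr] at this
  have hW0 : Tendsto (fun r : ℝ => |U r| + |deriv U r| + |V r| + |deriv V r|) atTop (𝓝 0) := by
    apply squeeze_zero_norm' _ hexp
    filter_upwards [eventually_ge_atTop (0:ℝ)] with r hr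
    rw [Real.norm_eq_abs, abs_of_nonneg (by positivity)]
    exact hW r hr
  have hU0 : Tendsto U atTop (𝓝 0) := by
    apply squeeze_zero_norm _ hW0
    intro r
    have h1 := abs_nonneg (deriv U r); have h2 := abs_nonneg (V r)
    have h3 := abs_nonneg (deriv V r)
    rw [Real.norm_eq_abs]; linarith
  have hU'0 : Tendsto (deriv U) atTop (𝓝 0) := by
    apply squeeze_zero_norm _ hW0
    intro r
    have h1 := abs_nonneg (U r); have h2 := abs_nonneg (V r)
    have h3 := abs_nonneg (deriv V r)
    rw [Real.norm_eq_abs]; linarith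
  have hV0 : Tendsto V atTop (𝓝 0) := by
    apply squeeze_zero_norm _ hW0
    intro r
    have h1 := abs_nonneg (U r); have h2 := abs_nonneg (deriv U r)
    have h3 := abs_nonneg (deriv V r)
    rw [Real.norm_eq_abs]; linarith
  have hV'0 : Tendsto (deriv V) atTop (𝓝 0) := by
    apply squeeze_zero_norm _ hW0
    intro r
    have h1 := abs_nonneg (U r); have h2 := abs_nonneg (deriv U r)
    have h3 := abs_nonneg (V r)
    rw [Real.norm_eq_abs]; linarith
  -- ODE rewrites
  have o1 : ∀ r : ℝ, deriv (deriv U) r = U r - α * (U r) ^ 3 - β * U r * (V r) ^ 2 := by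
    intro r; linarith [hUode r]
  have o2 : ∀ r : ℝ, deriv (deriv V) r = V r - γ * (V r) ^ 3 - β * (U r) ^ 2 * V r := by
    intro r; linarith [hVode r]
  -- energy identity
  have hEd : ∀ r : ℝ, HasDerivAt (fun x : ℝ =>
      deriv U x ^ 2 + deriv V x ^ 2 - U x ^ 2 - V x ^ 2 + α / 2 * U x ^ 4
        + γ / 2 * V x ^ 4 + β * (U x ^ 2 * V x ^ 2)) 0 r := by
    intro r
    have h := (((((((hU'd r).pow 2).add ((hV'd r).pow 2)).sub ((hUd r).pow 2)).sub
      ((hVd r).pow 2)).add (((hUd r).pow 4).const_mul (α / 2))).add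
      (((hVd r).pow 4).const_mul (γ / 2))).add
      ((((hUd r).pow 2).mul ((hVd r).pow 2)).const_mul β)
    convert h using 1
    · rfl
    · rfl
    · rfl
    rw [o1 r, o2 r]
    push_cast
    simp only [Pi.pow_apply]
    ring
  have hEdiff : Differentiable ℝ (fun x : ℝ =>
      deriv U x ^ 2 + deriv V x ^ 2 - U x ^ 2 - V x ^ 2 + α / 2 * U x ^ 4
        + γ / 2 * V x ^ 4 + β * (U x ^ 2 * V x ^ 2)) :=
    fun x => (hEd x).differentiableAt
  have hEconst := is_const_of_deriv_eq_zero hEdiff (fun x => (hEd x).deriv)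
  have hEtends : Tendsto (fun x : ℝ =>
      deriv U x ^ 2 + deriv V x ^ 2 - U x ^ 2 - V x ^ 2 + α / 2 * U x ^ 4
        + γ / 2 * V x ^ 4 + β * (U x ^ 2 * V x ^ 2)) atTop (𝓝 0) := by
    have h := ((((((hU'0.pow 2).add (hV'0.pow 2)).sub (hU0.pow 2)).sub
      (hV0.pow 2)).add ((hU0.pow 4).const_mul (α / 2))).add
      ((hV0.pow 4).const_mul (γ / 2))).add
      (((hU0.pow 2).mul (hV0.pow 2)).const_mul β)
    have e0 : ((0:ℝ)^2 + (0:ℝ)^2 - (0:ℝ)^2 - (0:ℝ)^2 + α/2 * (0:ℝ)^4 + γ/2 * (0:ℝ)^4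
        + β * ((0:ℝ)^2 * (0:ℝ)^2)) = 0 := by norm_num
    rw [e0] at h
    exact h
  have hE0 : ∀ r : ℝ,
      deriv U r ^ 2 + deriv V r ^ 2 - U r ^ 2 - V r ^ 2 + α / 2 * U r ^ 4
        + γ / 2 * V r ^ 4 + β * (U r ^ 2 * V r ^ 2) = 0 := by
    intro r
    refine tendsto_nhds_unique ?_ hEtends
    have heq : (fun x : ℝ =>
        deriv U x ^ 2 + deriv V x ^ 2 - U x ^ 2 - V x ^ 2 + α / 2 * U x ^ 4
          + γ / 2 * V x ^ 4 + β * (U x ^ 2 * V x ^ 2))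
        = fun _ => deriv U r ^ 2 + deriv V r ^ 2 - U r ^ 2 - V r ^ 2 + α / 2 * U r ^ 4
          + γ / 2 * V r ^ 4 + β * (U r ^ 2 * V r ^ 2) :=
      funext fun x => hEconst x r
    rw [heq]
    exact tendsto_const_nhds
  -- the function g = U U' + V V' and its derivative
  have hgd : ∀ r : ℝ, HasDerivAt (fun x : ℝ => U x * deriv U x + V x * deriv V x)
      (2 * ((U r) ^ 2 + (V r) ^ 2)
        - 3 / 2 * (α * (U r) ^ 4 + γ * (V r) ^ 4 + 2 * β * (U r) ^ 2 * (V r) ^ 2)) r := by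
    intro r
    have h := ((hUd r).mul (hU'd r)).add ((hVd r).mul (hV'd r))
    convert h using 1
    · rfl
    · rfl
    · rfl
    rw [o1 r, o2 r]
    linear_combination -(hE0 r)
  -- integrability helper
  have hint : ∀ (f : ℝ → ℝ) (A : ℝ), Continuous f →
      (∀ r ∈ Set.Ioi (0:ℝ), |f r| ≤ A * Real.exp (-η * r)) →
      IntegrableOn f (Set.Ioi (0:ℝ)) := by
    intro f A hc hb
    refine Integrable.mono' ((exp_neg_integrableOn_Ioi 0 hη).const_mul A)
      hc.aestronglyMeasurable ?_
    filter_upwards [ae_restrict_mem measurableSet_Ioi] with r hr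
    simpa using hb r hr
  have hbounds : ∀ r ∈ Set.Ioi (0:ℝ),
      |U r| ≤ C * Real.exp (-η * r) ∧ |V r| ≤ C * Real.exp (-η * r) := by
    intro r hr
    have h := hW r (le_of_lt hr)
    have h1 := abs_nonneg (U r); have h2 := abs_nonneg (deriv U r)
    have h3 := abs_nonneg (V r); have h4 := abs_nonneg (deriv V r)
    exact ⟨by linarith, by linarith⟩
  have hexp1 : ∀ r ∈ Set.Ioi (0:ℝ), Real.exp (-η * r) ≤ 1 := by
    intro r hr
    calc Real.exp (-η * r) ≤ Real.exp 0 := Real.exp_le_exp.mpr (by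
          have : (0:ℝ) < r := hr
          nlinarith)
      _ = 1 := Real.exp_zero
  -- integrability of the two integrands
  have hi1 : IntegrableOn (fun r : ℝ => (U r) ^ 2 + (V r) ^ 2) (Set.Ioi (0:ℝ)) := by
    refine hint _ (2 * C ^ 2) ((hU.continuous.pow 2).add (hV.continuous.pow 2)) ?_
    intro r hr
    obtain ⟨b1, b2⟩ := hbounds r hr
    set e := Real.exp (-η * r) with he
    have he0 : 0 < e := Real.exp_pos _
    have he1 : e ≤ 1 := hexp1 r hr
    have hu2 : (U r) ^ 2 ≤ (C * e) ^ 2 := by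
      rw [← sq_abs]; exact pow_le_pow_left₀ (abs_nonneg _) b1 2
    have hv2 : (V r) ^ 2 ≤ (C * e) ^ 2 := by
      rw [← sq_abs]; exact pow_le_pow_left₀ (abs_nonneg _) b2 2
    have hkey : (C * e) ^ 2 ≤ C ^ 2 * e := by nlinarith [sq_nonneg C]
    rw [abs_of_nonneg (by positivity)]
    nlinarith
  have hi2 : IntegrableOn (fun r : ℝ =>
      α * (U r) ^ 4 + γ * (V r) ^ 4 + 2 * β * (U r) ^ 2 * (V r) ^ 2) (Set.Ioi (0:ℝ)) := by
    refine hint _ ((|α| + |γ| + 2 * |β|) * C ^ 4)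
      (((continuous_const.mul (hU.continuous.pow 4)).add
        (continuous_const.mul (hV.continuous.pow 4))).add
        ((continuous_const.mul (hU.continuous.pow 2)).mul (hV.continuous.pow 2))) ?_
    intro r hr
    obtain ⟨b1, b2⟩ := hbounds r hr
    set e := Real.exp (-η * r) with he
    have he0 : 0 < e := Real.exp_pos _
    have he1 : e ≤ 1 := hexp1 r hr
    have e4 : e ^ 4 ≤ e := by
      calc e ^ 4 ≤ e ^ 1 := pow_le_pow_of_le_one he0.le he1 (by norm_num)
        _ = e := pow_one e
    have hCe4 : (C * e) ^ 4 ≤ C ^ 4 * e := by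
      calc (C * e) ^ 4 = C ^ 4 * e ^ 4 := by ring
        _ ≤ C ^ 4 * e := mul_le_mul_of_nonneg_left e4 (by positivity)
    have hu4 : (U r) ^ 4 ≤ C ^ 4 * e := by
      calc (U r) ^ 4 = |U r| ^ 4 := by rw [← abs_pow, abs_of_nonneg (by positivity)]
        _ ≤ (C * e) ^ 4 := pow_le_pow_left₀ (abs_nonneg _) b1 4
        _ ≤ C ^ 4 * e := hCe4
    have hv4 : (V r) ^ 4 ≤ C ^ 4 * e := by
      calc (V r) ^ 4 = |V r| ^ 4 := by rw [← abs_pow, abs_of_nonneg (by positivity)]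
        _ ≤ (C * e) ^ 4 := pow_le_pow_left₀ (abs_nonneg _) b2 4
        _ ≤ C ^ 4 * e := hCe4
    have hu2 : (U r) ^ 2 ≤ (C * e) ^ 2 := by
      rw [← sq_abs]; exact pow_le_pow_left₀ (abs_nonneg _) b1 2
    have hv2 : (V r) ^ 2 ≤ (C * e) ^ 2 := by
      rw [← sq_abs]; exact pow_le_pow_left₀ (abs_nonneg _) b2 2
    have huv : (U r) ^ 2 * (V r) ^ 2 ≤ C ^ 4 * e := by
      calc (U r) ^ 2 * (V r) ^ 2 ≤ (C * e) ^ 2 * (C * e) ^ 2 :=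
            mul_le_mul hu2 hv2 (sq_nonneg _) (by positivity)
        _ = (C * e) ^ 4 := by ring
        _ ≤ C ^ 4 * e := hCe4
    have habs : |α * (U r) ^ 4 + γ * (V r) ^ 4 + 2 * β * (U r) ^ 2 * (V r) ^ 2|
        ≤ |α| * (U r) ^ 4 + |γ| * (V r) ^ 4 + 2 * |β| * ((U r) ^ 2 * (V r) ^ 2) := by
      have h1 := abs_add_le (α * (U r) ^ 4 + γ * (V r) ^ 4) (2 * β * (U r) ^ 2 * (V r) ^ 2)
      have h2 := abs_add_le (α * (U r) ^ 4) (γ * (V r) ^ 4)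
      have e1 : |α * (U r) ^ 4| = |α| * (U r) ^ 4 := by
        rw [abs_mul, abs_of_nonneg (by positivity : (0:ℝ) ≤ (U r) ^ 4)]
      have e2 : |γ * (V r) ^ 4| = |γ| * (V r) ^ 4 := by
        rw [abs_mul, abs_of_nonneg (by positivity : (0:ℝ) ≤ (V r) ^ 4)]
      have e3 : |2 * β * (U r) ^ 2 * (V r) ^ 2| = 2 * |β| * ((U r) ^ 2 * (V r) ^ 2) := by
        rw [abs_mul, abs_mul, abs_mul, abs_of_nonneg (sq_nonneg (U r)),
          abs_of_nonneg (sq_nonneg (V r))]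
        rw [abs_two]
        ring
      rw [e1, e2] at h2
      rw [e3] at h1
      linarith
    calc |α * (U r) ^ 4 + γ * (V r) ^ 4 + 2 * β * (U r) ^ 2 * (V r) ^ 2|
        ≤ |α| * (U r) ^ 4 + |γ| * (V r) ^ 4 + 2 * |β| * ((U r) ^ 2 * (V r) ^ 2) := habs
      _ ≤ |α| * (C ^ 4 * e) + |γ| * (C ^ 4 * e) + 2 * |β| * (C ^ 4 * e) := by
          have m1 := mul_le_mul_of_nonneg_left hu4 (abs_nonneg α)
          have m2 := mul_le_mul_of_nonneg_left hv4 (abs_nonneg γ)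
          have m3 := mul_le_mul_of_nonneg_left huv (by positivity : (0:ℝ) ≤ 2 * |β|)
          linarith
      _ = (|α| + |γ| + 2 * |β|) * C ^ 4 * e := by ring
  -- the derivative is integrable
  have hφint : IntegrableOn (fun r : ℝ => 2 * ((U r) ^ 2 + (V r) ^ 2)
      - 3 / 2 * (α * (U r) ^ 4 + γ * (V r) ^ 4 + 2 * β * (U r) ^ 2 * (V r) ^ 2))
      (Set.Ioi (0:ℝ)) := (hi1.const_mul 2).sub (hi2.const_mul (3/2))
  -- tendsto of g at infinity
  have hgtend : Tendsto (fun x : ℝ => U x * deriv U x + V x * deriv V x) atTop (𝓝 0) := by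
    have h := (hU0.mul hU'0).add (hV0.mul hV'0)
    simpa using h
  -- FTC
  have hFTC := integral_Ioi_of_hasDerivAt_of_tendsto (a := (0:ℝ))
    (hgd 0).continuousAt.continuousWithinAt (fun x _ => hgd x) hφint hgtend
  rw [hU'zero, hV'zero] at hFTC
  simp only [mul_zero, add_zero, sub_zero, zero_sub, neg_zero] at hFTC
  rw [integral_sub (hi1.const_mul 2) (hi2.const_mul (3/2)), integral_const_mul,
    integral_const_mul] at hFTC
  linarith
end

section
/- Let α, β, γ ∈ ℝ and let U, V : ℝ → ℝ be twice continuously differentiable even functions satisfying -U''(r) + U(r) = α·U(r)³ + β·U(r)·V(r)² and -V''(r) + V(r) = γ·V(r)³ + β·U(r)²·V(r) for all r ∈ ℝ, and suppose there exist constants C, η > 0 such that |U(r)| + |U'(r)| + |V(r)| + |V'(r)| ≤ C·e^{-η|r|} for all r ∈ ℝ. Then ∫₀^∞ (U(r)² + V(r)²) dr = 3·∫₀^∞ (|U'(r)|² + |V'(r)|²) dr. -/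
open MeasureTheory Set Filter

/-- integrability from an exponential bound on `Ioi 0` -/
lemma expBound_integrableOn {f : ℝ → ℝ} (hf : Continuous f) {D η : ℝ} (hη : 0 < η)
    (hb : ∀ r ∈ Set.Ioi (0:ℝ), |f r| ≤ D * Real.exp (-η * r)) :
    MeasureTheory.IntegrableOn f (Set.Ioi 0) := by
  refine ((exp_neg_integrableOn_Ioi 0 hη).const_mul D).mono'
    hf.aestronglyMeasurable.restrict ?_
  filter_upwards [MeasureTheory.ae_restrict_mem measurableSet_Ioi] with r hr
  simpa [Real.norm_eq_abs] using hb r hr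

/-- the derivative of a differentiable even function vanishes at 0 -/
lemma deriv_even_zero {U : ℝ → ℝ} (hd : Differentiable ℝ U)
    (he : ∀ r : ℝ, U (-r) = U r) : deriv U 0 = 0 := by
  have h1 : HasDerivAt U (deriv U 0) 0 := (hd 0).hasDerivAt
  have h2 : HasDerivAt (fun r : ℝ => U (-r)) (deriv U 0 * (-1)) 0 := by
    have hneg : HasDerivAt (fun r : ℝ => -r) (-1 : ℝ) 0 := by
      simpa using (hasDerivAt_neg (0:ℝ))
    have h1' : HasDerivAt U (deriv U 0) (-0 : ℝ) := by simpa using h1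
    exact h1'.comp 0 hneg
  have h2' : HasDerivAt U (deriv U 0 * (-1)) 0 := by
    have : (fun r : ℝ => U (-r)) = U := funext he
    rwa [this] at h2
  have := h1.unique h2'
  linarith

/-- exponential decay implies tendsto zero at infinity -/
lemma tendsto_zero_of_expdecay {f : ℝ → ℝ} {C η : ℝ} (hη : 0 < η)
    (h : ∀ r : ℝ, |f r| ≤ C * Real.exp (-η * |r|)) :
    Filter.Tendsto f Filter.atTop (nhds 0) := by
  have hg : Filter.Tendsto (fun r : ℝ => C * Real.exp (-η * r)) Filter.atTop (nhds 0) := by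
    have h1 : Filter.Tendsto (fun r : ℝ => -η * r) Filter.atTop Filter.atBot :=
      (tendsto_const_mul_atBot_of_neg (by linarith)).mpr tendsto_id
    have := (Real.tendsto_exp_atBot.comp h1).const_mul C
    simpa using this
  apply squeeze_zero_norm' ?_ hg
  filter_upwards [Filter.eventually_ge_atTop (0:ℝ)] with r hr
  have := h r
  rw [abs_of_nonneg hr] at this
  simpa [Real.norm_eq_abs] using this

theorem pohozaev_system_2 (α β γ : ℝ) (U V : ℝ → ℝ)
    (hU : ContDiff ℝ 2 U) (hV : ContDiff ℝ 2 V)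
    (hUeven : ∀ r : ℝ, U (-r) = U r) (hVeven : ∀ r : ℝ, V (-r) = V r)
    (hUode : ∀ r : ℝ, -(deriv (deriv U) r) + U r
      = α * (U r) ^ 3 + β * U r * (V r) ^ 2)
    (hVode : ∀ r : ℝ, -(deriv (deriv V) r) + V r
      = γ * (V r) ^ 3 + β * (U r) ^ 2 * V r)
    (hdecay : ∃ C > (0:ℝ), ∃ η > (0:ℝ), ∀ r : ℝ,
      |U r| + |deriv U r| + |V r| + |deriv V r| ≤ C * Real.exp (-η * |r|)) :
    (∫ r in Set.Ioi (0:ℝ), ((U r) ^ 2 + (V r) ^ 2))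
      = 3 * ∫ r in Set.Ioi (0:ℝ), (|deriv U r| ^ 2 + |deriv V r| ^ 2) := by
  obtain ⟨C, hC, η, hη, hW⟩ := hdecay
  -- differentiability facts
  have hU' : Differentiable ℝ U ∧ Differentiable ℝ (deriv U) := by
    rw [show (2 : WithTop ℕ∞) = 1 + 1 by norm_num, contDiff_succ_iff_deriv] at hU
    exact ⟨hU.1, hU.2.2.differentiable one_ne_zero⟩
  have hV' : Differentiable ℝ V ∧ Differentiable ℝ (deriv V) := by
    rw [show (2 : WithTop ℕ∞) = 1 + 1 by norm_num, contDiff_succ_iff_deriv] at hV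
    exact ⟨hV.1, hV.2.2.differentiable one_ne_zero⟩
  obtain ⟨hUd, hUd2⟩ := hU'
  obtain ⟨hVd, hVd2⟩ := hV'
  -- the second derivatives from the ODEs
  have hU2 : ∀ r : ℝ, deriv (deriv U) r
      = U r - (α * U r ^ 3 + β * U r * V r ^ 2) := fun r => by linarith [hUode r]
  have hV2 : ∀ r : ℝ, deriv (deriv V) r
      = V r - (γ * V r ^ 3 + β * U r ^ 2 * V r) := fun r => by linarith [hVode r]
  -- individual decay bounds
  have hbU : ∀ r : ℝ, |U r| ≤ C * Real.exp (-η * |r|) := fun r => by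
    have := hW r
    have n1 := abs_nonneg (deriv U r); have n2 := abs_nonneg (V r)
    have n3 := abs_nonneg (deriv V r); linarith
  have hbp : ∀ r : ℝ, |deriv U r| ≤ C * Real.exp (-η * |r|) := fun r => by
    have := hW r
    have n1 := abs_nonneg (U r); have n2 := abs_nonneg (V r)
    have n3 := abs_nonneg (deriv V r); linarith
  have hbV : ∀ r : ℝ, |V r| ≤ C * Real.exp (-η * |r|) := fun r => by
    have := hW r
    have n1 := abs_nonneg (U r); have n2 := abs_nonneg (deriv U r)
    have n3 := abs_nonneg (deriv V r); linarith
  have hbq : ∀ r : ℝ, |deriv V r| ≤ C * Real.exp (-η * |r|) := fun r => by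
    have := hW r
    have n1 := abs_nonneg (U r); have n2 := abs_nonneg (deriv U r)
    have n3 := abs_nonneg (V r); linarith
  -- the conserved energy
  set E : ℝ → ℝ := fun r =>
    ((deriv U r) ^ 2 + (deriv V r) ^ 2) / 2 - (U r ^ 2 + V r ^ 2) / 2 +
      (α / 4 * U r ^ 4 + β / 2 * (U r ^ 2 * V r ^ 2) + γ / 4 * V r ^ 4) with hEdef
  have hE' : ∀ r : ℝ, HasDerivAt E 0 r := by
    intro r
    have h1 : HasDerivAt U (deriv U r) r := (hUd r).hasDerivAt
    have h1V : HasDerivAt V (deriv V r) r := (hVd r).hasDerivAt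
    have h2 : HasDerivAt (deriv U) (deriv (deriv U) r) r := (hUd2 r).hasDerivAt
    have h2V : HasDerivAt (deriv V) (deriv (deriv V) r) r := (hVd2 r).hasDerivAt
    have H := ((((h2.pow 2).add (h2V.pow 2)).div_const 2).sub
        (((h1.pow 2).add (h1V.pow 2)).div_const 2)).add
        ((((h1.pow 4).const_mul (α/4)).add
          (((h1.pow 2).mul (h1V.pow 2)).const_mul (β/2))).add
          ((h1V.pow 4).const_mul (γ/4)))
    exact H.congr_deriv (by rw [hU2 r, hV2 r]; simp only [Pi.pow_apply]; push_cast; ring)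
  have hEconst : ∀ r : ℝ, E r = E 0 :=
    fun r => is_const_of_deriv_eq_zero (fun x => (hE' x).differentiableAt)
      (fun x => (hE' x).deriv) r 0
  -- limits at infinity
  have tU : Tendsto U atTop (nhds 0) := tendsto_zero_of_expdecay hη hbU
  have tp : Tendsto (deriv U) atTop (nhds 0) := tendsto_zero_of_expdecay hη hbp
  have tV : Tendsto V atTop (nhds 0) := tendsto_zero_of_expdecay hη hbV
  have tq : Tendsto (deriv V) atTop (nhds 0) := tendsto_zero_of_expdecay hη hbq
  have tE : Tendsto E atTop (nhds 0) := by
    have H := (((((tp.pow 2).add (tq.pow 2)).div_const 2).sub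
        (((tU.pow 2).add (tV.pow 2)).div_const 2)).add
        ((((tU.pow 4).const_mul (α/4)).add
          (((tU.pow 2).mul (tV.pow 2)).const_mul (β/2))).add
          ((tV.pow 4).const_mul (γ/4))))
    rw [hEdef]
    convert H using 2
    norm_num
  have hE0 : E 0 = 0 := by
    have hconst : Tendsto E atTop (nhds (E 0)) :=
      Tendsto.congr (fun r => (hEconst r).symm) tendsto_const_nhds
    exact tendsto_nhds_unique hconst tE
  have hEzero : ∀ r : ℝ, ((deriv U r) ^ 2 + (deriv V r) ^ 2) / 2
      - (U r ^ 2 + V r ^ 2) / 2 +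
      (α / 4 * U r ^ 4 + β / 2 * (U r ^ 2 * V r ^ 2) + γ / 4 * V r ^ 4) = 0 :=
    fun r => (hEconst r).trans hE0
  -- the Pohozaev multiplier
  set F : ℝ → ℝ := fun r => deriv U r * U r + deriv V r * V r with hFdef
  have hF' : ∀ r : ℝ, HasDerivAt F
      (3 * ((deriv U r) ^ 2 + (deriv V r) ^ 2) - (U r ^ 2 + V r ^ 2)) r := by
    intro r
    have h1 : HasDerivAt U (deriv U r) r := (hUd r).hasDerivAt
    have h1V : HasDerivAt V (deriv V r) r := (hVd r).hasDerivAt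
    have h2 : HasDerivAt (deriv U) (deriv (deriv U) r) r := (hUd2 r).hasDerivAt
    have h2V : HasDerivAt (deriv V) (deriv (deriv V) r) r := (hVd2 r).hasDerivAt
    have H := (h2.mul h1).add (h2V.mul h1V)
    refine H.congr_deriv ?_
    rw [hU2 r, hV2 r]
    linear_combination (-4) * hEzero r
  -- F tends to 0 and F 0 = 0
  have tF : Tendsto F atTop (nhds 0) := by
    have := (tp.mul tU).add (tq.mul tV)
    rw [hFdef]; simpa using this
  have hF0 : F 0 = 0 := by
    rw [hFdef]
    simp [deriv_even_zero hUd hUeven, deriv_even_zero hVd hVeven]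
  -- continuity
  have cU : Continuous U := hUd.continuous
  have cV : Continuous V := hVd.continuous
  have cp : Continuous (deriv U) := hUd2.continuous
  have cq : Continuous (deriv V) := hVd2.continuous
  -- integrability
  have keybound : ∀ f : ℝ → ℝ, (∀ r : ℝ, |f r| ≤ C * Real.exp (-η * |r|)) →
      ∀ r ∈ Set.Ioi (0:ℝ), f r ^ 2 ≤ C * C * Real.exp (-η * r) := by
    intro f hf r hr
    have hr' : (0:ℝ) < r := hr
    have h1 : |f r| ≤ C * Real.exp (-η * r) := by
      have := hf r; rwa [abs_of_pos hr'] at this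
    have h2 : Real.exp (-η * r) ≤ 1 :=
      Real.exp_le_one_iff.mpr (by nlinarith)
    have h3 : |f r| ≤ C := by nlinarith [Real.exp_pos (-η * r)]
    calc f r ^ 2 = |f r| * |f r| := by rw [abs_mul_abs_self]; ring
    _ ≤ C * (C * Real.exp (-η * r)) := by
        apply mul_le_mul h3 h1 (abs_nonneg _) hC.le
    _ = C * C * Real.exp (-η * r) := by ring
  have hint1 : IntegrableOn (fun r => U r ^ 2 + V r ^ 2) (Set.Ioi (0:ℝ)) := by
    apply expBound_integrableOn ((cU.pow 2).add (cV.pow 2)) hη (D := 2 * (C * C))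
    intro r hr
    have b1 := keybound U hbU r hr
    have b2 := keybound V hbV r hr
    have n1 := sq_nonneg (U r); have n2 := sq_nonneg (V r)
    simp only [Pi.add_apply, Pi.pow_apply]
    rw [abs_of_nonneg (by positivity)]
    linarith
  have hint2 : IntegrableOn (fun r => (deriv U r) ^ 2 + (deriv V r) ^ 2)
      (Set.Ioi (0:ℝ)) := by
    apply expBound_integrableOn ((cp.pow 2).add (cq.pow 2)) hη (D := 2 * (C * C))
    intro r hr
    have b1 := keybound (deriv U) hbp r hr
    have b2 := keybound (deriv V) hbq r hr
    have n1 := sq_nonneg (deriv U r); have n2 := sq_nonneg (deriv V r)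
    simp only [Pi.add_apply, Pi.pow_apply]
    rw [abs_of_nonneg (by positivity)]
    linarith
  have hint3 : IntegrableOn
      (fun r => 3 * ((deriv U r) ^ 2 + (deriv V r) ^ 2) - (U r ^ 2 + V r ^ 2))
      (Set.Ioi (0:ℝ)) := (hint2.const_mul 3).sub hint1
  -- main identity
  have key : (∫ r in Set.Ioi (0:ℝ),
      (3 * ((deriv U r) ^ 2 + (deriv V r) ^ 2) - (U r ^ 2 + V r ^ 2))) = 0 := by
    have cF : Continuous F := (cp.mul cU).add (cq.mul cV)
    have := integral_Ioi_of_hasDerivAt_of_tendsto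
      (f := F)
      (f' := fun r => 3 * ((deriv U r) ^ 2 + (deriv V r) ^ 2) - (U r ^ 2 + V r ^ 2))
      (a := 0) (cF.continuousWithinAt) (fun x _ => hF' x) hint3 tF
    rw [this, hF0, sub_zero]
  have split : (∫ r in Set.Ioi (0:ℝ),
      (3 * ((deriv U r) ^ 2 + (deriv V r) ^ 2) - (U r ^ 2 + V r ^ 2)))
      = 3 * (∫ r in Set.Ioi (0:ℝ), ((deriv U r) ^ 2 + (deriv V r) ^ 2))
        - ∫ r in Set.Ioi (0:ℝ), (U r ^ 2 + V r ^ 2) := by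
    rw [integral_sub (hint2.const_mul 3) hint1, MeasureTheory.integral_const_mul]
  have habs : (∫ r in Set.Ioi (0:ℝ), (|deriv U r| ^ 2 + |deriv V r| ^ 2))
      = ∫ r in Set.Ioi (0:ℝ), ((deriv U r) ^ 2 + (deriv V r) ^ 2) := by
    congr 1; funext r; rw [sq_abs, sq_abs]
  rw [habs]
  linarith [key, split]
end

section
/- Let α, β, γ ∈ ℝ and let U, V : ℝ → ℝ be twice continuously differentiable even functions satisfying -U''(r) + U(r) = α·U(r)³ + β·U(r)·V(r)² and -V''(r) + V(r) = γ·V(r)³ + β·U(r)²·V(r) for all r ∈ ℝ, and suppose there exist constants C, η > 0 such that |U(r)| + |U'(r)| + |V(r)| + |V'(r)| ≤ C·e^{-η|r|} for all r ∈ ℝ. Then -∫₀^∞ (|U'(r)|² + |V'(r)|²) dr + ∫₀^∞ (U(r)² + V(r)²) dr = (1/2)·∫₀^∞ (α·U(r)⁴ + γ·V(r)⁴) dr + β·∫₀^∞ U(r)²·V(r)² dr. -/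
open MeasureTheory Filter

theorem system_pohozaev_half (α β γ : ℝ) (U V : ℝ → ℝ)
    (hU : ContDiff ℝ 2 U) (hV : ContDiff ℝ 2 V)
    (hUeven : ∀ r : ℝ, U (-r) = U r) (hVeven : ∀ r : ℝ, V (-r) = V r)
    (hUode : ∀ r : ℝ, -(deriv (deriv U) r) + U r
      = α * (U r) ^ 3 + β * U r * (V r) ^ 2)
    (hVode : ∀ r : ℝ, -(deriv (deriv V) r) + V r
      = γ * (V r) ^ 3 + β * (U r) ^ 2 * V r)
    (hdecay : ∃ C > (0:ℝ), ∃ η > (0:ℝ), ∀ r : ℝ,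
      |U r| + |deriv U r| + |V r| + |deriv V r| ≤ C * Real.exp (-η * |r|)) :
    -(∫ r in Set.Ioi (0:ℝ), (|deriv U r| ^ 2 + |deriv V r| ^ 2))
        + (∫ r in Set.Ioi (0:ℝ), ((U r) ^ 2 + (V r) ^ 2))
      = (1 / 2) * (∫ r in Set.Ioi (0:ℝ), (α * (U r) ^ 4 + γ * (V r) ^ 4))
        + β * ∫ r in Set.Ioi (0:ℝ), (U r) ^ 2 * (V r) ^ 2 := by
  obtain ⟨C, hC, η, hη, hdec⟩ := hdecay
  -- differentiability
  have hUd : Differentiable ℝ U := hU.differentiable two_ne_zero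
  have hVd : Differentiable ℝ V := hV.differentiable two_ne_zero
  have hU1 : ContDiff ℝ 1 (deriv U) := by
    have h2 : ContDiff ℝ ((1:ℕ)+1) U := by exact_mod_cast hU
    rw [contDiff_succ_iff_deriv] at h2
    exact_mod_cast h2.2.2
  have hV1 : ContDiff ℝ 1 (deriv V) := by
    have h2 : ContDiff ℝ ((1:ℕ)+1) V := by exact_mod_cast hV
    rw [contDiff_succ_iff_deriv] at h2
    exact_mod_cast h2.2.2
  have hU'd : Differentiable ℝ (deriv U) := hU1.differentiable one_ne_zero
  have hV'd : Differentiable ℝ (deriv V) := hV1.differentiable one_ne_zero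
  -- the Hamiltonian
  set F : ℝ → ℝ := fun r =>
    (-((deriv U r)^2 + (deriv V r)^2))/2 + ((U r)^2 + (V r)^2)/2
      - (α * (U r)^4)/4 - (γ * (V r)^4)/4 - (β * ((U r)^2 * (V r)^2))/2 with hF
  have key : ∀ r : ℝ, HasDerivAt F 0 r := by
    intro r
    have hu := (hUd r).hasDerivAt
    have hv := (hVd r).hasDerivAt
    have hu' := (hU'd r).hasDerivAt
    have hv' := (hV'd r).hasDerivAt
    have H := ((((((hu'.fun_pow 2).add (hv'.fun_pow 2)).neg.div_const 2).add
        (((hu.fun_pow 2).add (hv.fun_pow 2)).div_const 2)).sub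
        (((hu.fun_pow 4).const_mul α).div_const 4)).sub
        (((hv.fun_pow 4).const_mul γ).div_const 4)).sub
        ((((hu.fun_pow 2).mul (hv.fun_pow 2)).const_mul β).div_const 2)
    rw [hF]
    refine H.congr_deriv ?_
    symm
    have e1 := hUode r
    have e2 := hVode r
    push_cast
    linear_combination (- deriv U r) * e1 + (- deriv V r) * e2
  have hFconst : ∀ x y : ℝ, F x = F y :=
    is_const_of_deriv_eq_zero (fun x => (key x).differentiableAt) (fun x => (key x).deriv)
  -- limits at infinity
  have hexp : Tendsto (fun r : ℝ => C * Real.exp (-η * r)) atTop (nhds 0) := by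
    have h := (Real.tendsto_exp_comp_nhds_zero.mpr
      (tendsto_id.const_mul_atTop_of_neg (neg_lt_zero.mpr hη))).const_mul C
    simpa using h
  have hten : ∀ g : ℝ → ℝ, (∀ r, |g r| ≤ C * Real.exp (-η * |r|)) →
      Tendsto g atTop (nhds 0) := by
    intro g hg
    apply squeeze_zero_norm' ?_ hexp
    filter_upwards [eventually_ge_atTop (0:ℝ)] with r hr
    simpa [Real.norm_eq_abs, abs_of_nonneg hr] using hg r
  have hUt : Tendsto U atTop (nhds 0) := hten U fun r => by
    have h := hdec r
    have := abs_nonneg (deriv U r); have := abs_nonneg (V r); have := abs_nonneg (deriv V r)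
    linarith
  have hU't : Tendsto (deriv U) atTop (nhds 0) := hten (deriv U) fun r => by
    have h := hdec r
    have := abs_nonneg (U r); have := abs_nonneg (V r); have := abs_nonneg (deriv V r)
    linarith
  have hVt : Tendsto V atTop (nhds 0) := hten V fun r => by
    have h := hdec r
    have := abs_nonneg (U r); have := abs_nonneg (deriv U r); have := abs_nonneg (deriv V r)
    linarith
  have hV't : Tendsto (deriv V) atTop (nhds 0) := hten (deriv V) fun r => by
    have h := hdec r
    have := abs_nonneg (U r); have := abs_nonneg (deriv U r); have := abs_nonneg (V r)
    linarith
  have hFlim : Tendsto F atTop (nhds 0) := by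
    rw [hF]
    have h := ((((((hU't.pow 2).add (hV't.pow 2)).neg.div_const 2).add
        (((hUt.pow 2).add (hVt.pow 2)).div_const 2)).sub
        (((hUt.pow 4).const_mul α).div_const 4)).sub
        (((hVt.pow 4).const_mul γ).div_const 4)).sub
        ((((hUt.pow 2).mul (hVt.pow 2)).const_mul β).div_const 2)
    convert h using 2
    norm_num
  have hF0 : ∀ x : ℝ, F x = 0 := by
    intro x
    have hc : Tendsto F atTop (nhds (F x)) := by
      have : F = fun _ => F x := funext fun y => hFconst y x
      rw [this]; exact tendsto_const_nhds
    exact tendsto_nhds_unique hc hFlim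
  have key2 : ∀ r : ℝ, ((U r)^2 + (V r)^2) - ((deriv U r)^2 + (deriv V r)^2)
      = (1/2) * (α * (U r)^4 + γ * (V r)^4) + β * ((U r)^2 * (V r)^2) := by
    intro r
    have h := hF0 r
    simp only [hF] at h
    linear_combination 2 * h
  -- integrability
  have hint : ∀ (g : ℝ → ℝ) (D : ℝ), Continuous g →
      (∀ r ∈ Set.Ioi (0:ℝ), |g r| ≤ D * Real.exp (-η * r)) →
      IntegrableOn g (Set.Ioi (0:ℝ)) := by
    intro g D hg hb
    apply Integrable.mono' ((exp_neg_integrableOn_Ioi 0 hη).const_mul D)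
      hg.aestronglyMeasurable
    filter_upwards [ae_restrict_mem measurableSet_Ioi] with r hr
    simpa [Real.norm_eq_abs] using hb r hr
  have hpow2 : ∀ (x E : ℝ), 0 < E → E ≤ 1 → |x| ≤ C * E → x^2 ≤ C^2 * E := by
    intro x E hE0 hE1 hx
    nlinarith [sq_abs x, abs_nonneg x, mul_self_le_mul_self (abs_nonneg x) hx, sq_nonneg C]
  have hpow4 : ∀ (x E : ℝ), 0 < E → E ≤ 1 → |x| ≤ C * E → x^4 ≤ C^4 * E := by
    intro x E hE0 hE1 hx
    have h2 := hpow2 x E hE0 hE1 hx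
    nlinarith [sq_nonneg x, mul_self_le_mul_self (sq_nonneg x) h2, sq_nonneg C, pow_pos hC 4]
  have hbU : ∀ r ∈ Set.Ioi (0:ℝ), |U r| ≤ C * Real.exp (-η * r) := by
    intro r hr
    have h := hdec r
    rw [abs_of_pos (show (0:ℝ) < r from hr)] at h
    have := abs_nonneg (deriv U r); have := abs_nonneg (V r); have := abs_nonneg (deriv V r)
    linarith
  have hbU' : ∀ r ∈ Set.Ioi (0:ℝ), |deriv U r| ≤ C * Real.exp (-η * r) := by
    intro r hr
    have h := hdec r
    rw [abs_of_pos (show (0:ℝ) < r from hr)] at h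
    have := abs_nonneg (U r); have := abs_nonneg (V r); have := abs_nonneg (deriv V r)
    linarith
  have hbV : ∀ r ∈ Set.Ioi (0:ℝ), |V r| ≤ C * Real.exp (-η * r) := by
    intro r hr
    have h := hdec r
    rw [abs_of_pos (show (0:ℝ) < r from hr)] at h
    have := abs_nonneg (U r); have := abs_nonneg (deriv U r); have := abs_nonneg (deriv V r)
    linarith
  have hbV' : ∀ r ∈ Set.Ioi (0:ℝ), |deriv V r| ≤ C * Real.exp (-η * r) := by
    intro r hr
    have h := hdec r
    rw [abs_of_pos (show (0:ℝ) < r from hr)] at h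
    have := abs_nonneg (U r); have := abs_nonneg (deriv U r); have := abs_nonneg (V r)
    linarith
  have hEfacts : ∀ r ∈ Set.Ioi (0:ℝ),
      0 < Real.exp (-η * r) ∧ Real.exp (-η * r) ≤ 1 := by
    intro r hr
    refine ⟨Real.exp_pos _, Real.exp_le_one_iff.mpr ?_⟩
    have : (0:ℝ) < r := hr
    nlinarith
  have hi1 : IntegrableOn (fun r => (deriv U r)^2 + (deriv V r)^2) (Set.Ioi (0:ℝ)) := by
    apply hint (fun r => (deriv U r)^2 + (deriv V r)^2) (2*C^2) ((hU1.continuous.pow 2).add (hV1.continuous.pow 2))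
    intro r hr
    obtain ⟨hE0, hE1⟩ := hEfacts r hr
    have h1 := hpow2 _ _ hE0 hE1 (hbU' r hr)
    have h2 := hpow2 _ _ hE0 hE1 (hbV' r hr)
    rw [abs_of_nonneg (by positivity)]
    nlinarith
  have hi2 : IntegrableOn (fun r => (U r)^2 + (V r)^2) (Set.Ioi (0:ℝ)) := by
    apply hint (fun r => (U r)^2 + (V r)^2) (2*C^2) ((hU.continuous.pow 2).add (hV.continuous.pow 2))
    intro r hr
    obtain ⟨hE0, hE1⟩ := hEfacts r hr
    have h1 := hpow2 _ _ hE0 hE1 (hbU r hr)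
    have h2 := hpow2 _ _ hE0 hE1 (hbV r hr)
    rw [abs_of_nonneg (by positivity)]
    nlinarith
  have hi3 : IntegrableOn (fun r => α * (U r)^4 + γ * (V r)^4) (Set.Ioi (0:ℝ)) := by
    apply hint _ ((|α| + |γ|) * C^4)
      ((continuous_const.mul (hU.continuous.pow 4)).add
        (continuous_const.mul (hV.continuous.pow 4)))
    intro r hr
    obtain ⟨hE0, hE1⟩ := hEfacts r hr
    have h1 := hpow4 _ _ hE0 hE1 (hbU r hr)
    have h2 := hpow4 _ _ hE0 hE1 (hbV r hr)
    calc |α * (U r)^4 + γ * (V r)^4| ≤ |α * (U r)^4| + |γ * (V r)^4| := abs_add_le _ _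
      _ = |α| * (U r)^4 + |γ| * (V r)^4 := by
          rw [abs_mul, abs_mul, abs_pow, abs_pow,
            Even.pow_abs (by decide : Even 4) (U r),
            Even.pow_abs (by decide : Even 4) (V r)]
      _ ≤ |α| * (C^4 * Real.exp (-η * r)) + |γ| * (C^4 * Real.exp (-η * r)) := by
          exact add_le_add (mul_le_mul_of_nonneg_left h1 (abs_nonneg α))
            (mul_le_mul_of_nonneg_left h2 (abs_nonneg γ))
      _ = (|α| + |γ|) * C^4 * Real.exp (-η * r) := by ring
  have hi4 : IntegrableOn (fun r => (U r)^2 * (V r)^2) (Set.Ioi (0:ℝ)) := by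
    apply hint (fun r => (U r)^2 * (V r)^2) (C^4) ((hU.continuous.pow 2).mul (hV.continuous.pow 2))
    intro r hr
    obtain ⟨hE0, hE1⟩ := hEfacts r hr
    have h1 := hpow2 _ _ hE0 hE1 (hbU r hr)
    have h2 := hpow2 _ _ hE0 hE1 (hbV r hr)
    rw [abs_of_nonneg (by positivity)]
    nlinarith [mul_le_mul h1 h2 (sq_nonneg (V r))
        (by positivity : (0:ℝ) ≤ C^2 * Real.exp (-η * r)),
      mul_le_mul_of_nonneg_left hE1
        (by positivity : (0:ℝ) ≤ C^4 * Real.exp (-η * r))]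
  -- conclusion
  simp only [sq_abs]
  have e3 : (∫ r in Set.Ioi (0:ℝ), ((U r)^2 + (V r)^2))
      - (∫ r in Set.Ioi (0:ℝ), ((deriv U r)^2 + (deriv V r)^2))
      = ∫ r in Set.Ioi (0:ℝ),
        ((1/2) * (α * (U r)^4 + γ * (V r)^4) + β * ((U r)^2 * (V r)^2)) := by
    rw [← integral_sub hi2 hi1]
    exact integral_congr_ae (Eventually.of_forall fun r => key2 r)
  have e4 : (∫ r in Set.Ioi (0:ℝ),
        ((1/2) * (α * (U r)^4 + γ * (V r)^4) + β * ((U r)^2 * (V r)^2)))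
      = (1/2) * (∫ r in Set.Ioi (0:ℝ), (α * (U r)^4 + γ * (V r)^4))
        + β * ∫ r in Set.Ioi (0:ℝ), ((U r)^2 * (V r)^2) := by
    rw [integral_add (hi3.const_mul _) (hi4.const_mul _), integral_const_mul,
      integral_const_mul]
  linarith [e3, e4]
end

section
/- Let α, β, γ ∈ ℝ and let U, V : ℝ → ℝ be twice continuously differentiable even functions satisfying -U''(r) + U(r) = α·U(r)³ + β·U(r)·V(r)² and -V''(r) + V(r) = γ·V(r)³ + β·U(r)²·V(r) for all r ∈ ℝ, and suppose there exist constants C, η > 0 such that |U(r)| + |U'(r)| + |V(r)| + |V'(r)| ≤ C·e^{-η|r|} for all r ∈ ℝ. Then -∫₀^∞ |U'(r)|² dr + ∫₀^∞ U(r)² dr = (1/2)·α·∫₀^∞ U(r)⁴ dr - 2β·∫₀^∞ r·U(r)·U'(r)·V(r)² dr. -/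
open MeasureTheory Set Filter Real

lemma integrable_of_exp_bound {f : ℝ → ℝ} (hf : Continuous f) {M b : ℝ} (hb : 0 < b)
    (h : ∀ r ∈ Set.Ioi (0:ℝ), |f r| ≤ M * Real.exp (-b * r)) :
    IntegrableOn f (Set.Ioi 0) := by
  apply Integrable.mono' ((exp_neg_integrableOn_Ioi 0 hb).const_mul M)
    hf.aestronglyMeasurable.restrict
  filter_upwards [ae_restrict_mem measurableSet_Ioi] with r hr
  simpa using h r hr

theorem system_U_pohozaev (α β γ : ℝ) (U V : ℝ → ℝ)
    (hU : ContDiff ℝ 2 U) (hV : ContDiff ℝ 2 V)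
    (hUeven : ∀ r : ℝ, U (-r) = U r) (hVeven : ∀ r : ℝ, V (-r) = V r)
    (hUode : ∀ r : ℝ, -(deriv (deriv U) r) + U r
      = α * (U r) ^ 3 + β * U r * (V r) ^ 2)
    (hVode : ∀ r : ℝ, -(deriv (deriv V) r) + V r
      = γ * (V r) ^ 3 + β * (U r) ^ 2 * V r)
    (hdecay : ∃ C > (0:ℝ), ∃ η > (0:ℝ), ∀ r : ℝ,
      |U r| + |deriv U r| + |V r| + |deriv V r| ≤ C * Real.exp (-η * |r|)) :
    -(∫ r in Set.Ioi (0:ℝ), |deriv U r| ^ 2)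
        + (∫ r in Set.Ioi (0:ℝ), (U r) ^ 2)
      = (1 / 2) * α * (∫ r in Set.Ioi (0:ℝ), (U r) ^ 4)
        - 2 * β * ∫ r in Set.Ioi (0:ℝ), r * U r * deriv U r * (V r) ^ 2 := by
  obtain ⟨C, hC, η, hη, hdec⟩ := hdecay
  -- regularity
  have hUdiff : Differentiable ℝ U := hU.differentiable (by norm_num)
  have hU1 : ContDiff ℝ 1 (deriv U) := by
    have h2 : ContDiff ℝ (1+1) U := by exact_mod_cast hU
    exact (contDiff_succ_iff_deriv.mp h2).2.2
  have hU'diff : Differentiable ℝ (deriv U) := hU1.differentiable (by norm_num)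
  have hUc : Continuous U := hUdiff.continuous
  have hU'c : Continuous (deriv U) := hU'diff.continuous
  have hVc : Continuous V := (hV.differentiable (by norm_num)).continuous
  -- pointwise bounds on Ioi 0
  have hb : ∀ r ∈ Set.Ioi (0:ℝ), |U r| ≤ C * Real.exp (-η * r)
      ∧ |deriv U r| ≤ C * Real.exp (-η * r) ∧ |V r| ≤ C * Real.exp (-η * r) := by
    intro r hr
    have h := hdec r
    rw [abs_of_pos (show (0:ℝ) < r from hr)] at h
    have h1 := abs_nonneg (U r); have h2 := abs_nonneg (deriv U r)
    have h3 := abs_nonneg (V r); have h4 := abs_nonneg (deriv V r)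
    exact ⟨by linarith, by linarith, by linarith⟩
  -- integrability of the pieces
  have hE2 : ∀ r : ℝ, Real.exp (-(2*η) * r) = (Real.exp (-η * r))^2 := by
    intro r; rw [← Real.exp_nat_mul]; norm_num; ring_nf
  have hE4 : ∀ r : ℝ, Real.exp (-(4*η) * r) = (Real.exp (-η * r))^4 := by
    intro r; rw [← Real.exp_nat_mul]; norm_num; ring_nf
  have hint1 : IntegrableOn (fun r => (deriv U r)^2) (Set.Ioi (0:ℝ)) := by
    apply integrable_of_exp_bound (by continuity) (by positivity : (0:ℝ) < 2*η)
    intro r hr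
    obtain ⟨_, h2, _⟩ := hb r hr
    rw [hE2, abs_of_nonneg (sq_nonneg _)]
    calc (deriv U r)^2 = |deriv U r|^2 := (sq_abs _).symm
      _ ≤ (C * Real.exp (-η*r))^2 := by
          apply pow_le_pow_left₀ (abs_nonneg _) h2
      _ = C^2 * (Real.exp (-η*r))^2 := by ring
  have hint1' : IntegrableOn (fun r => |deriv U r|^2) (Set.Ioi (0:ℝ)) := by
    apply hint1.congr_fun _ measurableSet_Ioi
    intro r _; exact (sq_abs _).symm
  have hint2 : IntegrableOn (fun r => (U r)^2) (Set.Ioi (0:ℝ)) := by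
    apply integrable_of_exp_bound (by continuity) (by positivity : (0:ℝ) < 2*η)
    intro r hr
    obtain ⟨h1, _, _⟩ := hb r hr
    rw [hE2, abs_of_nonneg (sq_nonneg _)]
    calc (U r)^2 = |U r|^2 := (sq_abs _).symm
      _ ≤ (C * Real.exp (-η*r))^2 := pow_le_pow_left₀ (abs_nonneg _) h1 2
      _ = C^2 * (Real.exp (-η*r))^2 := by ring
  have hint3 : IntegrableOn (fun r => (U r)^4) (Set.Ioi (0:ℝ)) := by
    apply integrable_of_exp_bound (by continuity) (by positivity : (0:ℝ) < 4*η)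
    intro r hr
    obtain ⟨h1, _, _⟩ := hb r hr
    rw [hE4, abs_of_nonneg (by positivity)]
    calc (U r)^4 = |U r|^4 := by rw [← abs_pow, abs_of_nonneg (by positivity)]
      _ ≤ (C * Real.exp (-η*r))^4 := pow_le_pow_left₀ (abs_nonneg _) h1 4
      _ = C^4 * (Real.exp (-η*r))^4 := by ring
  have hint4 : IntegrableOn (fun r => r * U r * deriv U r * (V r)^2) (Set.Ioi (0:ℝ)) := by
    apply integrable_of_exp_bound (by continuity) (by positivity : (0:ℝ) < 3*η)
    intro r hr
    obtain ⟨h1, h2, h3⟩ := hb r hr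
    have hrpos : (0:ℝ) < r := hr
    have hEpos : (0:ℝ) < Real.exp (-η*r) := Real.exp_pos _
    have hrle : r ≤ Real.exp (η * r) / η := by
      rw [le_div_iff₀ hη]
      nlinarith [Real.add_one_le_exp (η * r), mul_pos hη hrpos]
    have key : Real.exp (η*r) * (Real.exp (-η*r))^4 = Real.exp (-(3*η)*r) := by
      rw [← Real.exp_nat_mul, ← Real.exp_add]; norm_num; ring_nf
    calc |r * U r * deriv U r * (V r)^2|
        = r * (|U r| * |deriv U r| * |V r|^2) := by
          rw [abs_mul, abs_mul, abs_mul, abs_of_pos hrpos, abs_pow]; ring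
      _ ≤ (Real.exp (η*r)/η) * ((C*Real.exp (-η*r)) * (C*Real.exp (-η*r)) * (C*Real.exp (-η*r))^2) := by
          apply mul_le_mul hrle _ (by positivity) (by positivity)
          apply mul_le_mul (mul_le_mul h1 h2 (abs_nonneg _) (by positivity))
            (pow_le_pow_left₀ (abs_nonneg _) h3 2) (by positivity) (by positivity)
      _ = (C^4/η) * (Real.exp (η*r) * (Real.exp (-η*r))^4) := by ring
      _ = (C^4/η) * Real.exp (-(3*η)*r) := by rw [key]
  -- the Pohozaev function
  set f : ℝ → ℝ := fun r => (U r)^2 - (deriv U r)^2 - α/2*(U r)^4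
    + 2*β*(r * U r * deriv U r * (V r)^2) with hf
  set H : ℝ → ℝ := fun r => r * ((U r)^2 - (deriv U r)^2 - α/2*(U r)^4) with hH
  have hderiv : ∀ r : ℝ, HasDerivAt H (f r) r := by
    intro r
    have hu : HasDerivAt U (deriv U r) r := (hUdiff r).hasDerivAt
    have hu' : HasDerivAt (deriv U) (deriv (deriv U) r) r := (hU'diff r).hasDerivAt
    have hg : HasDerivAt (fun r => (U r)^2 - (deriv U r)^2 - α/2*(U r)^4)
        (2 * U r ^ 1 * deriv U r - 2 * deriv U r ^ 1 * deriv (deriv U) r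
          - α/2 * (4 * U r ^ 3 * deriv U r)) r :=
      (((hu.pow 2).sub (hu'.pow 2)).sub ((hu.pow 4).const_mul (α/2)))
    have hHd : HasDerivAt H _ r :=
      (hasDerivAt_id r).mul hg
    have hode := hUode r
    convert hHd using 1
    simp only [hf, id]
    linear_combination (-2*r*(deriv U r)) * hode
  have hH0 : Tendsto H atTop (nhds 0) := by
    have hkey : Tendsto (fun r : ℝ => r * Real.exp (-(2*η) * r)) atTop (nhds 0) := by
      have h1 : Tendsto (fun r : ℝ => (2*η)*r) atTop atTop :=
        tendsto_id.const_mul_atTop (by positivity)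
      have h2 := (Real.tendsto_pow_mul_exp_neg_atTop_nhds_zero 1).comp h1
      have h3 := h2.const_mul (1/(2*η))
      rw [mul_zero] at h3
      apply h3.congr
      intro r
      have : (0:ℝ) < 2*η := by positivity
      simp only [Function.comp_apply]
      field_simp [Function.comp]
    have hbound : ∀ᶠ r in atTop, ‖H r‖ ≤ (2*C^2 + |α|/2*C^4) * (r * Real.exp (-(2*η)*r)) := by
      filter_upwards [eventually_gt_atTop (0:ℝ), eventually_ge_atTop (1:ℝ)] with r hr _
      obtain ⟨h1, h2, _⟩ := hb r hr
      have hE4le : (Real.exp (-η*r))^4 ≤ (Real.exp (-η*r))^2 := by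
        apply pow_le_pow_of_le_one (Real.exp_pos _).le _ (by norm_num)
        rw [Real.exp_le_one_iff, neg_mul]
        linarith [mul_pos hη hr]
      have hu2 : (U r)^2 ≤ C^2 * (Real.exp (-η*r))^2 := by
        calc (U r)^2 = |U r|^2 := (sq_abs _).symm
          _ ≤ (C * Real.exp (-η*r))^2 := pow_le_pow_left₀ (abs_nonneg _) h1 2
          _ = _ := by ring
      have hu'2 : (deriv U r)^2 ≤ C^2 * (Real.exp (-η*r))^2 := by
        calc (deriv U r)^2 = |deriv U r|^2 := (sq_abs _).symm
          _ ≤ (C * Real.exp (-η*r))^2 := pow_le_pow_left₀ (abs_nonneg _) h2 2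
          _ = _ := by ring
      have hu4 : (U r)^4 ≤ C^4 * (Real.exp (-η*r))^4 := by
        calc (U r)^4 = |U r|^4 := by rw [← abs_pow, abs_of_nonneg (by positivity)]
          _ ≤ (C * Real.exp (-η*r))^4 := pow_le_pow_left₀ (abs_nonneg _) h1 4
          _ = _ := by ring
      have hu4' : (U r)^4 ≤ C^4 * (Real.exp (-η*r))^2 := by
        calc (U r)^4 ≤ C^4 * (Real.exp (-η*r))^4 := hu4
          _ ≤ C^4 * (Real.exp (-η*r))^2 := mul_le_mul_of_nonneg_left hE4le (by positivity)
      have h4n : (0:ℝ) ≤ (U r)^4 := by positivity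
      have ht1 := mul_le_mul_of_nonneg_left hu4' (abs_nonneg α)
      have ht2 := mul_le_mul_of_nonneg_right (le_abs_self α) h4n
      have ht3 := mul_le_mul_of_nonneg_right (neg_abs_le α) h4n
      have habs : |((U r)^2 - (deriv U r)^2 - α/2*(U r)^4)|
          ≤ (2*C^2 + |α|/2*C^4) * (Real.exp (-η*r))^2 := by
        rw [abs_le]
        constructor <;>
          [linarith [sq_nonneg (U r), hu'2, ht1, ht3];
           linarith [sq_nonneg (deriv U r), hu2, ht1, ht2]]
      rw [hE2]
      calc ‖H r‖ = r * |((U r)^2 - (deriv U r)^2 - α/2*(U r)^4)| := by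
            rw [hH]; rw [Real.norm_eq_abs, abs_mul, abs_of_pos hr]
        _ ≤ r * ((2*C^2 + |α|/2*C^4) * (Real.exp (-η*r))^2) := by
            apply mul_le_mul_of_nonneg_left habs hr.le
        _ = (2*C^2 + |α|/2*C^4) * (r * (Real.exp (-η*r))^2) := by ring
    have := hkey.const_mul (2*C^2 + |α|/2*C^4)
    rw [mul_zero] at this
    apply squeeze_zero_norm' hbound
    simpa [hE2] using this
  have hfint : IntegrableOn f (Set.Ioi (0:ℝ)) :=
    ((hint2.sub hint1).sub (hint3.const_mul (α/2))).add (hint4.const_mul (2*β))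
  have hzero : (∫ r in Set.Ioi (0:ℝ), f r) = 0 := by
    have := integral_Ioi_of_hasDerivAt_of_tendsto' (f := H) (f' := f) (a := 0)
      (fun x _ => hderiv x) hfint hH0
    rw [this]; simp [hH]
  -- split the integral
  have hsplit : (∫ r in Set.Ioi (0:ℝ), f r)
      = (∫ r in Set.Ioi (0:ℝ), (U r)^2) - (∫ r in Set.Ioi (0:ℝ), (deriv U r)^2)
        - α/2 * (∫ r in Set.Ioi (0:ℝ), (U r)^4)
        + 2*β * (∫ r in Set.Ioi (0:ℝ), r * U r * deriv U r * (V r)^2) := by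
    have e1 : (∫ r in Set.Ioi (0:ℝ), f r)
        = (∫ r in Set.Ioi (0:ℝ), ((U r)^2 - (deriv U r)^2 - α/2*(U r)^4))
          + ∫ r in Set.Ioi (0:ℝ), 2*β*(r * U r * deriv U r * (V r)^2) :=
      integral_add ((hint2.sub hint1).sub (hint3.const_mul (α/2))) (hint4.const_mul (2*β))
    have e2 : (∫ r in Set.Ioi (0:ℝ), ((U r)^2 - (deriv U r)^2 - α/2*(U r)^4))
        = (∫ r in Set.Ioi (0:ℝ), ((U r)^2 - (deriv U r)^2))
          - ∫ r in Set.Ioi (0:ℝ), α/2*(U r)^4 :=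
      integral_sub (hint2.sub hint1) (hint3.const_mul (α/2))
    have e3 : (∫ r in Set.Ioi (0:ℝ), ((U r)^2 - (deriv U r)^2))
        = (∫ r in Set.Ioi (0:ℝ), (U r)^2) - ∫ r in Set.Ioi (0:ℝ), (deriv U r)^2 :=
      integral_sub hint2 hint1
    rw [e1, e2, e3, integral_const_mul, integral_const_mul]
  have habs_eq : (∫ r in Set.Ioi (0:ℝ), |deriv U r|^2) = ∫ r in Set.Ioi (0:ℝ), (deriv U r)^2 := by
    apply setIntegral_congr_fun measurableSet_Ioi
    intro r _; exact sq_abs _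
  rw [habs_eq]
  rw [hsplit] at hzero
  linarith
end

section
/- Let λ, α, β, γ ∈ ℝ, let P, Q : [0,∞) → ℝ be continuously differentiable with P, Q, P', Q' bounded, and let u, v : [0,∞) → ℝ be twice continuously differentiable functions with u'(0) = v'(0) = 0, satisfying -u''(r) - u'(r)/r + (λ + P(r))·u(r) = α·u(r)³ + β·u(r)·v(r)² and -v''(r) - v'(r)/r + (λ + Q(r))·v(r) = γ·v(r)³ + β·u(r)²·v(r) for all r > 0, and suppose there exist constants C, η > 0 such that |u(r)| + |u'(r)| + |v(r)| + |v'(r)| ≤ C·e^{-ηr} for all r ≥ 0. Then 2·∫₀^∞ r·(λ + P(r))·u(r)² dr = α·∫₀^∞ r·u(r)⁴ dr - ∫₀^∞ r²·P'(r)·u(r)² dr - β·∫₀^∞ r²·2·u(r)·u'(r)·v(r)² dr. -/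
open MeasureTheory

open Real Filter Set in
private lemma aux_integrable' {c : ℝ} (hc : 0 < c) :
    IntegrableOn (fun x : ℝ => (x^2+x) * Real.exp (-c*x)) (Set.Ioi 0) := by
  have h2 : IntegrableOn (fun x:ℝ => x ^ (2:ℝ) * Real.exp (-c * x ^ (1:ℝ))) (Set.Ioi 0) :=
    integrableOn_rpow_mul_exp_neg_mul_rpow (by norm_num) (by norm_num) hc
  have h1 : IntegrableOn (fun x:ℝ => x ^ (1:ℝ) * Real.exp (-c * x ^ (1:ℝ))) (Set.Ioi 0) :=
    integrableOn_rpow_mul_exp_neg_mul_rpow (by norm_num) (by norm_num) hc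
  refine IntegrableOn.congr_fun (h2.add h1) ?_ measurableSet_Ioi
  intro x hx
  simp only [Pi.add_apply]
  rw [Real.rpow_one, show (2:ℝ) = ((2:ℕ):ℝ) by norm_num, Real.rpow_natCast]
  ring

open Real Filter Set in
private lemma aux_tendsto' {c : ℝ} (hc : 0 < c) :
    Filter.Tendsto (fun x:ℝ => x^2 * Real.exp (-c*x)) Filter.atTop (nhds 0) := by
  have := tendsto_rpow_mul_exp_neg_mul_atTop_nhds_zero 2 c hc
  refine this.congr' ?_
  filter_upwards [Filter.eventually_gt_atTop (0:ℝ)] with x hx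
  rw [show (2:ℝ) = ((2:ℕ):ℝ) by norm_num, Real.rpow_natCast]

open Real Filter Set in
private lemma aux_master' {c K : ℝ} (hc : 0 < c) {f : ℝ → ℝ}
    (hcont : ContinuousOn f (Set.Ioi 0))
    (hb : ∀ x ∈ Set.Ioi (0:ℝ), |f x| ≤ K * ((x^2+x) * Real.exp (-c*x))) :
    IntegrableOn f (Set.Ioi 0) := by
  refine Integrable.mono' ((aux_integrable' hc).const_mul K)
    (hcont.aestronglyMeasurable measurableSet_Ioi) ?_
  rw [ae_restrict_iff' measurableSet_Ioi]
  exact Filter.Eventually.of_forall fun x hx => by simpa [mul_assoc] using hb x hx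

set_option maxHeartbeats 1000000 in
open Real Filter Set in
theorem radial_pohozaev_u (lam α β γ : ℝ) (P Q u v : ℝ → ℝ)
    (hP : ContDiffOn ℝ 1 P (Set.Ici 0)) (hQ : ContDiffOn ℝ 1 Q (Set.Ici 0))
    (hPbdd : ∃ C : ℝ, ∀ r ≥ (0:ℝ), |P r| ≤ C ∧ |deriv P r| ≤ C)
    (hQbdd : ∃ C : ℝ, ∀ r ≥ (0:ℝ), |Q r| ≤ C ∧ |deriv Q r| ≤ C)
    (hu : ContDiffOn ℝ 2 u (Set.Ici 0)) (hv : ContDiffOn ℝ 2 v (Set.Ici 0))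
    (hu0 : deriv u 0 = 0) (hv0 : deriv v 0 = 0)
    (hueq : ∀ r > (0:ℝ), -(deriv (deriv u) r) - deriv u r / r + (lam + P r) * u r
      = α * (u r) ^ 3 + β * u r * (v r) ^ 2)
    (hveq : ∀ r > (0:ℝ), -(deriv (deriv v) r) - deriv v r / r + (lam + Q r) * v r
      = γ * (v r) ^ 3 + β * (u r) ^ 2 * v r)
    (hdecay : ∃ C > (0:ℝ), ∃ η > (0:ℝ), ∀ r ≥ (0:ℝ),
      |u r| + |deriv u r| + |v r| + |deriv v r| ≤ C * Real.exp (-η * r)) :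
    2 * (∫ r in Set.Ioi (0:ℝ), r * (lam + P r) * (u r) ^ 2)
      = α * (∫ r in Set.Ioi (0:ℝ), r * (u r) ^ 4)
        - (∫ r in Set.Ioi (0:ℝ), r ^ 2 * deriv P r * (u r) ^ 2)
        - β * ∫ r in Set.Ioi (0:ℝ), r ^ 2 * (2 * u r * deriv u r * (v r) ^ 2) := by
  clear hQ hQbdd hveq hv0 hu0
  obtain ⟨CP, hCPb⟩ := hPbdd
  obtain ⟨C, hC, η, hη, hdec⟩ := hdecay
  have hC0 : (0:ℝ) ≤ C := hC.le
  have hCP0 : (0:ℝ) ≤ CP := (abs_nonneg _).trans (hCPb 0 le_rfl).1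
  have h2η : (0:ℝ) < 2*η := by linarith
  -- individual decay bounds
  have hub : ∀ x ≥ (0:ℝ), |u x| ≤ C * Real.exp (-η*x) := by
    intro x hx; have h := hdec x hx
    have a1 := abs_nonneg (deriv u x); have a2 := abs_nonneg (v x)
    have a3 := abs_nonneg (deriv v x); linarith
  have hdub : ∀ x ≥ (0:ℝ), |deriv u x| ≤ C * Real.exp (-η*x) := by
    intro x hx; have h := hdec x hx
    have a1 := abs_nonneg (u x); have a2 := abs_nonneg (v x)
    have a3 := abs_nonneg (deriv v x); linarith
  have hvb : ∀ x ≥ (0:ℝ), |v x| ≤ C * Real.exp (-η*x) := by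
    intro x hx; have h := hdec x hx
    have a1 := abs_nonneg (u x); have a2 := abs_nonneg (deriv u x)
    have a3 := abs_nonneg (deriv v x); linarith
  have hE0 : ∀ x : ℝ, (0:ℝ) ≤ Real.exp (-(2*η)*x) := fun x => (Real.exp_pos _).le
  have hE1 : ∀ x ≥ (0:ℝ), Real.exp (-(2*η)*x) ≤ 1 := fun x hx =>
    Real.exp_le_one_iff.2 (by nlinarith)
  have hsq : ∀ (f : ℝ → ℝ), (∀ x ≥ (0:ℝ), |f x| ≤ C * Real.exp (-η*x)) →
      ∀ x ≥ (0:ℝ), (f x)^2 ≤ C^2 * Real.exp (-(2*η)*x) := by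
    intro f hf x hx
    have h1 := hf x hx
    have h2 : Real.exp (-η*x)^2 = Real.exp (-(2*η)*x) := by
      rw [sq, ← Real.exp_add]; ring_nf
    nlinarith [abs_nonneg (f x), sq_abs (f x), Real.exp_pos (-η*x)]
  have q_u := hsq u hub
  have q_du := hsq (deriv u) hdub
  have q_v := hsq v hvb
  have q_uu : ∀ x ≥ (0:ℝ), |u x * deriv u x| ≤ C^2 * Real.exp (-(2*η)*x) := by
    intro x hx
    have h1 := hub x hx; have h2 := hdub x hx
    have h3 : Real.exp (-η*x)^2 = Real.exp (-(2*η)*x) := by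
      rw [sq, ← Real.exp_add]; ring_nf
    rw [abs_mul]
    nlinarith [abs_nonneg (u x), abs_nonneg (deriv u x), Real.exp_pos (-η*x)]
  have q_u4 : ∀ x ≥ (0:ℝ), (u x)^4 ≤ C^4 * Real.exp (-(2*η)*x) := by
    intro x hx
    have h1 := q_u x hx; have h2 := hE1 x hx; have h3 := hE0 x
    have h4 : (u x^2)^2 ≤ (C^2*Real.exp (-(2*η)*x))^2 :=
      pow_le_pow_left₀ (sq_nonneg _) h1 2
    nlinarith [h4, sq_nonneg C, mul_nonneg (pow_nonneg hC0 4) h3]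
  have hlamP : ∀ x ≥ (0:ℝ), |lam + P x| ≤ |lam| + CP := fun x hx =>
    (abs_add_le _ _).trans (by linarith [(hCPb x hx).1])
  -- continuity facts
  have hUc : ContinuousOn u (Set.Ioi 0) := hu.continuousOn.mono Set.Ioi_subset_Ici_self
  have hVc : ContinuousOn v (Set.Ioi 0) := hv.continuousOn.mono Set.Ioi_subset_Ici_self
  have hPc : ContinuousOn P (Set.Ioi 0) := hP.continuousOn.mono Set.Ioi_subset_Ici_self
  have hu' : ContDiffOn ℝ 1 (deriv u) (Set.Ioi 0) :=
    (hu.mono Set.Ioi_subset_Ici_self).deriv_of_isOpen isOpen_Ioi (by norm_num)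
  have hdUc : ContinuousOn (deriv u) (Set.Ioi 0) := hu'.continuousOn
  have hdPc : ContinuousOn (deriv P) (Set.Ioi 0) :=
    (((hP.mono Set.Ioi_subset_Ici_self).deriv_of_isOpen isOpen_Ioi (by norm_num) :
      ContDiffOn ℝ 0 (deriv P) (Set.Ioi 0))).continuousOn
  -- pointwise derivatives
  have hU : ∀ x ∈ Set.Ioi (0:ℝ), HasDerivAt u (deriv u x) x := fun x hx =>
    ((hu.contDiffAt (Ici_mem_nhds hx)).differentiableAt (by norm_num)).hasDerivAt
  have hU' : ∀ x ∈ Set.Ioi (0:ℝ), HasDerivAt (deriv u) (deriv (deriv u) x) x := fun x hx =>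
    ((hu'.contDiffAt (isOpen_Ioi.mem_nhds hx)).differentiableAt (by norm_num)).hasDerivAt
  have hPd : ∀ x ∈ Set.Ioi (0:ℝ), HasDerivAt P (deriv P x) x := fun x hx =>
    ((hP.contDiffAt (Ici_mem_nhds hx)).differentiableAt (by norm_num)).hasDerivAt
  -- the Pohozaev multiplier function
  set A : ℝ → ℝ := fun y =>
    -(y^2*(deriv u y)^2)/2 + y^2*(lam + P y)*(u y)^2/2 - α*y^2*(u y)^4/4 with hAdef
  set g : ℝ → ℝ := fun y =>
    y*(lam+P y)*(u y)^2 + (1/2)*(y^2*deriv P y*(u y)^2) - α/2*(y*(u y)^4)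
      + β/2*(y^2*(2*u y*deriv u y*(v y)^2)) with hgdef
  have hAd : ∀ x ∈ Set.Ioi (0:ℝ), HasDerivAt A (g x) x := by
    intro x hx
    have hx0 : (0:ℝ) < x := hx
    simp only [hAdef, hgdef]
    have h2 : HasDerivAt (fun y:ℝ => y^2) (2*x) x := by simpa using hasDerivAt_pow 2 x
    have hdd : deriv (deriv u) x
        = (lam + P x)*u x - α*(u x)^3 - β*u x*(v x)^2 - deriv u x / x := by
      have := hueq x hx0; linarith
    have E1 := (h2.mul ((hU' x hx).pow 2)).neg.div_const 2
    have E2 := ((h2.mul ((hPd x hx).const_add lam)).mul ((hU x hx).pow 2)).div_const 2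
    have E3 := ((h2.const_mul α).mul ((hU x hx).pow 4)).div_const 4
    have total := (E1.add E2).sub E3
    refine total.congr_deriv ?_
    rw [hdd]
    simp only [Pi.pow_apply, Pi.mul_apply]
    field_simp
    ring
  have hA0 : A 0 = 0 := by simp [hAdef]
  -- uniform bound on |A|
  have hAle : ∀ x ≥ (0:ℝ),
      |A x| ≤ (C^2/2 + (|lam|+CP)*C^2/2 + |α| * C^4/4) * (x^2 * Real.exp (-(2*η)*x)) := by
    intro x hx
    have t1 : |(-(x^2*(deriv u x)^2)/2)| ≤ C^2/2*(x^2*Real.exp (-(2*η)*x)) := by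
      rw [neg_div, abs_neg, abs_of_nonneg (by positivity)]
      nlinarith [q_du x hx, sq_nonneg x]
    have t2 : |x^2*(lam + P x)*(u x)^2/2| ≤ (|lam|+CP)*C^2/2*(x^2*Real.exp (-(2*η)*x)) := by
      have e1 : |lam + P x| *(u x)^2 ≤ (|lam|+CP)*(C^2*Real.exp (-(2*η)*x)) :=
        mul_le_mul (hlamP x hx) (q_u x hx) (sq_nonneg _) (by positivity)
      have e2 : |x^2*(lam + P x)*(u x)^2/2| = x^2*(|lam + P x| *(u x)^2)/2 := by
        rw [abs_div, abs_mul, abs_mul, abs_of_nonneg (sq_nonneg x),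
          abs_of_nonneg (sq_nonneg (u x))]
        norm_num; ring
      rw [e2]
      nlinarith [e1, sq_nonneg x]
    have t3 : |α*x^2*(u x)^4/4| ≤ |α| * C^4/4*(x^2*Real.exp (-(2*η)*x)) := by
      have e2 : |α*x^2*(u x)^4/4| = |α| *(x^2*(u x)^4)/4 := by
        rw [abs_div, abs_mul, abs_mul, abs_of_nonneg (sq_nonneg x),
          abs_of_nonneg (by positivity : (0:ℝ) ≤ (u x)^4)]
        norm_num; ring
      rw [e2]
      nlinarith [q_u4 x hx, sq_nonneg x, abs_nonneg α, mul_nonneg (sq_nonneg x) (abs_nonneg α)]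
    have tri : |A x| ≤ |(-(x^2*(deriv u x)^2)/2)| + |x^2*(lam + P x)*(u x)^2/2|
        + |α*x^2*(u x)^4/4| := by
      simp only [hAdef]
      rw [sub_eq_add_neg]
      exact (abs_add_three _ _ _).trans_eq (by rw [abs_neg])
    nlinarith [t1, t2, t3, tri]
  -- limit at infinity
  have htop : Tendsto A atTop (nhds 0) := by
    apply squeeze_zero_norm'
      (a := fun x => (C^2/2 + (|lam|+CP)*C^2/2 + |α| * C^4/4) * (x^2 * Real.exp (-(2*η)*x)))
    · filter_upwards [eventually_ge_atTop (0:ℝ)] with x hx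
      simpa [Real.norm_eq_abs] using hAle x hx
    · simpa using (aux_tendsto' h2η).const_mul (C^2/2 + (|lam|+CP)*C^2/2 + |α| * C^4/4)
  -- continuity at 0 from the right
  have hcont0 : ContinuousWithinAt A (Set.Ici 0) 0 := by
    have h0 : Tendsto A (nhdsWithin 0 (Set.Ici 0)) (nhds 0) := by
      apply squeeze_zero_norm'
        (a := fun x => (C^2/2 + (|lam|+CP)*C^2/2 + |α| * C^4/4) * (x^2 * Real.exp (-(2*η)*x)))
      · exact eventually_nhdsWithin_of_forall fun x hx => by
          simpa [Real.norm_eq_abs] using hAle x hx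
      · have hcg : Continuous fun x:ℝ =>
            (C^2/2 + (|lam|+CP)*C^2/2 + |α| * C^4/4) * (x^2 * Real.exp (-(2*η)*x)) := by
          fun_prop
        have h1 : Tendsto (fun x:ℝ =>
            (C^2/2 + (|lam|+CP)*C^2/2 + |α| * C^4/4) * (x^2 * Real.exp (-(2*η)*x)))
            (nhds 0) (nhds 0) := by simpa using hcg.tendsto 0
        exact h1.mono_left nhdsWithin_le_nhds
    show Tendsto A (nhdsWithin 0 (Set.Ici 0)) (nhds (A 0))
    rw [hA0]; exact h0
  -- integrability of the four pieces
  have hi1 : IntegrableOn (fun x:ℝ => x*(lam+P x)*(u x)^2) (Set.Ioi 0) := by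
    apply aux_master' (K := (|lam|+CP)*C^2) h2η
    · exact (continuous_id.continuousOn.mul (continuousOn_const.add hPc)).mul (hUc.pow 2)
    · intro x hx
      have hx0 : (0:ℝ) < x := hx
      have e1 : |lam + P x| *(u x)^2 ≤ (|lam|+CP)*(C^2*Real.exp (-(2*η)*x)) :=
        mul_le_mul (hlamP x hx0.le) (q_u x hx0.le) (sq_nonneg _) (by positivity)
      rw [abs_mul, abs_mul, abs_of_nonneg hx0.le, abs_of_nonneg (sq_nonneg (u x))]
      nlinarith [e1, sq_nonneg x, hE0 x, abs_nonneg (lam + P x), sq_nonneg (u x),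
        mul_nonneg (mul_nonneg (add_nonneg (abs_nonneg lam) hCP0) (sq_nonneg C))
          (mul_nonneg (sq_nonneg x) (hE0 x))]
  have hi2 : IntegrableOn (fun x:ℝ => x^2*deriv P x*(u x)^2) (Set.Ioi 0) := by
    apply aux_master' (K := CP*C^2) h2η
    · exact ((continuous_id.continuousOn.pow 2).mul hdPc).mul (hUc.pow 2)
    · intro x hx
      have hx0 : (0:ℝ) < x := hx
      have e1 : |deriv P x| *(u x)^2 ≤ CP*(C^2*Real.exp (-(2*η)*x)) :=
        mul_le_mul (hCPb x hx0.le).2 (q_u x hx0.le) (sq_nonneg _) hCP0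
      rw [abs_mul, abs_mul, abs_of_nonneg (sq_nonneg x), abs_of_nonneg (sq_nonneg (u x))]
      nlinarith [e1, sq_nonneg x, hE0 x, abs_nonneg (deriv P x), sq_nonneg (u x),
        mul_nonneg (mul_nonneg hCP0 (sq_nonneg C)) (mul_nonneg hx0.le (hE0 x))]
  have hi3 : IntegrableOn (fun x:ℝ => x*(u x)^4) (Set.Ioi 0) := by
    apply aux_master' (K := C^4) h2η
    · exact continuous_id.continuousOn.mul (hUc.pow 4)
    · intro x hx
      have hx0 : (0:ℝ) < x := hx
      rw [abs_mul, abs_of_nonneg hx0.le, abs_of_nonneg (by positivity : (0:ℝ) ≤ (u x)^4)]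
      nlinarith [q_u4 x hx0.le, sq_nonneg x, hE0 x,
        mul_nonneg (by positivity : (0:ℝ) ≤ C^4) (mul_nonneg (sq_nonneg x) (hE0 x))]
  have hi4 : IntegrableOn (fun x:ℝ => x^2*(2*u x*deriv u x*(v x)^2)) (Set.Ioi 0) := by
    apply aux_master' (K := 2*C^4) h2η
    · exact (continuous_id.continuousOn.pow 2).mul
        (((continuousOn_const.mul hUc).mul hdUc).mul (hVc.pow 2))
    · intro x hx
      have hx0 : (0:ℝ) < x := hx
      have e4 : |u x*deriv u x| *(v x)^2
          ≤ (C^2*Real.exp (-(2*η)*x))*(C^2*Real.exp (-(2*η)*x)) :=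
        mul_le_mul (q_uu x hx0.le) (q_v x hx0.le) (sq_nonneg _) (by positivity)
      have e5 : (C^2*Real.exp (-(2*η)*x))*(C^2*Real.exp (-(2*η)*x))
          ≤ C^4*Real.exp (-(2*η)*x) := by
        nlinarith [mul_nonneg (mul_nonneg (pow_nonneg hC0 4) (hE0 x))
          (by linarith [hE1 x hx0.le] : (0:ℝ) ≤ 1 - Real.exp (-(2*η)*x))]
      have eabs : |x^2*(2*u x*deriv u x*(v x)^2)| = x^2*(2*(|u x*deriv u x|)*(v x)^2) := by
        rw [abs_mul, abs_of_nonneg (sq_nonneg x)]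
        congr 1
        rw [mul_assoc 2, abs_mul, abs_mul, abs_two, abs_of_nonneg (sq_nonneg (v x))]
      rw [eabs]
      calc x^2*(2*(|u x*deriv u x|)*(v x)^2) ≤ x^2*(2*(C^4*Real.exp (-(2*η)*x))) := by
            refine mul_le_mul_of_nonneg_left ?_ (sq_nonneg x)
            linarith [e4, e5]
        _ ≤ 2*C^4*((x^2+x)*Real.exp (-(2*η)*x)) := by
            nlinarith [mul_nonneg (pow_nonneg hC0 4) (mul_nonneg hx0.le (hE0 x))]
  -- integrability of g
  have j2 : IntegrableOn (fun x:ℝ => α/2*(x*(u x)^4)) (Set.Ioi 0) := hi3.const_mul _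
  have j4 : IntegrableOn (fun x:ℝ => β/2*(x^2*(2*u x*deriv u x*(v x)^2))) (Set.Ioi 0) :=
    hi4.const_mul _
  have j12 : IntegrableOn (fun x:ℝ => x*(lam+P x)*(u x)^2 + (1/2)*(x^2*deriv P x*(u x)^2))
      (Set.Ioi 0) := hi1.add (hi2.const_mul _)
  have j123 : IntegrableOn (fun x:ℝ => x*(lam+P x)*(u x)^2 + (1/2)*(x^2*deriv P x*(u x)^2)
      - α/2*(x*(u x)^4)) (Set.Ioi 0) := j12.sub j2
  have hgint : IntegrableOn g (Set.Ioi 0) := by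
    rw [hgdef]; exact j123.add j4
  -- FTC on (0, ∞)
  have hFTC : (∫ x in Set.Ioi (0:ℝ), g x) = 0 - A 0 :=
    integral_Ioi_of_hasDerivAt_of_tendsto hcont0 hAd hgint htop
  rw [hA0, sub_zero] at hFTC
  -- split the integral of g
  have hsplit : (∫ x in Set.Ioi (0:ℝ), g x)
      = (∫ x in Set.Ioi (0:ℝ), x*(lam+P x)*(u x)^2)
        + (1/2)*(∫ x in Set.Ioi (0:ℝ), x^2*deriv P x*(u x)^2)
        - α/2*(∫ x in Set.Ioi (0:ℝ), x*(u x)^4)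
        + β/2*(∫ x in Set.Ioi (0:ℝ), x^2*(2*u x*deriv u x*(v x)^2)) := by
    simp only [hgdef]
    rw [integral_add j123 j4, integral_sub j12 j2, integral_add hi1 (hi2.const_mul (1/2)),
      integral_const_mul, integral_const_mul, integral_const_mul]
  rw [hFTC] at hsplit
  have hI1 : (∫ r in Set.Ioi (0:ℝ), r * (lam + P r) * (u r) ^ 2)
      = ∫ x in Set.Ioi (0:ℝ), x*(lam+P x)*(u x)^2 := rfl
  have hI2 : (∫ r in Set.Ioi (0:ℝ), r ^ 2 * deriv P r * (u r) ^ 2)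
      = ∫ x in Set.Ioi (0:ℝ), x^2*deriv P x*(u x)^2 := rfl
  have hI3 : (∫ r in Set.Ioi (0:ℝ), r * (u r) ^ 4)
      = ∫ x in Set.Ioi (0:ℝ), x*(u x)^4 := rfl
  have hI4 : (∫ r in Set.Ioi (0:ℝ), r ^ 2 * (2 * u r * deriv u r * (v r) ^ 2))
      = ∫ x in Set.Ioi (0:ℝ), x^2*(2*u x*deriv u x*(v x)^2) := rfl
  rw [hI1, hI2, hI3, hI4]
  linarith
end

section
/- Let λ, α, β, γ ∈ ℝ, let P, Q : [0,∞) → ℝ be continuously differentiable with P, Q, P', Q' bounded, and let u, v : [0,∞) → ℝ be twice continuously differentiable functions with u'(0) = v'(0) = 0, satisfying -u''(r) - u'(r)/r + (λ + P(r))·u(r) = α·u(r)³ + β·u(r)·v(r)² and -v''(r) - v'(r)/r + (λ + Q(r))·v(r) = γ·v(r)³ + β·u(r)²·v(r) for all r > 0, and suppose there exist constants C, η > 0 such that |u(r)| + |u'(r)| + |v(r)| + |v'(r)| ≤ C·e^{-ηr} for all r ≥ 0. Then 2·∫₀^∞ r·((λ + P(r))·u(r)² + (λ + Q(r))·v(r)²)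 dr = ∫₀^∞ r·(α·u(r)⁴ + γ·v(r)⁴) dr + 2β·∫₀^∞ r·u(r)²·v(r)² dr - ∫₀^∞ r²·(P'(r)·u(r)² + Q'(r)·v(r)²) dr. -/
open MeasureTheory

private lemma sq_le_of_abs_le' {a A : ℝ} (h : |a| ≤ A) : a ^ 2 ≤ A ^ 2 := by
  calc a ^ 2 = |a| ^ 2 := (sq_abs a).symm
    _ ≤ A ^ 2 := pow_le_pow_left₀ (abs_nonneg a) h 2

set_option maxHeartbeats 2000000 in
theorem radial_pohozaev_sum (lam α β γ : ℝ) (P Q u v : ℝ → ℝ)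
    (hP : ContDiffOn ℝ 1 P (Set.Ici 0)) (hQ : ContDiffOn ℝ 1 Q (Set.Ici 0))
    (hPbdd : ∃ C : ℝ, ∀ r ≥ (0:ℝ), |P r| ≤ C ∧ |deriv P r| ≤ C)
    (hQbdd : ∃ C : ℝ, ∀ r ≥ (0:ℝ), |Q r| ≤ C ∧ |deriv Q r| ≤ C)
    (hu : ContDiffOn ℝ 2 u (Set.Ici 0)) (hv : ContDiffOn ℝ 2 v (Set.Ici 0))
    (hu0 : deriv u 0 = 0) (hv0 : deriv v 0 = 0)
    (hueq : ∀ r > (0:ℝ), -(deriv (deriv u) r) - deriv u r / r + (lam + P r) * u r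
      = α * (u r) ^ 3 + β * u r * (v r) ^ 2)
    (hveq : ∀ r > (0:ℝ), -(deriv (deriv v) r) - deriv v r / r + (lam + Q r) * v r
      = γ * (v r) ^ 3 + β * (u r) ^ 2 * v r)
    (hdecay : ∃ C > (0:ℝ), ∃ η > (0:ℝ), ∀ r ≥ (0:ℝ),
      |u r| + |deriv u r| + |v r| + |deriv v r| ≤ C * Real.exp (-η * r)) :
    2 * (∫ r in Set.Ioi (0:ℝ), r * ((lam + P r) * (u r) ^ 2 + (lam + Q r) * (v r) ^ 2))
      = (∫ r in Set.Ioi (0:ℝ), r * (α * (u r) ^ 4 + γ * (v r) ^ 4))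
        + 2 * β * (∫ r in Set.Ioi (0:ℝ), r * (u r) ^ 2 * (v r) ^ 2)
        - ∫ r in Set.Ioi (0:ℝ), r ^ 2 * (deriv P r * (u r) ^ 2 + deriv Q r * (v r) ^ 2) := by
  obtain ⟨CP, hCP⟩ := hPbdd
  obtain ⟨CQ, hCQ⟩ := hQbdd
  obtain ⟨C, hC0, η, hη, hdec⟩ := hdecay
  have hCP0 : 0 ≤ CP := (abs_nonneg _).trans (hCP 0 le_rfl).1
  have hCQ0 : 0 ≤ CQ := (abs_nonneg _).trans (hCQ 0 le_rfl).1
  -- individual decay bounds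
  have hub : ∀ r ≥ (0:ℝ), |u r| ≤ C * Real.exp (-η * r) := by
    intro r hr
    have h := hdec r hr
    have := abs_nonneg (deriv u r); have := abs_nonneg (v r); have := abs_nonneg (deriv v r)
    linarith
  have hu'b : ∀ r ≥ (0:ℝ), |deriv u r| ≤ C * Real.exp (-η * r) := by
    intro r hr
    have h := hdec r hr
    have := abs_nonneg (u r); have := abs_nonneg (v r); have := abs_nonneg (deriv v r)
    linarith
  have hvb : ∀ r ≥ (0:ℝ), |v r| ≤ C * Real.exp (-η * r) := by
    intro r hr
    have h := hdec r hr
    have := abs_nonneg (u r); have := abs_nonneg (deriv u r); have := abs_nonneg (deriv v r)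
    linarith
  have hv'b : ∀ r ≥ (0:ℝ), |deriv v r| ≤ C * Real.exp (-η * r) := by
    intro r hr
    have h := hdec r hr
    have := abs_nonneg (u r); have := abs_nonneg (deriv u r); have := abs_nonneg (v r)
    linarith
  -- derivative facts on (0,∞)
  have hmem : ∀ r : ℝ, 0 < r → Set.Ici (0:ℝ) ∈ nhds r := fun r hr => Ici_mem_nhds hr
  have hPD : ∀ r : ℝ, 0 < r → HasDerivAt P (deriv P r) r := fun r hr =>
    ((hP.contDiffAt (hmem r hr)).differentiableAt one_ne_zero).hasDerivAt
  have hQD : ∀ r : ℝ, 0 < r → HasDerivAt Q (deriv Q r) r := fun r hr =>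
    ((hQ.contDiffAt (hmem r hr)).differentiableAt one_ne_zero).hasDerivAt
  have huD : ∀ r : ℝ, 0 < r → HasDerivAt u (deriv u r) r := fun r hr =>
    ((hu.contDiffAt (hmem r hr)).differentiableAt two_ne_zero).hasDerivAt
  have hvD : ∀ r : ℝ, 0 < r → HasDerivAt v (deriv v r) r := fun r hr =>
    ((hv.contDiffAt (hmem r hr)).differentiableAt two_ne_zero).hasDerivAt
  have huC1 : ContDiffOn ℝ 1 (deriv u) (Set.Ioi 0) :=
    (hu.mono Set.Ioi_subset_Ici_self).deriv_of_isOpen isOpen_Ioi (by norm_num)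
  have hvC1 : ContDiffOn ℝ 1 (deriv v) (Set.Ioi 0) :=
    (hv.mono Set.Ioi_subset_Ici_self).deriv_of_isOpen isOpen_Ioi (by norm_num)
  have huDD : ∀ r : ℝ, 0 < r → HasDerivAt (deriv u) (deriv (deriv u) r) r := fun r hr =>
    ((huC1.contDiffAt (isOpen_Ioi.mem_nhds hr)).differentiableAt one_ne_zero).hasDerivAt
  have hvDD : ∀ r : ℝ, 0 < r → HasDerivAt (deriv v) (deriv (deriv v) r) r := fun r hr =>
    ((hvC1.contDiffAt (isOpen_Ioi.mem_nhds hr)).differentiableAt one_ne_zero).hasDerivAt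
  -- continuity on (0,∞) for measurability
  have hucont : ContinuousOn u (Set.Ioi 0) := hu.continuousOn.mono Set.Ioi_subset_Ici_self
  have hvcont : ContinuousOn v (Set.Ioi 0) := hv.continuousOn.mono Set.Ioi_subset_Ici_self
  have hPcont : ContinuousOn P (Set.Ioi 0) := hP.continuousOn.mono Set.Ioi_subset_Ici_self
  have hQcont : ContinuousOn Q (Set.Ioi 0) := hQ.continuousOn.mono Set.Ioi_subset_Ici_self
  have hPdcont : ContinuousOn (deriv P) (Set.Ioi 0) :=
    (hP.mono Set.Ioi_subset_Ici_self).continuousOn_deriv_of_isOpen isOpen_Ioi le_rfl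
  have hQdcont : ContinuousOn (deriv Q) (Set.Ioi 0) :=
    (hQ.mono Set.Ioi_subset_Ici_self).continuousOn_deriv_of_isOpen isOpen_Ioi le_rfl
  -- elementary exponential estimates
  have hE0 : ∀ r : ℝ, 0 < Real.exp (-η * r) := fun r => Real.exp_pos _
  have hE1 : ∀ r ≥ (0:ℝ), Real.exp (-η * r) ≤ 1 := by
    intro r hr
    apply Real.exp_le_one_iff.mpr
    nlinarith
  have hEmul : ∀ r : ℝ, Real.exp (-η * r) * Real.exp (η * r) = 1 := by
    intro r
    rw [← Real.exp_add]
    norm_num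
  have hrE : ∀ r ≥ (0:ℝ), r * Real.exp (-η * r) ≤ 1 / η := by
    intro r hr
    have h1 : η * r ≤ Real.exp (η * r) := by
      have := Real.add_one_le_exp (η * r); linarith
    have h2 := hE0 r
    have h3 := hEmul r
    rw [le_div_iff₀ hη]
    nlinarith
  have hr2E : ∀ r ≥ (0:ℝ), r ^ 2 * Real.exp (-η * r) ≤ 4 / η ^ 2 := by
    intro r hr
    have h1 : η * r / 2 ≤ Real.exp (η * r / 2) := by
      have := Real.add_one_le_exp (η * r / 2); linarith
    have h1' : (η * r / 2) ^ 2 ≤ Real.exp (η * r / 2) ^ 2 := by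
      have h0 : 0 ≤ η * r / 2 := by positivity
      exact pow_le_pow_left₀ h0 h1 2
    have h2 : Real.exp (η * r / 2) ^ 2 = Real.exp (η * r) := by
      rw [← Real.exp_nat_mul]
      ring_nf
    have h3 := hEmul r
    have h4 := hE0 r
    have h5 := mul_le_mul_of_nonneg_right (h1'.trans_eq h2) h4.le
    rw [le_div_iff₀ (by positivity : (0:ℝ) < η ^ 2)]
    nlinarith
  -- master integrability criterion
  have master : ∀ (f : ℝ → ℝ) (M : ℝ), ContinuousOn f (Set.Ioi 0) →
      (∀ r ∈ Set.Ioi (0:ℝ), |f r| ≤ M * Real.exp (-η * r)) →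
      IntegrableOn f (Set.Ioi 0) := by
    intro f M hcont hbd
    refine Integrable.mono' ((exp_neg_integrableOn_Ioi 0 hη).const_mul M)
      (hcont.aestronglyMeasurable measurableSet_Ioi) ?_
    filter_upwards [ae_restrict_mem measurableSet_Ioi] with r hr
    simpa using hbd r hr
  -- squared / quartic bounds
  have hsqu : ∀ r ≥ (0:ℝ), (u r) ^ 2 ≤ C ^ 2 * Real.exp (-η * r) ^ 2 := by
    intro r hr
    have := sq_le_of_abs_le' (hub r hr)
    calc (u r) ^ 2 ≤ (C * Real.exp (-η * r)) ^ 2 := this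
      _ = C ^ 2 * Real.exp (-η * r) ^ 2 := by ring
  have hsqv : ∀ r ≥ (0:ℝ), (v r) ^ 2 ≤ C ^ 2 * Real.exp (-η * r) ^ 2 := by
    intro r hr
    have := sq_le_of_abs_le' (hvb r hr)
    calc (v r) ^ 2 ≤ (C * Real.exp (-η * r)) ^ 2 := this
      _ = C ^ 2 * Real.exp (-η * r) ^ 2 := by ring
  have hsqu' : ∀ r ≥ (0:ℝ), (deriv u r) ^ 2 ≤ C ^ 2 * Real.exp (-η * r) ^ 2 := by
    intro r hr
    have := sq_le_of_abs_le' (hu'b r hr)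
    calc (deriv u r) ^ 2 ≤ (C * Real.exp (-η * r)) ^ 2 := this
      _ = C ^ 2 * Real.exp (-η * r) ^ 2 := by ring
  have hsqv' : ∀ r ≥ (0:ℝ), (deriv v r) ^ 2 ≤ C ^ 2 * Real.exp (-η * r) ^ 2 := by
    intro r hr
    have := sq_le_of_abs_le' (hv'b r hr)
    calc (deriv v r) ^ 2 ≤ (C * Real.exp (-η * r)) ^ 2 := this
      _ = C ^ 2 * Real.exp (-η * r) ^ 2 := by ring
  have hE2 : ∀ r ≥ (0:ℝ), Real.exp (-η * r) ^ 2 ≤ 1 := by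
    intro r hr
    have := hE1 r hr
    have := (hE0 r).le
    nlinarith
  have hq4u : ∀ r ≥ (0:ℝ), (u r) ^ 4 ≤ C ^ 4 * Real.exp (-η * r) ^ 2 := by
    intro r hr
    have h1 := hsqu r hr
    have h2 := hE2 r hr
    calc (u r) ^ 4 = ((u r) ^ 2) ^ 2 := by ring
      _ ≤ (C ^ 2 * Real.exp (-η * r) ^ 2) ^ 2 := pow_le_pow_left₀ (sq_nonneg _) h1 2
      _ = C ^ 4 * Real.exp (-η * r) ^ 2 * Real.exp (-η * r) ^ 2 := by ring
      _ ≤ C ^ 4 * Real.exp (-η * r) ^ 2 * 1 :=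
          mul_le_mul_of_nonneg_left h2 (by positivity)
      _ = C ^ 4 * Real.exp (-η * r) ^ 2 := mul_one _
  have hq4v : ∀ r ≥ (0:ℝ), (v r) ^ 4 ≤ C ^ 4 * Real.exp (-η * r) ^ 2 := by
    intro r hr
    have h1 := hsqv r hr
    have h2 := hE2 r hr
    calc (v r) ^ 4 = ((v r) ^ 2) ^ 2 := by ring
      _ ≤ (C ^ 2 * Real.exp (-η * r) ^ 2) ^ 2 := pow_le_pow_left₀ (sq_nonneg _) h1 2
      _ = C ^ 4 * Real.exp (-η * r) ^ 2 * Real.exp (-η * r) ^ 2 := by ring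
      _ ≤ C ^ 4 * Real.exp (-η * r) ^ 2 * 1 :=
          mul_le_mul_of_nonneg_left h2 (by positivity)
      _ = C ^ 4 * Real.exp (-η * r) ^ 2 := mul_one _
  have huv : ∀ r ≥ (0:ℝ), (u r) ^ 2 * (v r) ^ 2 ≤ C ^ 4 * Real.exp (-η * r) ^ 2 := by
    intro r hr
    have h1 := hsqu r hr
    have h2 := hsqv r hr
    have h3 := hE2 r hr
    calc (u r) ^ 2 * (v r) ^ 2
        ≤ (C ^ 2 * Real.exp (-η * r) ^ 2) * (C ^ 2 * Real.exp (-η * r) ^ 2) :=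
          mul_le_mul h1 h2 (sq_nonneg _) (by positivity)
      _ = C ^ 4 * Real.exp (-η * r) ^ 2 * Real.exp (-η * r) ^ 2 := by ring
      _ ≤ C ^ 4 * Real.exp (-η * r) ^ 2 * 1 :=
          mul_le_mul_of_nonneg_left h3 (by positivity)
      _ = C ^ 4 * Real.exp (-η * r) ^ 2 := mul_one _
  -- integrability of the four integrands
  have hInt1 : IntegrableOn
      (fun r => r * ((lam + P r) * (u r) ^ 2 + (lam + Q r) * (v r) ^ 2)) (Set.Ioi 0) := by
    apply master _ ((2 * |lam| + CP + CQ) * C ^ 2 / η)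
    · exact continuousOn_id.mul (((continuousOn_const.add hPcont).mul (hucont.pow 2)).add
        ((continuousOn_const.add hQcont).mul (hvcont.pow 2)))
    · intro r hr
      have hr0 : (0:ℝ) ≤ r := (le_of_lt hr)
      have t1 : |(lam + P r) * (u r) ^ 2| ≤ (|lam| + CP) * (C ^ 2 * Real.exp (-η * r) ^ 2) := by
        rw [abs_mul, abs_of_nonneg (sq_nonneg (u r))]
        exact mul_le_mul ((abs_add_le lam (P r)).trans (by linarith [(hCP r hr0).1]))
          (hsqu r hr0) (sq_nonneg _) (by positivity)
      have t2 : |(lam + Q r) * (v r) ^ 2| ≤ (|lam| + CQ) * (C ^ 2 * Real.exp (-η * r) ^ 2) := by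
        rw [abs_mul, abs_of_nonneg (sq_nonneg (v r))]
        exact mul_le_mul ((abs_add_le lam (Q r)).trans (by linarith [(hCQ r hr0).1]))
          (hsqv r hr0) (sq_nonneg _) (by positivity)
      have hcoef : (0:ℝ) ≤ (2 * |lam| + CP + CQ) * C ^ 2 :=
        mul_nonneg (by linarith [abs_nonneg lam]) (sq_nonneg C)
      calc |r * ((lam + P r) * (u r) ^ 2 + (lam + Q r) * (v r) ^ 2)|
          = r * |(lam + P r) * (u r) ^ 2 + (lam + Q r) * (v r) ^ 2| := by
            rw [abs_mul, abs_of_nonneg hr0]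
        _ ≤ r * ((|lam| + CP) * (C ^ 2 * Real.exp (-η * r) ^ 2)
              + (|lam| + CQ) * (C ^ 2 * Real.exp (-η * r) ^ 2)) :=
            mul_le_mul_of_nonneg_left ((abs_add_le _ _).trans (add_le_add t1 t2)) hr0
        _ = ((2 * |lam| + CP + CQ) * C ^ 2) * ((r * Real.exp (-η * r)) * Real.exp (-η * r)) := by
            ring
        _ ≤ ((2 * |lam| + CP + CQ) * C ^ 2) * ((1 / η) * Real.exp (-η * r)) :=
            mul_le_mul_of_nonneg_left
              (mul_le_mul_of_nonneg_right (hrE r hr0) (hE0 r).le) hcoef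
        _ = (2 * |lam| + CP + CQ) * C ^ 2 / η * Real.exp (-η * r) := by ring
  have hInt2 : IntegrableOn
      (fun r => r * (α * (u r) ^ 4 + γ * (v r) ^ 4)) (Set.Ioi 0) := by
    apply master _ ((|α| + |γ|) * C ^ 4 / η)
    · exact continuousOn_id.mul (((hucont.pow 4).const_smul α).add ((hvcont.pow 4).const_smul γ))
    · intro r hr
      have hr0 : (0:ℝ) ≤ r := le_of_lt hr
      have t1 : |α * (u r) ^ 4| ≤ |α| * (C ^ 4 * Real.exp (-η * r) ^ 2) := by
        rw [abs_mul, abs_of_nonneg (by positivity : (0:ℝ) ≤ (u r) ^ 4)]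
        exact mul_le_mul_of_nonneg_left (hq4u r hr0) (abs_nonneg α)
      have t2 : |γ * (v r) ^ 4| ≤ |γ| * (C ^ 4 * Real.exp (-η * r) ^ 2) := by
        rw [abs_mul, abs_of_nonneg (by positivity : (0:ℝ) ≤ (v r) ^ 4)]
        exact mul_le_mul_of_nonneg_left (hq4v r hr0) (abs_nonneg γ)
      have hcoef : (0:ℝ) ≤ (|α| + |γ|) * C ^ 4 := by positivity
      calc |r * (α * (u r) ^ 4 + γ * (v r) ^ 4)|
          = r * |α * (u r) ^ 4 + γ * (v r) ^ 4| := by rw [abs_mul, abs_of_nonneg hr0]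
        _ ≤ r * (|α| * (C ^ 4 * Real.exp (-η * r) ^ 2)
              + |γ| * (C ^ 4 * Real.exp (-η * r) ^ 2)) :=
            mul_le_mul_of_nonneg_left ((abs_add_le _ _).trans (add_le_add t1 t2)) hr0
        _ = ((|α| + |γ|) * C ^ 4) * ((r * Real.exp (-η * r)) * Real.exp (-η * r)) := by ring
        _ ≤ ((|α| + |γ|) * C ^ 4) * ((1 / η) * Real.exp (-η * r)) :=
            mul_le_mul_of_nonneg_left
              (mul_le_mul_of_nonneg_right (hrE r hr0) (hE0 r).le) hcoef
        _ = (|α| + |γ|) * C ^ 4 / η * Real.exp (-η * r) := by ring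
  have hInt3 : IntegrableOn
      (fun r => r * (u r) ^ 2 * (v r) ^ 2) (Set.Ioi 0) := by
    apply master _ (C ^ 4 / η)
    · exact (continuousOn_id.mul (hucont.pow 2)).mul (hvcont.pow 2)
    · intro r hr
      have hr0 : (0:ℝ) ≤ r := le_of_lt hr
      calc |r * (u r) ^ 2 * (v r) ^ 2|
          = r * ((u r) ^ 2 * (v r) ^ 2) := by
            rw [abs_of_nonneg (by positivity)]; ring
        _ ≤ r * (C ^ 4 * Real.exp (-η * r) ^ 2) :=
            mul_le_mul_of_nonneg_left (huv r hr0) hr0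
        _ = C ^ 4 * ((r * Real.exp (-η * r)) * Real.exp (-η * r)) := by ring
        _ ≤ C ^ 4 * ((1 / η) * Real.exp (-η * r)) :=
            mul_le_mul_of_nonneg_left
              (mul_le_mul_of_nonneg_right (hrE r hr0) (hE0 r).le) (by positivity)
        _ = C ^ 4 / η * Real.exp (-η * r) := by ring
  have hInt4 : IntegrableOn
      (fun r => r ^ 2 * (deriv P r * (u r) ^ 2 + deriv Q r * (v r) ^ 2)) (Set.Ioi 0) := by
    apply master _ ((CP + CQ) * C ^ 2 * (4 / η ^ 2))
    · exact (continuousOn_id.pow 2).mul ((hPdcont.mul (hucont.pow 2)).add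
        (hQdcont.mul (hvcont.pow 2)))
    · intro r hr
      have hr0 : (0:ℝ) ≤ r := le_of_lt hr
      have t1 : |deriv P r * (u r) ^ 2| ≤ CP * (C ^ 2 * Real.exp (-η * r) ^ 2) := by
        rw [abs_mul, abs_of_nonneg (sq_nonneg (u r))]
        exact mul_le_mul (hCP r hr0).2 (hsqu r hr0) (sq_nonneg _) hCP0
      have t2 : |deriv Q r * (v r) ^ 2| ≤ CQ * (C ^ 2 * Real.exp (-η * r) ^ 2) := by
        rw [abs_mul, abs_of_nonneg (sq_nonneg (v r))]
        exact mul_le_mul (hCQ r hr0).2 (hsqv r hr0) (sq_nonneg _) hCQ0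
      have hcoef : (0:ℝ) ≤ (CP + CQ) * C ^ 2 :=
        mul_nonneg (by linarith) (sq_nonneg C)
      calc |r ^ 2 * (deriv P r * (u r) ^ 2 + deriv Q r * (v r) ^ 2)|
          = r ^ 2 * |deriv P r * (u r) ^ 2 + deriv Q r * (v r) ^ 2| := by
            rw [abs_mul, abs_of_nonneg (sq_nonneg r)]
        _ ≤ r ^ 2 * (CP * (C ^ 2 * Real.exp (-η * r) ^ 2)
              + CQ * (C ^ 2 * Real.exp (-η * r) ^ 2)) :=
            mul_le_mul_of_nonneg_left ((abs_add_le _ _).trans (add_le_add t1 t2)) (sq_nonneg r)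
        _ = ((CP + CQ) * C ^ 2) * ((r ^ 2 * Real.exp (-η * r)) * Real.exp (-η * r)) := by ring
        _ ≤ ((CP + CQ) * C ^ 2) * ((4 / η ^ 2) * Real.exp (-η * r)) :=
            mul_le_mul_of_nonneg_left
              (mul_le_mul_of_nonneg_right (hr2E r hr0) (hE0 r).le) hcoef
        _ = (CP + CQ) * C ^ 2 * (4 / η ^ 2) * Real.exp (-η * r) := by ring
  -- the Pohozaev multiplier function
  set W : ℝ → ℝ := fun x => x ^ 2 *
      (((lam + P x) * u x ^ 2 + (lam + Q x) * v x ^ 2) / 2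
        - deriv u x ^ 2 / 2 - deriv v x ^ 2 / 2
        - (α * u x ^ 4 + γ * v x ^ 4) / 4
        - β * (u x ^ 2 * v x ^ 2) / 2) with hWdef
  have hWderiv : ∀ x ∈ Set.Ioi (0:ℝ), HasDerivAt W
      (x * ((lam + P x) * u x ^ 2 + (lam + Q x) * v x ^ 2)
        + x ^ 2 * (deriv P x * u x ^ 2 + deriv Q x * v x ^ 2) / 2
        - x * (α * u x ^ 4 + γ * v x ^ 4) / 2
        - β * (x * u x ^ 2 * v x ^ 2)) x := by
    intro r hr
    have hr0 : (0:ℝ) < r := hr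
    have hrne : r ≠ 0 := ne_of_gt hr0
    have HP := hPD r hr0
    have HQ := hQD r hr0
    have Hu := huD r hr0
    have Hv := hvD r hr0
    have Huu := huDD r hr0
    have Hvv := hvDD r hr0
    have hU2 : deriv (deriv u) r
        = (lam + P r) * u r - α * u r ^ 3 - β * u r * v r ^ 2 - deriv u r / r := by
      have h := hueq r hr0; linarith
    have hV2 : deriv (deriv v) r
        = (lam + Q r) * v r - γ * v r ^ 3 - β * u r ^ 2 * v r - deriv v r / r := by
      have h := hveq r hr0; linarith
    have H := (hasDerivAt_pow 2 r).mul
      ((((((((HP.const_add lam).mul (Hu.pow 2)).add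
            ((HQ.const_add lam).mul (Hv.pow 2))).div_const 2).sub
          ((Huu.pow 2).div_const 2)).sub
          ((Hvv.pow 2).div_const 2)).sub
          ((((Hu.pow 4).const_mul α).add ((Hv.pow 4).const_mul γ)).div_const 4)).sub
          ((((Hu.pow 2).mul (Hv.pow 2)).const_mul β).div_const 2))
    rw [hWdef]
    refine H.congr_deriv ?_
    rw [hU2, hV2]
    simp only [Pi.add_apply, Pi.sub_apply, Pi.mul_apply, Pi.pow_apply]
    push_cast
    field_simp
    ring
  -- bound on the bracket of W
  have hKa0 : (0:ℝ) ≤ (2 * |lam| + CP + CQ) * C ^ 2 / 2 + C ^ 2 + (|α| + |γ|) * C ^ 4 / 4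
      + |β| * C ^ 4 / 2 := by
    have := abs_nonneg lam; have := abs_nonneg α; have := abs_nonneg γ; have := abs_nonneg β
    have h1 : (0:ℝ) ≤ C ^ 2 := sq_nonneg C
    have h2 : (0:ℝ) ≤ C ^ 4 := by positivity
    nlinarith
  have hAbd : ∀ r ≥ (0:ℝ),
      |((lam + P r) * u r ^ 2 + (lam + Q r) * v r ^ 2) / 2
        - deriv u r ^ 2 / 2 - deriv v r ^ 2 / 2
        - (α * u r ^ 4 + γ * v r ^ 4) / 4
        - β * (u r ^ 2 * v r ^ 2) / 2|
      ≤ ((2 * |lam| + CP + CQ) * C ^ 2 / 2 + C ^ 2 + (|α| + |γ|) * C ^ 4 / 4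
          + |β| * C ^ 4 / 2) * Real.exp (-η * r) ^ 2 := by
    intro r hr0
    have t1 : |(lam + P r) * (u r) ^ 2| ≤ (|lam| + CP) * (C ^ 2 * Real.exp (-η * r) ^ 2) := by
      rw [abs_mul, abs_of_nonneg (sq_nonneg (u r))]
      exact mul_le_mul ((abs_add_le lam (P r)).trans (by linarith [(hCP r hr0).1]))
        (hsqu r hr0) (sq_nonneg _) (by positivity)
    have t2 : |(lam + Q r) * (v r) ^ 2| ≤ (|lam| + CQ) * (C ^ 2 * Real.exp (-η * r) ^ 2) := by
      rw [abs_mul, abs_of_nonneg (sq_nonneg (v r))]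
      exact mul_le_mul ((abs_add_le lam (Q r)).trans (by linarith [(hCQ r hr0).1]))
        (hsqv r hr0) (sq_nonneg _) (by positivity)
    have t3 := hsqu' r hr0
    have t4 := hsqv' r hr0
    have t5a : |α * (u r) ^ 4| ≤ |α| * (C ^ 4 * Real.exp (-η * r) ^ 2) := by
      rw [abs_mul, abs_of_nonneg (by positivity : (0:ℝ) ≤ (u r) ^ 4)]
      exact mul_le_mul_of_nonneg_left (hq4u r hr0) (abs_nonneg α)
    have t5b : |γ * (v r) ^ 4| ≤ |γ| * (C ^ 4 * Real.exp (-η * r) ^ 2) := by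
      rw [abs_mul, abs_of_nonneg (by positivity : (0:ℝ) ≤ (v r) ^ 4)]
      exact mul_le_mul_of_nonneg_left (hq4v r hr0) (abs_nonneg γ)
    have t6 : |β * ((u r) ^ 2 * (v r) ^ 2)| ≤ |β| * (C ^ 4 * Real.exp (-η * r) ^ 2) := by
      rw [abs_mul, abs_of_nonneg (by positivity : (0:ℝ) ≤ (u r) ^ 2 * (v r) ^ 2)]
      exact mul_le_mul_of_nonneg_left (huv r hr0) (abs_nonneg β)
    obtain ⟨l1, r1⟩ := abs_le.mp t1
    obtain ⟨l2, r2⟩ := abs_le.mp t2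
    obtain ⟨l5a, r5a⟩ := abs_le.mp t5a
    obtain ⟨l5b, r5b⟩ := abs_le.mp t5b
    obtain ⟨l6, r6⟩ := abs_le.mp t6
    have n3 := sq_nonneg (deriv u r)
    have n4 := sq_nonneg (deriv v r)
    rw [abs_le]
    constructor <;> nlinarith [sq_nonneg (Real.exp (-η * r)), sq_nonneg C]
  set Ka : ℝ := (2 * |lam| + CP + CQ) * C ^ 2 / 2 + C ^ 2 + (|α| + |γ|) * C ^ 4 / 4
      + |β| * C ^ 4 / 2 with hKadef
  have hWbd : ∀ r ≥ (0:ℝ), ‖W r‖ ≤ Ka * (r ^ 2 * Real.exp (-η * r) ^ 2) := by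
    intro r hr0
    have h1 := hAbd r hr0
    rw [hWdef]
    rw [Real.norm_eq_abs, abs_mul, abs_of_nonneg (sq_nonneg r)]
    calc r ^ 2 * |((lam + P r) * u r ^ 2 + (lam + Q r) * v r ^ 2) / 2
          - deriv u r ^ 2 / 2 - deriv v r ^ 2 / 2
          - (α * u r ^ 4 + γ * v r ^ 4) / 4
          - β * (u r ^ 2 * v r ^ 2) / 2|
        ≤ r ^ 2 * (Ka * Real.exp (-η * r) ^ 2) :=
          mul_le_mul_of_nonneg_left h1 (sq_nonneg r)
      _ = Ka * (r ^ 2 * Real.exp (-η * r) ^ 2) := by ring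
  -- W tends to 0 at infinity
  have hWtop : Filter.Tendsto W Filter.atTop (nhds 0) := by
    have hexp0 : Filter.Tendsto (fun r : ℝ => Real.exp (-η * r)) Filter.atTop (nhds 0) := by
      have h1 : Filter.Tendsto (fun r : ℝ => η * r) Filter.atTop Filter.atTop :=
        Filter.Tendsto.const_mul_atTop hη Filter.tendsto_id
      have h3 := Real.tendsto_exp_neg_atTop_nhds_zero.comp h1
      have : (fun r : ℝ => Real.exp (-η * r)) = (fun x : ℝ => Real.exp (-x)) ∘ fun r => η * r := by
        funext r
        simp [neg_mul]
      rw [this]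
      exact h3
    apply squeeze_zero_norm' (a := fun r : ℝ => (Ka * (4 / η ^ 2)) * Real.exp (-η * r))
    · filter_upwards [Filter.eventually_ge_atTop (0:ℝ)] with r hr0
      calc ‖W r‖ ≤ Ka * (r ^ 2 * Real.exp (-η * r) ^ 2) := hWbd r hr0
        _ = Ka * ((r ^ 2 * Real.exp (-η * r)) * Real.exp (-η * r)) := by ring
        _ ≤ Ka * ((4 / η ^ 2) * Real.exp (-η * r)) := by
            apply mul_le_mul_of_nonneg_left _ hKa0
            exact mul_le_mul_of_nonneg_right (hr2E r hr0) (hE0 r).le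
        _ = (Ka * (4 / η ^ 2)) * Real.exp (-η * r) := by ring
    · simpa using hexp0.const_mul (Ka * (4 / η ^ 2))
  -- W is continuous at 0 from the right
  have hW0 : W 0 = 0 := by rw [hWdef]; norm_num
  have hWcont : ContinuousWithinAt W (Set.Ici 0) 0 := by
    have htend : Filter.Tendsto W (nhdsWithin 0 (Set.Ici 0)) (nhds 0) := by
      apply squeeze_zero_norm' (a := fun r : ℝ => Ka * r ^ 2)
      · apply eventually_nhdsWithin_of_forall
        intro r hr0
        calc ‖W r‖ ≤ Ka * (r ^ 2 * Real.exp (-η * r) ^ 2) := hWbd r hr0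
          _ ≤ Ka * (r ^ 2 * 1) := by
              apply mul_le_mul_of_nonneg_left _ hKa0
              exact mul_le_mul_of_nonneg_left (hE2 r hr0) (sq_nonneg r)
          _ = Ka * r ^ 2 := by ring
      · have h : Filter.Tendsto (fun r : ℝ => Ka * r ^ 2) (nhdsWithin 0 (Set.Ici 0))
            (nhds (Ka * 0 ^ 2)) :=
          ((continuous_const.mul (continuous_pow 2)).tendsto 0).mono_left nhdsWithin_le_nhds
        simpa using h
    simpa [ContinuousWithinAt, hW0] using htend
  -- integrability of the combination
  have hIntg : IntegrableOn (fun x =>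
      x * ((lam + P x) * u x ^ 2 + (lam + Q x) * v x ^ 2)
        + x ^ 2 * (deriv P x * u x ^ 2 + deriv Q x * v x ^ 2) / 2
        - x * (α * u x ^ 4 + γ * v x ^ 4) / 2
        - β * (x * u x ^ 2 * v x ^ 2)) (Set.Ioi 0) :=
    ((hInt1.add (hInt4.div_const 2)).sub (hInt2.div_const 2)).sub (hInt3.const_mul β)
  have key := integral_Ioi_of_hasDerivAt_of_tendsto hWcont hWderiv hIntg hWtop
  have e3 : (∫ x in Set.Ioi (0:ℝ),
        (x * ((lam + P x) * u x ^ 2 + (lam + Q x) * v x ^ 2)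
          + x ^ 2 * (deriv P x * u x ^ 2 + deriv Q x * v x ^ 2) / 2
          - x * (α * u x ^ 4 + γ * v x ^ 4) / 2
          - β * (x * u x ^ 2 * v x ^ 2)))
      = (∫ x in Set.Ioi (0:ℝ),
          (x * ((lam + P x) * u x ^ 2 + (lam + Q x) * v x ^ 2)
            + x ^ 2 * (deriv P x * u x ^ 2 + deriv Q x * v x ^ 2) / 2
            - x * (α * u x ^ 4 + γ * v x ^ 4) / 2))
        - ∫ x in Set.Ioi (0:ℝ), β * (x * u x ^ 2 * v x ^ 2) :=
    MeasureTheory.integral_sub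
      ((hInt1.add (hInt4.div_const 2)).sub (hInt2.div_const 2)) (hInt3.const_mul β)
  have e2 : (∫ x in Set.Ioi (0:ℝ),
        (x * ((lam + P x) * u x ^ 2 + (lam + Q x) * v x ^ 2)
          + x ^ 2 * (deriv P x * u x ^ 2 + deriv Q x * v x ^ 2) / 2
          - x * (α * u x ^ 4 + γ * v x ^ 4) / 2))
      = (∫ x in Set.Ioi (0:ℝ),
          (x * ((lam + P x) * u x ^ 2 + (lam + Q x) * v x ^ 2)
            + x ^ 2 * (deriv P x * u x ^ 2 + deriv Q x * v x ^ 2) / 2))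
        - ∫ x in Set.Ioi (0:ℝ), x * (α * u x ^ 4 + γ * v x ^ 4) / 2 :=
    MeasureTheory.integral_sub (hInt1.add (hInt4.div_const 2)) (hInt2.div_const 2)
  have e1 : (∫ x in Set.Ioi (0:ℝ),
        (x * ((lam + P x) * u x ^ 2 + (lam + Q x) * v x ^ 2)
          + x ^ 2 * (deriv P x * u x ^ 2 + deriv Q x * v x ^ 2) / 2))
      = (∫ x in Set.Ioi (0:ℝ), x * ((lam + P x) * u x ^ 2 + (lam + Q x) * v x ^ 2))
        + ∫ x in Set.Ioi (0:ℝ), x ^ 2 * (deriv P x * u x ^ 2 + deriv Q x * v x ^ 2) / 2 :=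
    MeasureTheory.integral_add hInt1 (hInt4.div_const 2)
  have e4 : (∫ x in Set.Ioi (0:ℝ), x ^ 2 * (deriv P x * u x ^ 2 + deriv Q x * v x ^ 2) / 2)
      = (∫ x in Set.Ioi (0:ℝ), x ^ 2 * (deriv P x * u x ^ 2 + deriv Q x * v x ^ 2)) / 2 :=
    MeasureTheory.integral_div 2 _
  have e5 : (∫ x in Set.Ioi (0:ℝ), x * (α * u x ^ 4 + γ * v x ^ 4) / 2)
      = (∫ x in Set.Ioi (0:ℝ), x * (α * u x ^ 4 + γ * v x ^ 4)) / 2 :=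
    MeasureTheory.integral_div 2 _
  have e6 : (∫ x in Set.Ioi (0:ℝ), β * (x * u x ^ 2 * v x ^ 2))
      = β * ∫ x in Set.Ioi (0:ℝ), x * u x ^ 2 * v x ^ 2 :=
    MeasureTheory.integral_const_mul β _
  rw [e3, e2, e1, e4, e5, e6] at key
  linear_combination 2 * key + 2 * hW0
end

section
/- Let λ, α, β, γ ∈ ℝ, let P, Q : [0,∞) → ℝ be continuously differentiable with P, Q, P', Q' bounded, and let u, v : [0,∞) → ℝ be twice continuously differentiable functions with u'(0) = v'(0) = 0, satisfying -u''(r) - u'(r)/r + (λ + P(r))·u(r) = α·u(r)³ + β·u(r)·v(r)² and -v''(r) - v'(r)/r + (λ + Q(r))·v(r) = γ·v(r)³ + β·u(r)²·v(r) for all r > 0, and suppose there exist constants C, η > 0 such that |u(r)| + |u'(r)| + |v(r)| + |v'(r)| ≤ C·e^{-ηr} for all r ≥ 0. Then the Pohozaev identity 2·∫₀^∞ r·(|u'(r)|² + |v'(r)|²) dr - ∫₀^∞ r²·(P'(r)·u(r)² + Q'(r)·v(r)²) dr = ∫₀^∞ r·(α·u(r)⁴ + γ·v(r)⁴ + 2β·u(r)²·v(r)²)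 dr holds. -/
open MeasureTheory

set_option maxHeartbeats 1000000 in
private lemma sq_le_aux {a C E : ℝ} (h : |a| ≤ C * E) (hE : 0 ≤ E) (hE1 : E ≤ 1) :
    a ^ 2 ≤ C ^ 2 * E := by
  have h0 : 0 ≤ C * E := (abs_nonneg a).trans h
  have h1 : a ^ 2 ≤ C ^ 2 * E ^ 2 := by nlinarith [sq_abs a, mul_le_mul h h (abs_nonneg a) h0]
  nlinarith [mul_nonneg (mul_nonneg (sq_nonneg C) hE) (sub_nonneg.2 hE1)]

private lemma abs_mul_le_aux {a b C E : ℝ} (ha : |a| ≤ C * E) (hb : |b| ≤ C * E)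
    (hE : 0 ≤ E) (hE1 : E ≤ 1) : |a * b| ≤ C ^ 2 * E := by
  have h0 : 0 ≤ C * E := (abs_nonneg a).trans ha
  rw [abs_mul]
  nlinarith [mul_le_mul ha hb (abs_nonneg b) h0,
    mul_nonneg (mul_nonneg (sq_nonneg C) hE) (sub_nonneg.2 hE1)]

private lemma pow4_le_aux {a C E : ℝ} (h : |a| ≤ C * E) (hE : 0 ≤ E) (hE1 : E ≤ 1) :
    a ^ 4 ≤ C ^ 4 * E := by
  have h2 : |a ^ 2| ≤ C ^ 2 * E := by
    rw [abs_of_nonneg (sq_nonneg a)]; exact sq_le_aux h hE hE1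
  calc a ^ 4 = (a ^ 2) ^ 2 := by ring
  _ ≤ (C ^ 2) ^ 2 * E := sq_le_aux h2 hE hE1
  _ = C ^ 4 * E := by ring

private lemma sqsq_le_aux {a b C E : ℝ} (ha : |a| ≤ C * E) (hb : |b| ≤ C * E)
    (hE : 0 ≤ E) (hE1 : E ≤ 1) : a ^ 2 * b ^ 2 ≤ C ^ 4 * E := by
  have hab : |a * b| ≤ C ^ 2 * E := abs_mul_le_aux ha hb hE hE1
  calc a ^ 2 * b ^ 2 = (a * b) ^ 2 := by ring
  _ ≤ (C ^ 2) ^ 2 * E := sq_le_aux hab hE hE1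
  _ = C ^ 4 * E := by ring

private lemma integrableOn_of_poly_exp_bound {η M : ℝ} (hη : 0 < η) {f : ℝ → ℝ}
    (hf : ContinuousOn f (Set.Ioi 0))
    (hb : ∀ r ∈ Set.Ioi (0:ℝ), |f r| ≤ M * ((r + r ^ 2) * Real.exp (-η * r))) :
    IntegrableOn f (Set.Ioi 0) := by
  have h1 : IntegrableOn (fun x : ℝ => x ^ (1:ℝ) * Real.exp (-η * x ^ (1:ℝ))) (Set.Ioi 0) :=
    integrableOn_rpow_mul_exp_neg_mul_rpow (by norm_num) one_pos hη
  have h2 : IntegrableOn (fun x : ℝ => x ^ (2:ℝ) * Real.exp (-η * x ^ (1:ℝ))) (Set.Ioi 0) :=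
    integrableOn_rpow_mul_exp_neg_mul_rpow (by norm_num) one_pos hη
  have h3 : IntegrableOn (fun x : ℝ => M * ((x + x ^ 2) * Real.exp (-η * x))) (Set.Ioi 0) := by
    have h12 : IntegrableOn
        (fun x : ℝ => M * (x ^ (1:ℝ) * Real.exp (-η * x ^ (1:ℝ))
          + x ^ (2:ℝ) * Real.exp (-η * x ^ (1:ℝ)))) (Set.Ioi 0) := (h1.add h2).const_mul M
    refine h12.congr_fun (fun x hx => ?_) measurableSet_Ioi
    have hx0 : (0:ℝ) < x := hx
    beta_reduce
    rw [Real.rpow_one, show (2:ℝ) = ((2:ℕ):ℝ) by norm_num, Real.rpow_natCast]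
    ring
  refine Integrable.mono' h3 (hf.aestronglyMeasurable measurableSet_Ioi) ?_
  refine (ae_restrict_iff' measurableSet_Ioi).2 (Filter.Eventually.of_forall fun x hx => ?_)
  rw [Real.norm_eq_abs]
  exact hb x hx

private lemma tendsto_poly_exp_aux {η : ℝ} (K : ℝ) (hη : 0 < η) :
    Filter.Tendsto (fun r : ℝ => K * ((r + r ^ 2) * Real.exp (-η * r)))
      Filter.atTop (nhds 0) := by
  have h1 : Filter.Tendsto
      (fun y : ℝ => K / η * (y ^ 1 * Real.exp (-y)) + K / η ^ 2 * (y ^ 2 * Real.exp (-y)))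
      Filter.atTop (nhds 0) := by
    have ha := (Real.tendsto_pow_mul_exp_neg_atTop_nhds_zero 1).const_mul (K / η)
    have hb := (Real.tendsto_pow_mul_exp_neg_atTop_nhds_zero 2).const_mul (K / η ^ 2)
    simpa using ha.add hb
  have h2 : Filter.Tendsto (fun r : ℝ => η * r) Filter.atTop Filter.atTop :=
    Filter.Tendsto.const_mul_atTop hη Filter.tendsto_id
  refine (h1.comp h2).congr fun r => ?_
  have hηne : η ≠ 0 := hη.ne'
  simp only [Function.comp]
  rw [show -(η * r) = -η * r by ring]
  field_simp

set_option maxHeartbeats 2000000 in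
theorem radial_pohozaev_identity (lam α β γ : ℝ) (P Q u v : ℝ → ℝ)
    (hP : ContDiffOn ℝ 1 P (Set.Ici 0)) (hQ : ContDiffOn ℝ 1 Q (Set.Ici 0))
    (hPbdd : ∃ C : ℝ, ∀ r ≥ (0:ℝ), |P r| ≤ C ∧ |deriv P r| ≤ C)
    (hQbdd : ∃ C : ℝ, ∀ r ≥ (0:ℝ), |Q r| ≤ C ∧ |deriv Q r| ≤ C)
    (hu : ContDiffOn ℝ 2 u (Set.Ici 0)) (hv : ContDiffOn ℝ 2 v (Set.Ici 0))
    (hu0 : deriv u 0 = 0) (hv0 : deriv v 0 = 0)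
    (hueq : ∀ r > (0:ℝ), -(deriv (deriv u) r) - deriv u r / r + (lam + P r) * u r
      = α * (u r) ^ 3 + β * u r * (v r) ^ 2)
    (hveq : ∀ r > (0:ℝ), -(deriv (deriv v) r) - deriv v r / r + (lam + Q r) * v r
      = γ * (v r) ^ 3 + β * (u r) ^ 2 * v r)
    (hdecay : ∃ C > (0:ℝ), ∃ η > (0:ℝ), ∀ r ≥ (0:ℝ),
      |u r| + |deriv u r| + |v r| + |deriv v r| ≤ C * Real.exp (-η * r)) :
    2 * (∫ r in Set.Ioi (0:ℝ), r * (|deriv u r| ^ 2 + |deriv v r| ^ 2))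
        - (∫ r in Set.Ioi (0:ℝ), r ^ 2 * (deriv P r * (u r) ^ 2 + deriv Q r * (v r) ^ 2))
      = ∫ r in Set.Ioi (0:ℝ), r * (α * (u r) ^ 4 + γ * (v r) ^ 4
          + 2 * β * (u r) ^ 2 * (v r) ^ 2) := by
  obtain ⟨C, hC, η, hη, hdec⟩ := hdecay
  obtain ⟨CP, hCPb⟩ := hPbdd
  obtain ⟨CQ, hCQb⟩ := hQbdd
  have hCP0 : 0 ≤ CP := (abs_nonneg _).trans (hCPb 0 le_rfl).2
  have hCQ0 : 0 ≤ CQ := (abs_nonneg _).trans (hCQb 0 le_rfl).2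
  have hub : ∀ r ≥ (0:ℝ), |u r| ≤ C * Real.exp (-η * r) := fun r hr => by
    have h := hdec r hr
    have := abs_nonneg (deriv u r); have := abs_nonneg (v r); have := abs_nonneg (deriv v r)
    linarith
  have hu'b : ∀ r ≥ (0:ℝ), |deriv u r| ≤ C * Real.exp (-η * r) := fun r hr => by
    have h := hdec r hr
    have := abs_nonneg (u r); have := abs_nonneg (v r); have := abs_nonneg (deriv v r)
    linarith
  have hvb : ∀ r ≥ (0:ℝ), |v r| ≤ C * Real.exp (-η * r) := fun r hr => by
    have h := hdec r hr
    have := abs_nonneg (u r); have := abs_nonneg (deriv u r); have := abs_nonneg (deriv v r)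
    linarith
  have hv'b : ∀ r ≥ (0:ℝ), |deriv v r| ≤ C * Real.exp (-η * r) := fun r hr => by
    have h := hdec r hr
    have := abs_nonneg (u r); have := abs_nonneg (deriv u r); have := abs_nonneg (v r)
    linarith
  have hE0 : ∀ r : ℝ, 0 ≤ Real.exp (-η * r) := fun r => (Real.exp_pos _).le
  have hE1 : ∀ r ≥ (0:ℝ), Real.exp (-η * r) ≤ 1 := fun r hr => by
    rw [show (1:ℝ) = Real.exp 0 by rw [Real.exp_zero]]
    exact Real.exp_le_exp.2 (by nlinarith)
  -- differentiability facts
  have hUc : ContDiffOn ℝ 1 (deriv u) (Set.Ioi 0) :=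
    (hu.mono Set.Ioi_subset_Ici_self).deriv_of_isOpen isOpen_Ioi (by norm_num)
  have hVc : ContDiffOn ℝ 1 (deriv v) (Set.Ioi 0) :=
    (hv.mono Set.Ioi_subset_Ici_self).deriv_of_isOpen isOpen_Ioi (by norm_num)
  have hU1 : ∀ r > (0:ℝ), HasDerivAt u (deriv u r) r := fun r hr =>
    ((hu.contDiffAt (Ici_mem_nhds hr)).differentiableAt (by norm_num)).hasDerivAt
  have hV1 : ∀ r > (0:ℝ), HasDerivAt v (deriv v r) r := fun r hr =>
    ((hv.contDiffAt (Ici_mem_nhds hr)).differentiableAt (by norm_num)).hasDerivAt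
  have hU2 : ∀ r > (0:ℝ), HasDerivAt (deriv u) (deriv (deriv u) r) r := fun r hr =>
    ((hUc.contDiffAt (isOpen_Ioi.mem_nhds hr)).differentiableAt one_ne_zero).hasDerivAt
  have hV2 : ∀ r > (0:ℝ), HasDerivAt (deriv v) (deriv (deriv v) r) r := fun r hr =>
    ((hVc.contDiffAt (isOpen_Ioi.mem_nhds hr)).differentiableAt one_ne_zero).hasDerivAt
  have hP1 : ∀ r > (0:ℝ), HasDerivAt P (deriv P r) r := fun r hr =>
    ((hP.contDiffAt (Ici_mem_nhds hr)).differentiableAt one_ne_zero).hasDerivAt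
  have hQ1 : ∀ r > (0:ℝ), HasDerivAt Q (deriv Q r) r := fun r hr =>
    ((hQ.contDiffAt (Ici_mem_nhds hr)).differentiableAt one_ne_zero).hasDerivAt
  have hPc : ContinuousOn (deriv P) (Set.Ioi 0) :=
    (hP.mono Set.Ioi_subset_Ici_self).continuousOn_deriv_of_isOpen isOpen_Ioi le_rfl
  have hQc : ContinuousOn (deriv Q) (Set.Ioi 0) :=
    (hQ.mono Set.Ioi_subset_Ici_self).continuousOn_deriv_of_isOpen isOpen_Ioi le_rfl
  have hUcont : ContinuousOn u (Set.Ioi 0) := hu.continuousOn.mono Set.Ioi_subset_Ici_self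
  have hVcont : ContinuousOn v (Set.Ioi 0) := hv.continuousOn.mono Set.Ioi_subset_Ici_self
  have hU'cont : ContinuousOn (deriv u) (Set.Ioi 0) := hUc.continuousOn
  have hV'cont : ContinuousOn (deriv v) (Set.Ioi 0) := hVc.continuousOn
  -- integrability of the three integrands
  have hi1 : IntegrableOn (fun r : ℝ => r * (|deriv u r| ^ 2 + |deriv v r| ^ 2))
      (Set.Ioi 0) := by
    refine integrableOn_of_poly_exp_bound (M := 2 * C ^ 2) hη
      (continuousOn_id.mul ((hU'cont.abs.pow 2).add (hV'cont.abs.pow 2)))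
      (fun r hr => ?_)
    have hr0 : (0:ℝ) < r := hr
    have a2 : |deriv u r| ^ 2 ≤ C ^ 2 * Real.exp (-η * r) := by
      rw [sq_abs]; exact sq_le_aux (hu'b r hr0.le) (hE0 r) (hE1 r hr0.le)
    have b2 : |deriv v r| ^ 2 ≤ C ^ 2 * Real.exp (-η * r) := by
      rw [sq_abs]; exact sq_le_aux (hv'b r hr0.le) (hE0 r) (hE1 r hr0.le)
    rw [abs_mul, abs_of_nonneg hr0.le, abs_of_nonneg (by positivity)]
    nlinarith [mul_le_mul_of_nonneg_left a2 hr0.le, mul_le_mul_of_nonneg_left b2 hr0.le,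
      mul_nonneg (mul_nonneg (sq_nonneg C) (sq_nonneg r)) (hE0 r)]
  have hi2 : IntegrableOn
      (fun r : ℝ => r ^ 2 * (deriv P r * (u r) ^ 2 + deriv Q r * (v r) ^ 2)) (Set.Ioi 0) := by
    refine integrableOn_of_poly_exp_bound (M := (CP + CQ) * C ^ 2) hη
      ((continuousOn_id.pow 2).mul
        ((hPc.mul (hUcont.pow 2)).add (hQc.mul (hVcont.pow 2)))) (fun r hr => ?_)
    have hr0 : (0:ℝ) < r := hr
    have au : (u r) ^ 2 ≤ C ^ 2 * Real.exp (-η * r) :=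
      sq_le_aux (hub r hr0.le) (hE0 r) (hE1 r hr0.le)
    have av : (v r) ^ 2 ≤ C ^ 2 * Real.exp (-η * r) :=
      sq_le_aux (hvb r hr0.le) (hE0 r) (hE1 r hr0.le)
    have hin : |deriv P r * (u r) ^ 2 + deriv Q r * (v r) ^ 2|
        ≤ CP * (C ^ 2 * Real.exp (-η * r)) + CQ * (C ^ 2 * Real.exp (-η * r)) := by
      calc |deriv P r * (u r) ^ 2 + deriv Q r * (v r) ^ 2|
          ≤ |deriv P r * (u r) ^ 2| + |deriv Q r * (v r) ^ 2| := abs_add_le _ _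
        _ = |deriv P r| * (u r) ^ 2 + |deriv Q r| * (v r) ^ 2 := by
            rw [abs_mul, abs_mul, abs_pow, abs_pow, sq_abs, sq_abs]
        _ ≤ CP * (C ^ 2 * Real.exp (-η * r)) + CQ * (C ^ 2 * Real.exp (-η * r)) :=
            add_le_add (mul_le_mul (hCPb r hr0.le).2 au (sq_nonneg _) hCP0)
              (mul_le_mul (hCQb r hr0.le).2 av (sq_nonneg _) hCQ0)
    rw [abs_mul, abs_of_nonneg (sq_nonneg r)]
    have := mul_le_mul_of_nonneg_left hin (sq_nonneg r)
    nlinarith [mul_nonneg (mul_nonneg (mul_nonneg (add_nonneg hCP0 hCQ0) (sq_nonneg C))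
      hr0.le) (hE0 r)]
  have hi3 : IntegrableOn (fun r : ℝ => r * (α * (u r) ^ 4 + γ * (v r) ^ 4
      + 2 * β * (u r) ^ 2 * (v r) ^ 2)) (Set.Ioi 0) := by
    refine integrableOn_of_poly_exp_bound (M := (|α| + |γ| + 2 * |β|) * C ^ 4) hη
      (continuousOn_id.mul (((continuousOn_const.mul (hUcont.pow 4)).add
        (continuousOn_const.mul (hVcont.pow 4))).add
        ((continuousOn_const.mul (hUcont.pow 2)).mul (hVcont.pow 2)))) (fun r hr => ?_)
    have hr0 : (0:ℝ) < r := hr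
    have hu4 := pow4_le_aux (hub r hr0.le) (hE0 r) (hE1 r hr0.le)
    have hv4 := pow4_le_aux (hvb r hr0.le) (hE0 r) (hE1 r hr0.le)
    have huv := sqsq_le_aux (hub r hr0.le) (hvb r hr0.le) (hE0 r) (hE1 r hr0.le)
    have hin : |α * (u r) ^ 4 + γ * (v r) ^ 4 + 2 * β * (u r) ^ 2 * (v r) ^ 2|
        ≤ |α| * (C ^ 4 * Real.exp (-η * r)) + |γ| * (C ^ 4 * Real.exp (-η * r))
          + 2 * |β| * (C ^ 4 * Real.exp (-η * r)) := by
      calc |α * (u r) ^ 4 + γ * (v r) ^ 4 + 2 * β * (u r) ^ 2 * (v r) ^ 2|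
          ≤ |α * (u r) ^ 4| + |γ * (v r) ^ 4| + |2 * β * (u r) ^ 2 * (v r) ^ 2| :=
            (abs_add_le _ _).trans (add_le_add_left (abs_add_le _ _) _)
        _ = |α| * (u r) ^ 4 + |γ| * (v r) ^ 4 + 2 * |β| * ((u r) ^ 2 * (v r) ^ 2) := by
            rw [abs_mul, abs_mul, abs_mul, abs_mul, abs_mul,
              abs_of_nonneg (by positivity : (0:ℝ) ≤ (u r) ^ 4),
              abs_of_nonneg (by positivity : (0:ℝ) ≤ (v r) ^ 4),
              abs_of_nonneg (sq_nonneg (u r)), abs_of_nonneg (sq_nonneg (v r)),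
              (by norm_num : |(2:ℝ)| = 2)]
            ring
        _ ≤ |α| * (C ^ 4 * Real.exp (-η * r)) + |γ| * (C ^ 4 * Real.exp (-η * r))
              + 2 * |β| * (C ^ 4 * Real.exp (-η * r)) :=
            add_le_add (add_le_add
              (mul_le_mul_of_nonneg_left hu4 (abs_nonneg α))
              (mul_le_mul_of_nonneg_left hv4 (abs_nonneg γ)))
              (mul_le_mul_of_nonneg_left huv (by positivity))
    rw [abs_mul, abs_of_nonneg hr0.le]
    have := mul_le_mul_of_nonneg_left hin hr0.le
    nlinarith [mul_nonneg (mul_nonneg (mul_nonneg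
      (by positivity : (0:ℝ) ≤ |α| + |γ| + 2 * |β|) (by positivity : (0:ℝ) ≤ C ^ 4))
      (sq_nonneg r)) (hE0 r)]
  -- the key constant for the bound on W
  set K : ℝ := C ^ 2 * (3 + |lam| + CP + |lam| + CQ) + C ^ 4 * (|α| + |γ| + |β|) with hK
  -- pointwise bound on W
  have hWb : ∀ r ≥ (0:ℝ), |r ^ 2 * ((deriv u r) ^ 2 + (deriv v r) ^ 2) / 2
      - r ^ 2 * ((lam + P r) * (u r) ^ 2 + (lam + Q r) * (v r) ^ 2) / 2
      + r * (u r * deriv u r + v r * deriv v r)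
      + r ^ 2 * (α * (u r) ^ 4 / 4 + γ * (v r) ^ 4 / 4 + β * (u r) ^ 2 * (v r) ^ 2 / 2)| ≤ K * ((r + r ^ 2) * Real.exp (-η * r)) := by
    intro r hr
    set E := Real.exp (-η * r) with hEdef
    have hE0' : 0 ≤ E := hE0 r
    have hE1' : E ≤ 1 := hE1 r hr
    have hu2 := sq_le_aux (hub r hr) hE0' hE1'
    have hv2 := sq_le_aux (hvb r hr) hE0' hE1'
    have hu'2 := sq_le_aux (hu'b r hr) hE0' hE1'
    have hv'2 := sq_le_aux (hv'b r hr) hE0' hE1'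
    have hu4 := pow4_le_aux (hub r hr) hE0' hE1'
    have hv4 := pow4_le_aux (hvb r hr) hE0' hE1'
    have huv := sqsq_le_aux (hub r hr) (hvb r hr) hE0' hE1'
    have huu' := abs_mul_le_aux (hub r hr) (hu'b r hr) hE0' hE1'
    have hvv' := abs_mul_le_aux (hvb r hr) (hv'b r hr) hE0' hE1'
    have hT1 : |r ^ 2 * ((deriv u r) ^ 2 + (deriv v r) ^ 2) / 2| ≤ C ^ 2 * (r ^ 2 * E) := by
      rw [abs_of_nonneg (by positivity)]
      nlinarith [mul_le_mul_of_nonneg_left hu'2 (sq_nonneg r),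
        mul_le_mul_of_nonneg_left hv'2 (sq_nonneg r)]
    have hT2 : |r ^ 2 * ((lam + P r) * (u r) ^ 2 + (lam + Q r) * (v r) ^ 2) / 2|
        ≤ (|lam| + CP + (|lam| + CQ)) * C ^ 2 * (r ^ 2 * E) / 2 := by
      have hin : |(lam + P r) * (u r) ^ 2 + (lam + Q r) * (v r) ^ 2|
          ≤ (|lam| + CP) * (C ^ 2 * E) + (|lam| + CQ) * (C ^ 2 * E) := by
        calc |(lam + P r) * (u r) ^ 2 + (lam + Q r) * (v r) ^ 2|
            ≤ |(lam + P r) * (u r) ^ 2| + |(lam + Q r) * (v r) ^ 2| := abs_add_le _ _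
          _ = |lam + P r| * (u r) ^ 2 + |lam + Q r| * (v r) ^ 2 := by
              rw [abs_mul, abs_mul, abs_pow, abs_pow, sq_abs, sq_abs]
          _ ≤ (|lam| + CP) * (C ^ 2 * E) + (|lam| + CQ) * (C ^ 2 * E) := by
              refine add_le_add (mul_le_mul ?_ hu2 (sq_nonneg _) (by positivity))
                (mul_le_mul ?_ hv2 (sq_nonneg _) (by positivity))
              · exact (abs_add_le _ _).trans (by linarith [(hCPb r hr).1])
              · exact (abs_add_le _ _).trans (by linarith [(hCQb r hr).1])
      rw [abs_div, abs_mul, abs_of_nonneg (sq_nonneg r),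
        abs_of_nonneg (by norm_num : (0:ℝ) ≤ 2)]
      calc r ^ 2 * |(lam + P r) * (u r) ^ 2 + (lam + Q r) * (v r) ^ 2| / 2
          ≤ r ^ 2 * ((|lam| + CP) * (C ^ 2 * E) + (|lam| + CQ) * (C ^ 2 * E)) / 2 := by
            gcongr
        _ = (|lam| + CP + (|lam| + CQ)) * C ^ 2 * (r ^ 2 * E) / 2 := by ring
    have hT3 : |r * (u r * deriv u r + v r * deriv v r)| ≤ 2 * C ^ 2 * (r * E) := by
      rw [abs_mul, abs_of_nonneg hr]
      calc r * |u r * deriv u r + v r * deriv v r|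
          ≤ r * (|u r * deriv u r| + |v r * deriv v r|) := by
            gcongr; exact abs_add_le _ _
        _ ≤ r * (C ^ 2 * E + C ^ 2 * E) := by gcongr
        _ = 2 * C ^ 2 * (r * E) := by ring
    have hT4 : |r ^ 2 * (α * (u r) ^ 4 / 4 + γ * (v r) ^ 4 / 4
          + β * (u r) ^ 2 * (v r) ^ 2 / 2)|
        ≤ (|α| + |γ| + |β|) * C ^ 4 * (r ^ 2 * E) := by
      rw [abs_mul, abs_of_nonneg (sq_nonneg r)]
      have hin : |α * (u r) ^ 4 / 4 + γ * (v r) ^ 4 / 4 + β * (u r) ^ 2 * (v r) ^ 2 / 2|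
          ≤ |α| * (C ^ 4 * E) + |γ| * (C ^ 4 * E) + |β| * (C ^ 4 * E) := by
        calc |α * (u r) ^ 4 / 4 + γ * (v r) ^ 4 / 4 + β * (u r) ^ 2 * (v r) ^ 2 / 2|
            ≤ |α * (u r) ^ 4 / 4| + |γ * (v r) ^ 4 / 4| + |β * (u r) ^ 2 * (v r) ^ 2 / 2|
              := (abs_add_le _ _).trans (add_le_add_left (abs_add_le _ _) _)
          _ ≤ |α| * (u r) ^ 4 + |γ| * (v r) ^ 4 + |β| * ((u r) ^ 2 * (v r) ^ 2) := by
              rw [abs_div, abs_div, abs_div, abs_mul, abs_mul, abs_mul, abs_mul,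
                abs_of_nonneg (by positivity : (0:ℝ) ≤ (u r) ^ 4),
                abs_of_nonneg (by positivity : (0:ℝ) ≤ (v r) ^ 4),
                abs_of_nonneg (sq_nonneg (u r)), abs_of_nonneg (sq_nonneg (v r)),
                (by norm_num : |(4:ℝ)| = 4), (by norm_num : |(2:ℝ)| = 2)]
              nlinarith [mul_nonneg (abs_nonneg α) (by positivity : (0:ℝ) ≤ (u r) ^ 4),
                mul_nonneg (abs_nonneg γ) (by positivity : (0:ℝ) ≤ (v r) ^ 4),
                mul_nonneg (abs_nonneg β) (mul_nonneg (sq_nonneg (u r)) (sq_nonneg (v r)))]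
          _ ≤ |α| * (C ^ 4 * E) + |γ| * (C ^ 4 * E) + |β| * (C ^ 4 * E) := by
              gcongr <;> positivity
      refine (mul_le_mul_of_nonneg_left hin (sq_nonneg r)).trans (le_of_eq (by ring))
    have htot := (abs_add_le _ _).trans (add_le_add ((abs_add_le _ _).trans
      (add_le_add ((abs_sub _ _).trans (add_le_add hT1 hT2)) hT3)) hT4)
    refine htot.trans ?_
    have hrE : 0 ≤ r * E := mul_nonneg hr hE0'
    have hr2E : 0 ≤ r ^ 2 * E := mul_nonneg (sq_nonneg r) hE0'
    rw [hK]
    nlinarith [mul_nonneg (mul_nonneg (sq_nonneg C) (abs_nonneg lam)) hrE,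
      mul_nonneg (mul_nonneg (sq_nonneg C) hCP0) hrE,
      mul_nonneg (mul_nonneg (sq_nonneg C) hCQ0) hrE,
      mul_nonneg (mul_nonneg (sq_nonneg C) (abs_nonneg lam)) hr2E,
      mul_nonneg (mul_nonneg (sq_nonneg C) hCP0) hr2E,
      mul_nonneg (mul_nonneg (sq_nonneg C) hCQ0) hr2E,
      mul_nonneg (mul_nonneg (pow_nonneg hC.le 4) (abs_nonneg α)) hrE,
      mul_nonneg (mul_nonneg (pow_nonneg hC.le 4) (abs_nonneg γ)) hrE,
      mul_nonneg (mul_nonneg (pow_nonneg hC.le 4) (abs_nonneg β)) hrE,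
      mul_nonneg (sq_nonneg C) hrE, mul_nonneg (sq_nonneg C) hr2E]
  -- FTC on (0, ∞) for W
  have key := integral_Ioi_of_hasDerivAt_of_tendsto (a := (0:ℝ)) (m := (0:ℝ))
    (f := fun x : ℝ => x ^ 2 * ((deriv u x) ^ 2 + (deriv v x) ^ 2) / 2
      - x ^ 2 * ((lam + P x) * (u x) ^ 2 + (lam + Q x) * (v x) ^ 2) / 2
      + x * (u x * deriv u x + v x * deriv v x)
      + x ^ 2 * (α * (u x) ^ 4 / 4 + γ * (v x) ^ 4 / 4 + β * (u x) ^ 2 * (v x) ^ 2 / 2))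
    (f' := fun r : ℝ => r * (|deriv u r| ^ 2 + |deriv v r| ^ 2)
      - r ^ 2 * (deriv P r * (u r) ^ 2 + deriv Q r * (v r) ^ 2) / 2
      - r * (α * (u r) ^ 4 + γ * (v r) ^ 4 + 2 * β * (u r) ^ 2 * (v r) ^ 2) / 2)
    ?hcont ?hderiv ?hint ?htends
  case hcont =>
    have h0 : (fun x : ℝ => x ^ 2 * ((deriv u x) ^ 2 + (deriv v x) ^ 2) / 2
      - x ^ 2 * ((lam + P x) * (u x) ^ 2 + (lam + Q x) * (v x) ^ 2) / 2
      + x * (u x * deriv u x + v x * deriv v x)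
      + x ^ 2 * (α * (u x) ^ 4 / 4 + γ * (v x) ^ 4 / 4 + β * (u x) ^ 2 * (v x) ^ 2 / 2)) 0 = 0 := by norm_num
    have htend : Filter.Tendsto (fun x : ℝ => x ^ 2 * ((deriv u x) ^ 2 + (deriv v x) ^ 2) / 2
      - x ^ 2 * ((lam + P x) * (u x) ^ 2 + (lam + Q x) * (v x) ^ 2) / 2
      + x * (u x * deriv u x + v x * deriv v x)
      + x ^ 2 * (α * (u x) ^ 4 / 4 + γ * (v x) ^ 4 / 4 + β * (u x) ^ 2 * (v x) ^ 2 / 2))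
        (nhdsWithin 0 (Set.Ici 0)) (nhds 0) := by
      refine squeeze_zero_norm'
        (a := fun r : ℝ => K * ((r + r ^ 2) * Real.exp (-η * r))) ?_ ?_
      · filter_upwards [self_mem_nhdsWithin] with r hr
        simpa [Real.norm_eq_abs] using hWb r hr
      · have hcont2 : Continuous fun r : ℝ => K * ((r + r ^ 2) * Real.exp (-η * r)) := by
          continuity
        have := (hcont2.tendsto 0).mono_left
          (nhdsWithin_le_nhds : nhdsWithin (0:ℝ) (Set.Ici 0) ≤ nhds 0)
        simpa using this
    show Filter.Tendsto _ _ (nhds ((fun x : ℝ => x ^ 2 * ((deriv u x) ^ 2 + (deriv v x) ^ 2) / 2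
      - x ^ 2 * ((lam + P x) * (u x) ^ 2 + (lam + Q x) * (v x) ^ 2) / 2
      + x * (u x * deriv u x + v x * deriv v x)
      + x ^ 2 * (α * (u x) ^ 4 / 4 + γ * (v x) ^ 4 / 4 + β * (u x) ^ 2 * (v x) ^ 2 / 2)) 0))
    rw [h0]
    exact htend
  case hderiv =>
    intro r hr
    have hr0 : (0:ℝ) < r := hr
    have hu1 := hU1 r hr0
    have hu2 := hU2 r hr0
    have hv1 := hV1 r hr0
    have hv2 := hV2 r hr0
    have hp1 := hP1 r hr0
    have hq1 := hQ1 r hr0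
    have hx2 : HasDerivAt (fun x : ℝ => x ^ 2) (2 * r) r := by
      simpa using hasDerivAt_pow 2 r
    have h1 := (hx2.mul ((hu2.pow 2).add (hv2.pow 2))).div_const 2
    have h2 := (hx2.mul ((((hasDerivAt_const r lam).add hp1).mul (hu1.pow 2)).add
      (((hasDerivAt_const r lam).add hq1).mul (hv1.pow 2)))).div_const 2
    have h3 := (hasDerivAt_id r).mul ((hu1.mul hu2).add (hv1.mul hv2))
    have h4 := hx2.mul (((((hu1.pow 4).const_mul α).div_const 4).add
      (((hv1.pow 4).const_mul γ).div_const 4)).add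
      ((((hu1.pow 2).const_mul β).mul (hv1.pow 2)).div_const 2))
    have hW := ((h1.sub h2).add h3).add h4
    convert hW using 1
    · rfl
    have hu2eq : deriv (deriv u) r
        = (lam + P r) * u r - α * (u r) ^ 3 - β * u r * (v r) ^ 2 - deriv u r / r := by
      linarith [hueq r hr0]
    have hv2eq : deriv (deriv v) r
        = (lam + Q r) * v r - γ * (v r) ^ 3 - β * (u r) ^ 2 * v r - deriv v r / r := by
      linarith [hveq r hr0]
    simp only [sq_abs]
    rw [hu2eq, hv2eq]
    push_cast
    simp only [Pi.add_apply, Pi.sub_apply, Pi.mul_apply, Pi.pow_apply, id]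
    field_simp
    ring
  case hint =>
    exact (hi1.sub (hi2.div_const 2)).sub (hi3.div_const 2)
  case htends =>
    refine squeeze_zero_norm' ?_ (tendsto_poly_exp_aux K hη)
    filter_upwards [Filter.eventually_ge_atTop (0:ℝ)] with r hr
    simpa [Real.norm_eq_abs] using hWb r hr
  -- assemble
  have key' : (∫ r in Set.Ioi (0:ℝ), (r * (|deriv u r| ^ 2 + |deriv v r| ^ 2)
        - r ^ 2 * (deriv P r * (u r) ^ 2 + deriv Q r * (v r) ^ 2) / 2
        - r * (α * (u r) ^ 4 + γ * (v r) ^ 4 + 2 * β * (u r) ^ 2 * (v r) ^ 2) / 2)) = 0 :=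
    key.trans (by norm_num)
  have hsplit : (∫ r in Set.Ioi (0:ℝ), (r * (|deriv u r| ^ 2 + |deriv v r| ^ 2)
        - r ^ 2 * (deriv P r * (u r) ^ 2 + deriv Q r * (v r) ^ 2) / 2
        - r * (α * (u r) ^ 4 + γ * (v r) ^ 4 + 2 * β * (u r) ^ 2 * (v r) ^ 2) / 2))
      = (∫ r in Set.Ioi (0:ℝ), r * (|deriv u r| ^ 2 + |deriv v r| ^ 2))
        - (∫ r in Set.Ioi (0:ℝ), r ^ 2 * (deriv P r * (u r) ^ 2 + deriv Q r * (v r) ^ 2)) / 2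
        - (∫ r in Set.Ioi (0:ℝ), r * (α * (u r) ^ 4 + γ * (v r) ^ 4
            + 2 * β * (u r) ^ 2 * (v r) ^ 2)) / 2 := by
    have hiA : Integrable (fun r : ℝ => r * (|deriv u r| ^ 2 + |deriv v r| ^ 2)
        - r ^ 2 * (deriv P r * (u r) ^ 2 + deriv Q r * (v r) ^ 2) / 2)
        (volume.restrict (Set.Ioi 0)) := hi1.sub (hi2.div_const 2)
    have hiB : Integrable (fun r : ℝ => r * (α * (u r) ^ 4 + γ * (v r) ^ 4
        + 2 * β * (u r) ^ 2 * (v r) ^ 2) / 2) (volume.restrict (Set.Ioi 0)) :=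
      hi3.div_const 2
    have hiC : Integrable (fun r : ℝ => r ^ 2 * (deriv P r * (u r) ^ 2
        + deriv Q r * (v r) ^ 2) / 2) (volume.restrict (Set.Ioi 0)) := hi2.div_const 2
    rw [integral_sub hiA hiB, integral_sub hi1 hiC, integral_div, integral_div]
  rw [hsplit] at key'
  linarith
end

section
/- Let α > 0, γ > 0 and β ∈ (-√(αγ), 0) ∪ (0, min{α,γ}) ∪ (max{α,γ}, +∞). Then (γ-β)/(αγ-β²) > 0 and (α-β)/(αγ-β²) > 0, and for any twice differentiable function w : ℝ → ℝ satisfying -w''(r) + w(r) = w(r)³ for all r ∈ ℝ, the pair U = √((γ-β)/(αγ-β²))·w and V = √((α-β)/(αγ-β²))·w satisfies -U''(r) + U(r) = α·U(r)³ + β·U(r)·V(r)² and -V''(r) + V(r) = γ·V(r)³ + β·U(r)²·V(r) for all r ∈ ℝ. -/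
theorem synchronized_profile (α β γ : ℝ) (hα : 0 < α) (hγ : 0 < γ)
    (hβ : β ∈ Set.Ioo (-Real.sqrt (α * γ)) 0 ∪ Set.Ioo 0 (min α γ) ∪ Set.Ioi (max α γ)) :
    0 < (γ - β) / (α * γ - β ^ 2) ∧ 0 < (α - β) / (α * γ - β ^ 2) ∧
    ∀ w : ℝ → ℝ, Differentiable ℝ w → Differentiable ℝ (deriv w) →
      (∀ r : ℝ, -(deriv (deriv w) r) + w r = (w r) ^ 3) →
      (∀ r : ℝ,
          -(deriv (deriv (fun s => Real.sqrt ((γ - β) / (α * γ - β ^ 2)) * w s)) r)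
            + Real.sqrt ((γ - β) / (α * γ - β ^ 2)) * w r
          = α * (Real.sqrt ((γ - β) / (α * γ - β ^ 2)) * w r) ^ 3
            + β * (Real.sqrt ((γ - β) / (α * γ - β ^ 2)) * w r)
              * (Real.sqrt ((α - β) / (α * γ - β ^ 2)) * w r) ^ 2) ∧
      (∀ r : ℝ,
          -(deriv (deriv (fun s => Real.sqrt ((α - β) / (α * γ - β ^ 2)) * w s)) r)
            + Real.sqrt ((α - β) / (α * γ - β ^ 2)) * w r
          = γ * (Real.sqrt ((α - β) / (α * γ - β ^ 2)) * w r) ^ 3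
            + β * (Real.sqrt ((γ - β) / (α * γ - β ^ 2)) * w r) ^ 2
              * (Real.sqrt ((α - β) / (α * γ - β ^ 2)) * w r)) := by
  have ha : 0 < (γ - β) / (α * γ - β ^ 2) ∧ 0 < (α - β) / (α * γ - β ^ 2) := by
    rcases hβ with (⟨h1, h2⟩ | ⟨h1, h2⟩) | h
    · have hb2 : β ^ 2 < α * γ := by
        have hs : |β| < Real.sqrt (α * γ) := abs_lt.mpr ⟨h1, by linarith [Real.sqrt_nonneg (α * γ)]⟩
        calc β ^ 2 = |β| ^ 2 := (sq_abs β).symm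
          _ < Real.sqrt (α * γ) ^ 2 := by
              exact pow_lt_pow_left₀ hs (abs_nonneg _) two_ne_zero
          _ = α * γ := Real.sq_sqrt (by positivity)
      constructor <;> apply div_pos <;> linarith
    · have hmin := lt_min_iff.mp h2
      have hb2 : β ^ 2 < α * γ := by nlinarith [hmin.1, hmin.2]
      constructor <;> apply div_pos <;> [linarith [hmin.2]; linarith; linarith [hmin.1]; linarith]
    · have hmax := max_lt_iff.mp (Set.mem_Ioi.mp h)
      have hb2 : α * γ < β ^ 2 := by nlinarith [hmax.1, hmax.2]
      constructor <;> rw [div_pos_iff] <;> right <;> constructor <;> linarith [hmax.1, hmax.2]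
  obtain ⟨ha1, ha2⟩ := ha
  refine ⟨ha1, ha2, ?_⟩
  intro w hw hw' heq
  set a := (γ - β) / (α * γ - β ^ 2) with hadef
  set b := (α - β) / (α * γ - β ^ 2) with hbdef
  have hd : α * γ - β ^ 2 ≠ 0 := by
    intro h0
    rw [hadef, h0, div_zero] at ha1; exact lt_irrefl 0 ha1
  have hab : α * a + β * b = 1 := by
    rw [hadef, hbdef, mul_div_assoc', mul_div_assoc', ← add_div, div_eq_one_iff_eq hd]; ring
  have hba : γ * b + β * a = 1 := by
    rw [hadef, hbdef, mul_div_assoc', mul_div_assoc', ← add_div, div_eq_one_iff_eq hd]; ring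
  have hsa : Real.sqrt a ^ 2 = a := Real.sq_sqrt ha1.le
  have hsb : Real.sqrt b ^ 2 = b := Real.sq_sqrt ha2.le
  have key : ∀ c : ℝ, ∀ r : ℝ, deriv (deriv (fun s => c * w s)) r = c * deriv (deriv w) r := by
    intro c r
    have h1 : deriv (fun s => c * w s) = fun s => c * deriv w s := by
      funext s; exact deriv_const_mul c (hw s)
    rw [h1]
    exact deriv_const_mul c (hw' r)
  constructor <;> intro r
  · have h3 := heq r
    rw [key]
    have hw3 : deriv (deriv w) r = w r - w r ^ 3 := by linarith
    rw [hw3]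
    linear_combination -(w r ^ 3 * Real.sqrt a * α) * hsa
      - (w r ^ 3 * Real.sqrt a * β) * hsb - (Real.sqrt a * w r ^ 3) * hab
  · have h3 := heq r
    rw [key]
    have hw3 : deriv (deriv w) r = w r - w r ^ 3 := by linarith
    rw [hw3]
    linear_combination -(w r ^ 3 * Real.sqrt b * γ) * hsb
      - (w r ^ 3 * Real.sqrt b * β) * hsa - (Real.sqrt b * w r ^ 3) * hba
end

section
/- For every real q with 2 ≤ q < ∞ there exists a constant C > 0 such that for every λ > 0 and every continuously differentiable, compactly supported function u : ℝ² → ℝ, one has (∫_{ℝ²} |u(x)|^q dx)^{1/q} ≤ C·λ^{-1/q}·(∫_{ℝ²} (|∇u(x)|² + λ·u(x)²) dx)^{1/2}. -/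
open MeasureTheory ENNReal Module
open scoped NNReal
noncomputable section

local notation "E2" => EuclideanSpace ℝ (Fin 2)
local notation "μ2" => (volume : Measure (EuclideanSpace ℝ (Fin 2)))

lemma sob_interp {α : Type*} [MeasurableSpace α] (μ : Measure α) {f : α → ℝ≥0∞}
    (hf : AEMeasurable f μ) {s t a b : ℝ} (hs : 0 < s) (ht : 0 < t)
    (ha : 0 < a) (hb : 0 < b) (hab : a + b = 1) :
    ∫⁻ x, f x ^ (s * a + t * b) ∂μ ≤ (∫⁻ x, f x ^ s ∂μ) ^ a * (∫⁻ x, f x ^ t ∂μ) ^ b := by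
  have ha1 : a < 1 := by linarith
  have hconj : Real.HolderConjugate (1/a) (1/b) := by
    rw [Real.holderConjugate_iff]; constructor
    · rw [lt_div_iff₀ ha]; linarith
    · rw [one_div, one_div, inv_inv, inv_inv]; exact hab
  have hold := ENNReal.lintegral_mul_le_Lp_mul_Lq μ hconj
    (f := fun x => f x ^ (s * a)) (g := fun x => f x ^ (t * b))
    (hf.pow_const _) (hf.pow_const _)
  simp only [Pi.mul_apply] at hold
  calc ∫⁻ x, f x ^ (s * a + t * b) ∂μ
      = ∫⁻ x, f x ^ (s * a) * f x ^ (t * b) ∂μ :=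
        lintegral_congr fun x => ENNReal.rpow_add_of_nonneg _ _ (by positivity) (by positivity)
    _ ≤ (∫⁻ x, (f x ^ (s * a)) ^ (1/a) ∂μ) ^ (1/(1/a)) *
        (∫⁻ x, (f x ^ (t * b)) ^ (1/b) ∂μ) ^ (1/(1/b)) := hold
    _ = (∫⁻ x, f x ^ s ∂μ) ^ a * (∫⁻ x, f x ^ t ∂μ) ^ b := by
        rw [one_div_one_div, one_div_one_div]
        congr 1
        · congr 1
          exact lintegral_congr fun x => by
            rw [← ENNReal.rpow_mul]; congr 1; field_simp
        · congr 1
          exact lintegral_congr fun x => by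
            rw [← ENNReal.rpow_mul]; congr 1; field_simp


lemma sob_fin {F : Type*} [NormedAddCommGroup F] {f : E2 → F}
    (hf : Continuous f) (h2f : HasCompactSupport f) {r : ℝ} (hr : 0 < r) :
    ∫⁻ x, (‖f x‖₊ : ℝ≥0∞) ^ r ∂μ2 ≠ ⊤ := by
  refine (lintegral_rpow_enorm_lt_top_of_eLpNorm'_lt_top (f := f) hr ?_).ne
  have hr' : (r.toNNReal : ℝ≥0∞) ≠ 0 := by simp [Real.toNNReal_eq_zero, not_le, hr]
  have := (hf.memLp_of_hasCompactSupport (μ := μ2) (p := (r.toNNReal : ℝ≥0∞)) h2f).eLpNorm_lt_top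
  rwa [eLpNorm_nnreal_eq_eLpNorm' (by exact_mod_cast hr'), Real.coe_toNNReal _ hr.le] at this

lemma sob_core {u : E2 → ℝ} (hu : ContDiff ℝ 1 u) (h2u : HasCompactSupport u)
    {γ : ℝ≥0} (hγ : 1 < γ) :
    (∫⁻ x, (‖u x‖₊ : ℝ≥0∞) ^ (2 * (γ:ℝ)) ∂μ2) ^ ((1:ℝ)/2)
      ≤ (eLpNormLESNormFDerivOneConst μ2 2) * γ *
        ((∫⁻ x, (‖u x‖₊ : ℝ≥0∞) ^ (2 * ((γ:ℝ) - 1)) ∂μ2) ^ ((1:ℝ)/2) *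
         (∫⁻ x, (‖fderiv ℝ u x‖₊ : ℝ≥0∞) ^ (2:ℝ) ∂μ2) ^ ((1:ℝ)/2)) := by
  have h1γ : (1:ℝ) < γ := by exact_mod_cast hγ
  have hγ0 : (0:ℝ) ≤ γ := γ.coe_nonneg
  set v : E2 → ℝ := fun x ↦ ‖u x‖ ^ (γ:ℝ) with hv_def
  have hv : ContDiff ℝ 1 v := by rw [hv_def]; exact hu.norm_rpow h1γ
  have h2v : HasCompactSupport v := by
    rw [hv_def]; exact h2u.norm.rpow_const (by positivity)
  have hconj : ((finrank ℝ E2 : ℝ≥0)).HolderConjugate 2 := by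
    have : finrank ℝ E2 = 2 := by simp
    rw [this]
    exact NNReal.holderConjugate_iff.mpr ⟨by norm_num, by rw [← NNReal.coe_inj]; push_cast; norm_num⟩
  have key := eLpNorm_le_eLpNorm_fderiv_one μ2 hv h2v hconj
  have hL : eLpNorm v ((2:ℝ≥0) : ℝ≥0∞) μ2
      = (∫⁻ x, (‖u x‖₊ : ℝ≥0∞) ^ (2 * (γ:ℝ)) ∂μ2) ^ ((1:ℝ)/2) := by
    rw [eLpNorm_nnreal_eq_lintegral (by norm_num)]
    have : ∀ x : E2, (‖v x‖₊ : ℝ≥0∞) ^ ((2:ℝ≥0):ℝ) = (‖u x‖₊ : ℝ≥0∞) ^ (2 * (γ:ℝ)) := by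
      intro x
      rw [hv_def]
      simp only []
      rw [Real.nnnorm_rpow_of_nonneg (norm_nonneg _), ENNReal.coe_rpow_of_nonneg _ hγ0,
        ← ENNReal.rpow_mul]
      norm_num [mul_comm]
    rw [show (∫⁻ x, ‖v x‖ₑ ^ ((2:ℝ≥0):ℝ) ∂μ2) = _ from lintegral_congr this]
    norm_num
  have hucont := hu.continuous
  have hfd := (hu.fderiv_right (m := 0) le_rfl).continuous
  have hR : eLpNorm (fderiv ℝ v) 1 μ2
      ≤ (γ : ℝ≥0∞) * ((∫⁻ x, (‖u x‖₊ : ℝ≥0∞) ^ (2 * ((γ:ℝ) - 1)) ∂μ2) ^ ((1:ℝ)/2) *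
         (∫⁻ x, (‖fderiv ℝ u x‖₊ : ℝ≥0∞) ^ (2:ℝ) ∂μ2) ^ ((1:ℝ)/2)) := by
    rw [eLpNorm_one_eq_lintegral_enorm]
    have hconj2 : Real.HolderConjugate 2 2 := ⟨by norm_num, by norm_num, by norm_num⟩
    have hold := ENNReal.lintegral_mul_le_Lp_mul_Lq μ2 hconj2
      (f := fun x => (‖u x‖₊ : ℝ≥0∞) ^ ((γ:ℝ) - 1))
      (g := fun x => (‖fderiv ℝ u x‖₊ : ℝ≥0∞)) (by fun_prop) (by fun_prop)
    simp only [Pi.mul_apply] at hold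
    have e1 : ∫⁻ x, ((‖u x‖₊:ℝ≥0∞) ^ ((γ:ℝ)-1)) ^ (2:ℝ) ∂μ2
        = ∫⁻ x, (‖u x‖₊:ℝ≥0∞) ^ (2*((γ:ℝ)-1)) ∂μ2 :=
      lintegral_congr fun x => by rw [← ENNReal.rpow_mul, mul_comm]
    rw [e1] at hold
    calc ∫⁻ x, (‖fderiv ℝ v x‖₊ : ℝ≥0∞) ∂μ2
        ≤ ∫⁻ x, (γ : ℝ≥0∞) * ((‖u x‖₊ : ℝ≥0∞) ^ ((γ:ℝ) - 1) * (‖fderiv ℝ u x‖₊ : ℝ≥0∞)) ∂μ2 := by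
          refine lintegral_mono fun x => ?_
          have hb := nnnorm_fderiv_norm_rpow_le (hu.differentiable one_ne_zero) (x := x) hγ
          calc (‖fderiv ℝ v x‖₊ : ℝ≥0∞)
              ≤ ((γ * ‖u x‖₊ ^ ((γ:ℝ) - 1) * ‖fderiv ℝ u x‖₊ : ℝ≥0) : ℝ≥0∞) := by
                exact_mod_cast hb
            _ = (γ : ℝ≥0∞) * ((‖u x‖₊ : ℝ≥0∞) ^ ((γ:ℝ) - 1) * (‖fderiv ℝ u x‖₊ : ℝ≥0∞)) := by
                push_cast [ENNReal.coe_rpow_of_nonneg _ (by linarith : (0:ℝ) ≤ (γ:ℝ) - 1)]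
                ring
      _ = (γ:ℝ≥0∞) * ∫⁻ x, ((‖u x‖₊ : ℝ≥0∞) ^ ((γ:ℝ) - 1) * (‖fderiv ℝ u x‖₊ : ℝ≥0∞)) ∂μ2 := by
          rw [lintegral_const_mul]
          fun_prop
      _ ≤ _ := by
          gcongr
  calc (∫⁻ x, (‖u x‖₊ : ℝ≥0∞) ^ (2 * (γ:ℝ)) ∂μ2) ^ ((1:ℝ)/2)
      = eLpNorm v ((2:ℝ≥0):ℝ≥0∞) μ2 := hL.symm
    _ ≤ (eLpNormLESNormFDerivOneConst μ2 2) * eLpNorm (fderiv ℝ v) 1 μ2 := key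
    _ ≤ _ := by
        rw [mul_assoc]
        gcongr

lemma sob_GN (q : ℝ) (hq : 2 ≤ q) :
    ∃ C : ℝ≥0∞, C ≠ ⊤ ∧ ∀ u : E2 → ℝ, ContDiff ℝ 1 u → HasCompactSupport u →
      (∫⁻ x, (‖u x‖₊ : ℝ≥0∞) ^ q ∂μ2)
        ≤ C * (∫⁻ x, (‖u x‖₊ : ℝ≥0∞) ^ (2:ℝ) ∂μ2) *
          (∫⁻ x, (‖fderiv ℝ u x‖₊ : ℝ≥0∞) ^ (2:ℝ) ∂μ2) ^ ((q-2)/2) := by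
  set C0 : ℝ≥0∞ := (eLpNormLESNormFDerivOneConst μ2 2 : ℝ≥0∞) with hC0
  have hC0top : C0 ≠ ⊤ := coe_ne_top
  set K4 : ℝ≥0∞ := C0 * ((2:ℝ≥0) : ℝ≥0∞) with hK4
  have hK4top : K4 ≠ ⊤ := ENNReal.mul_ne_top hC0top coe_ne_top
  -- the q = 4 case, used twice
  have case4 : ∀ u : E2 → ℝ, ContDiff ℝ 1 u → HasCompactSupport u →
      (∫⁻ x, (‖u x‖₊ : ℝ≥0∞) ^ (4:ℝ) ∂μ2)
        ≤ K4 ^ (2:ℝ) * (∫⁻ x, (‖u x‖₊ : ℝ≥0∞) ^ (2:ℝ) ∂μ2) *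
          (∫⁻ x, (‖fderiv ℝ u x‖₊ : ℝ≥0∞) ^ (2:ℝ) ∂μ2) := by
    intro u hu h2u
    have hcore := sob_core hu h2u (γ := 2) (by norm_num)
    rw [show (2 * ((2:ℝ≥0):ℝ)) = (4:ℝ) by norm_num,
      show (2 * (((2:ℝ≥0):ℝ) - 1)) = (2:ℝ) by norm_num] at hcore
    set P := ∫⁻ x, (‖u x‖₊ : ℝ≥0∞) ^ (4:ℝ) ∂μ2 with hP
    set S := ∫⁻ x, (‖u x‖₊ : ℝ≥0∞) ^ (2:ℝ) ∂μ2 with hS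
    set D := ∫⁻ x, (‖fderiv ℝ u x‖₊ : ℝ≥0∞) ^ (2:ℝ) ∂μ2 with hD
    have hcore' : P ^ ((1:ℝ)/2) ≤ K4 * (S ^ ((1:ℝ)/2) * D ^ ((1:ℝ)/2)) := hcore
    have h2 := ENNReal.rpow_le_rpow hcore' (by norm_num : (0:ℝ) ≤ 2)
    calc P = (P ^ ((1:ℝ)/2)) ^ (2:ℝ) := by
            rw [← ENNReal.rpow_mul]; norm_num
      _ ≤ (K4 * (S ^ ((1:ℝ)/2) * D ^ ((1:ℝ)/2))) ^ (2:ℝ) := h2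
      _ = K4 ^ (2:ℝ) * S * D := by
          rw [ENNReal.mul_rpow_of_nonneg K4 (S ^ ((1:ℝ)/2) * D ^ ((1:ℝ)/2))
              (by norm_num : (0:ℝ) ≤ 2),
            ENNReal.mul_rpow_of_nonneg (S ^ ((1:ℝ)/2)) (D ^ ((1:ℝ)/2))
              (by norm_num : (0:ℝ) ≤ 2),
            ← ENNReal.rpow_mul S, ← ENNReal.rpow_mul D]
          norm_num [mul_assoc]
  rcases eq_or_lt_of_le hq with h2q | h2q
  · -- q = 2
    refine ⟨1, one_ne_top, fun u hu h2u => ?_⟩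
    rw [← h2q]
    simp
  rcases lt_trichotomy q 4 with h4q | h4q | h4q
  · -- 2 < q < 4
    set a : ℝ := (4 - q)/2 with ha_def
    set b : ℝ := (q - 2)/2 with hb_def
    have ha : 0 < a := by rw [ha_def]; linarith
    have hb : 0 < b := by rw [hb_def]; linarith
    have hab : a + b = 1 := by rw [ha_def, hb_def]; ring
    refine ⟨(K4 ^ (2:ℝ)) ^ b, ENNReal.rpow_ne_top_of_nonneg hb.le
      (ENNReal.rpow_ne_top_of_nonneg (by norm_num) hK4top), fun u hu h2u => ?_⟩
    set P := ∫⁻ x, (‖u x‖₊ : ℝ≥0∞) ^ q ∂μ2 with hP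
    set P4 := ∫⁻ x, (‖u x‖₊ : ℝ≥0∞) ^ (4:ℝ) ∂μ2 with hP4
    set S := ∫⁻ x, (‖u x‖₊ : ℝ≥0∞) ^ (2:ℝ) ∂μ2 with hS
    set D := ∫⁻ x, (‖fderiv ℝ u x‖₊ : ℝ≥0∞) ^ (2:ℝ) ∂μ2 with hD
    have hi := sob_interp μ2 (f := fun x => (‖u x‖₊ : ℝ≥0∞))
      (hu.continuous.nnnorm.measurable.coe_nnreal_ennreal).aemeasurable
      (by norm_num : (0:ℝ) < 2) (by norm_num : (0:ℝ) < 4) ha hb hab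
    rw [show (2*a + 4*b : ℝ) = q by rw [ha_def, hb_def]; ring] at hi
    have h4 := ENNReal.rpow_le_rpow (case4 u hu h2u) hb.le
    calc P ≤ S ^ a * P4 ^ b := hi
      _ ≤ S ^ a * (K4 ^ (2:ℝ) * S * D) ^ b := by gcongr
      _ = (K4 ^ (2:ℝ)) ^ b * (S ^ a * S ^ b) * D ^ b := by
          rw [ENNReal.mul_rpow_of_nonneg _ _ hb.le, ENNReal.mul_rpow_of_nonneg _ _ hb.le]
          ring
      _ = (K4 ^ (2:ℝ)) ^ b * S * D ^ b := by
          rw [← ENNReal.rpow_add_of_nonneg _ _ ha.le hb.le, hab, ENNReal.rpow_one]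
  · -- q = 4
    subst h4q
    refine ⟨K4 ^ (2:ℝ), ENNReal.rpow_ne_top_of_nonneg (by norm_num) hK4top,
      fun u hu h2u => ?_⟩
    rw [show ((4:ℝ)-2)/2 = (1:ℝ) by norm_num, ENNReal.rpow_one]
    exact case4 u hu h2u
  · -- q > 4
    have hq2 : (0:ℝ) < q - 2 := by linarith
    set γ : ℝ≥0 := (q/2).toNNReal with hγ_def
    have hγcoe : (γ : ℝ) = q / 2 := Real.coe_toNNReal _ (by linarith)
    have hγ : 1 < γ := by
      rw [← NNReal.coe_lt_coe, hγcoe]; push_cast; linarith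
    set K : ℝ≥0∞ := C0 * (γ : ℝ≥0∞) with hK
    have hKtop : K ≠ ⊤ := ENNReal.mul_ne_top hC0top coe_ne_top
    refine ⟨K ^ (q-2), ENNReal.rpow_ne_top_of_nonneg hq2.le hKtop, fun u hu h2u => ?_⟩
    set P := ∫⁻ x, (‖u x‖₊ : ℝ≥0∞) ^ q ∂μ2 with hP
    set R := ∫⁻ x, (‖u x‖₊ : ℝ≥0∞) ^ (q-2) ∂μ2 with hR
    set S := ∫⁻ x, (‖u x‖₊ : ℝ≥0∞) ^ (2:ℝ) ∂μ2 with hS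
    set D := ∫⁻ x, (‖fderiv ℝ u x‖₊ : ℝ≥0∞) ^ (2:ℝ) ∂μ2 with hD
    rcases eq_or_ne P 0 with hP0 | hP0
    · rw [hP0]; exact zero_le
    have hPtop : P ≠ ⊤ := sob_fin hu.continuous h2u (by linarith)
    have hcore := sob_core hu h2u hγ
    rw [show (2 * (γ:ℝ)) = q by rw [hγcoe]; ring,
      show (2 * ((γ:ℝ) - 1)) = q - 2 by rw [hγcoe]; ring] at hcore
    have hcore' : P ^ ((1:ℝ)/2) ≤ K * (R ^ ((1:ℝ)/2) * D ^ ((1:ℝ)/2)) := hcore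
    set a : ℝ := 2/(q-2) with ha_def
    set b : ℝ := (q-4)/(q-2) with hb_def
    have ha : 0 < a := by rw [ha_def]; positivity
    have hb : 0 < b := by rw [hb_def]; apply div_pos <;> linarith
    have hab : a + b = 1 := by
      rw [ha_def, hb_def, ← add_div, show (2 + (q-4) : ℝ) = q - 2 by ring,
        div_self hq2.ne']
    have hi := sob_interp μ2 (f := fun x => (‖u x‖₊ : ℝ≥0∞))
      (hu.continuous.nnnorm.measurable.coe_nnreal_ennreal).aemeasurable
      (by norm_num : (0:ℝ) < 2) (by linarith : (0:ℝ) < q) ha hb hab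
    rw [show (2*a + q*b : ℝ) = q - 2 by rw [ha_def, hb_def]; field_simp; ring] at hi
    -- R^(1/2) ≤ S^(a/2) * P^(b/2)
    have hR12 : R ^ ((1:ℝ)/2) ≤ S ^ (a/2) * P ^ (b/2) := by
      calc R ^ ((1:ℝ)/2) ≤ (S ^ a * P ^ b) ^ ((1:ℝ)/2) :=
            ENNReal.rpow_le_rpow hi (by norm_num)
        _ = S ^ (a/2) * P ^ (b/2) := by
            rw [ENNReal.mul_rpow_of_nonneg _ _ (by norm_num : (0:ℝ) ≤ 1/2),
              ← ENNReal.rpow_mul, ← ENNReal.rpow_mul]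
            rw [show a * (1/2) = a/2 by ring, show b * (1/2) = b/2 by ring]
    have hstep : P ^ (a/2) ≤ K * S ^ (a/2) * D ^ ((1:ℝ)/2) := by
      have hPb0 : P ^ (b/2) ≠ 0 :=
        (ENNReal.rpow_pos (pos_iff_ne_zero.mpr hP0) hPtop).ne'
      have hPbtop : P ^ (b/2) ≠ ⊤ := ENNReal.rpow_ne_top_of_nonneg (by positivity) hPtop
      rw [← ENNReal.mul_le_mul_iff_left hPb0 hPbtop]
      calc P ^ (a/2) * P ^ (b/2) = P ^ ((1:ℝ)/2) := by
            rw [← ENNReal.rpow_add_of_nonneg _ _ (by positivity) (by positivity)]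
            rw [← add_div, hab]
        _ ≤ K * (R ^ ((1:ℝ)/2) * D ^ ((1:ℝ)/2)) := hcore'
        _ ≤ K * ((S ^ (a/2) * P ^ (b/2)) * D ^ ((1:ℝ)/2)) := by gcongr
        _ = K * S ^ (a/2) * D ^ ((1:ℝ)/2) * P ^ (b/2) := by ring
    have hfinal := ENNReal.rpow_le_rpow hstep hq2.le
    calc P = (P ^ (a/2)) ^ (q-2) := by
          rw [← ENNReal.rpow_mul]
          rw [show (a/2) * (q-2) = 1 by rw [ha_def]; field_simp]
          rw [ENNReal.rpow_one]
      _ ≤ (K * S ^ (a/2) * D ^ ((1:ℝ)/2)) ^ (q-2) := hfinal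
      _ = K ^ (q-2) * S * D ^ ((q-2)/2) := by
          rw [ENNReal.mul_rpow_of_nonneg _ _ hq2.le, ENNReal.mul_rpow_of_nonneg _ _ hq2.le,
            ← ENNReal.rpow_mul, ← ENNReal.rpow_mul,
            show (a/2) * (q-2) = 1 by rw [ha_def]; field_simp,
            show (1:ℝ)/2 * (q-2) = (q-2)/2 by ring, ENNReal.rpow_one]

theorem scaled_sobolev_inequality (q : ℝ) (hq : 2 ≤ q) :
    ∃ C > (0:ℝ), ∀ lam : ℝ, 0 < lam →
      ∀ u : EuclideanSpace ℝ (Fin 2) → ℝ, ContDiff ℝ 1 u → HasCompactSupport u →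
        (∫ x, |u x| ^ q) ^ (1 / q)
          ≤ C * lam ^ (-(1 / q))
            * (∫ x, (‖fderiv ℝ u x‖ ^ 2 + lam * (u x) ^ 2)) ^ ((1:ℝ) / 2) := by
  obtain ⟨Cg, hCgtop, hGN⟩ := sob_GN q hq
  have hq0 : (0:ℝ) < q := by linarith
  set c : ℝ := Cg.toReal with hc_def
  have hc0 : 0 ≤ c := ENNReal.toReal_nonneg
  refine ⟨c ^ (1/q) + 1, by positivity, fun lam hlam u hu h2u => ?_⟩
  set P := ∫⁻ x, (‖u x‖₊ : ℝ≥0∞) ^ q ∂μ2 with hP_def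
  set S := ∫⁻ x, (‖u x‖₊ : ℝ≥0∞) ^ (2:ℝ) ∂μ2 with hS_def
  set D := ∫⁻ x, (‖fderiv ℝ u x‖₊ : ℝ≥0∞) ^ (2:ℝ) ∂μ2 with hD_def
  have hucont := hu.continuous
  have hfdcont : Continuous (fderiv ℝ u) := hu.continuous_fderiv one_ne_zero
  have hfdsupp : HasCompactSupport (fderiv ℝ u) := h2u.fderiv ℝ
  have hPtop : P ≠ ⊤ := sob_fin hucont h2u hq0
  have hStop : S ≠ ⊤ := sob_fin hucont h2u two_pos
  have hDtop : D ≠ ⊤ := sob_fin hfdcont hfdsupp two_pos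
  set p : ℝ := P.toReal
  set s : ℝ := S.toReal
  set d : ℝ := D.toReal
  have hp0 : 0 ≤ p := ENNReal.toReal_nonneg
  have hs0 : 0 ≤ s := ENNReal.toReal_nonneg
  have hd0 : 0 ≤ d := ENNReal.toReal_nonneg
  -- identify the integrals
  have hIq : ∫ x, |u x| ^ q ∂μ2 = p := by
    rw [integral_eq_lintegral_of_nonneg_ae (ae_of_all _ fun x => by positivity)
      ((hucont.abs.rpow_const fun x => Or.inr hq0.le).aestronglyMeasurable)]
    congr 1
    refine lintegral_congr fun x => ?_
    rw [← ENNReal.ofReal_rpow_of_nonneg (abs_nonneg _) hq0.le, ← Real.enorm_eq_ofReal_abs, enorm_eq_nnnorm]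
  have hnormsq : ∀ {F : Type} [NormedAddCommGroup F] (y : F),
      ENNReal.ofReal (‖y‖^2) = (‖y‖₊ : ℝ≥0∞) ^ (2:ℝ) := by
    intro F _ y
    rw [← Real.rpow_natCast ‖y‖ 2,
      ← ENNReal.ofReal_rpow_of_nonneg (norm_nonneg _) (by norm_num), ofReal_norm, enorm_eq_nnnorm]
    norm_num
  have hID : ∫ x, ‖fderiv ℝ u x‖ ^ 2 ∂μ2 = d := by
    rw [integral_eq_lintegral_of_nonneg_ae (f := fun x => ‖fderiv ℝ u x‖ ^ 2) (ae_of_all _ fun x => by positivity)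
      ((hfdcont.norm.pow 2).aestronglyMeasurable)]
    congr 1
    refine lintegral_congr fun x => ?_
    exact hnormsq _
  have hIS : ∫ x, (u x) ^ 2 ∂μ2 = s := by
    rw [integral_eq_lintegral_of_nonneg_ae (f := fun x => (u x) ^ 2) (ae_of_all _ fun x => by positivity)
      ((hucont.pow 2).aestronglyMeasurable)]
    congr 1
    refine lintegral_congr fun x => ?_
    rw [show (u x)^2 = ‖u x‖^2 by rw [Real.norm_eq_abs, sq_abs]]
    exact hnormsq _
  have hInt1 : Integrable (fun x => ‖fderiv ℝ u x‖ ^ 2) μ2 :=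
    (show Continuous (fun x => ‖fderiv ℝ u x‖ ^ 2) from hfdcont.norm.pow 2).integrable_of_hasCompactSupport (hfdsupp.comp_left (g := fun y => ‖y‖^2) (by simp))
  have hInt2 : Integrable (fun x => (u x) ^ 2) μ2 :=
    (show Continuous (fun x => (u x) ^ 2) from hucont.pow 2).integrable_of_hasCompactSupport (h2u.comp_left (g := fun t : ℝ => t^2) (by simp))
  have hItot : ∫ x, (‖fderiv ℝ u x‖ ^ 2 + lam * (u x) ^ 2) ∂μ2 = d + lam * s := by
    rw [integral_add hInt1 (hInt2.const_mul lam), hID, integral_const_mul, hIS]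
  -- real form of GN
  have h3 : p ≤ c * s * d ^ ((q-2)/2) := by
    have h := hGN u hu h2u
    have hne : Cg * S * D ^ ((q-2)/2) ≠ ⊤ :=
      ENNReal.mul_ne_top (ENNReal.mul_ne_top hCgtop hStop)
        (ENNReal.rpow_ne_top_of_nonneg (div_nonneg (by linarith) (by norm_num)) hDtop)
    have := ENNReal.toReal_mono hne h
    rwa [ENNReal.toReal_mul, ENNReal.toReal_mul, ← ENNReal.toReal_rpow] at this
  -- final computation
  rw [hIq, hItot]
  have e1 : 0 ≤ 1/q := by positivity
  have e2 : (0:ℝ) ≤ 1/2 - 1/q := by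
    have : 1/q ≤ 1/2 := by
      rw [div_le_div_iff₀ hq0 two_pos]; linarith
    linarith
  have hds : (0:ℝ) ≤ d + lam * s := by positivity
  calc p ^ (1/q) ≤ (c * s * d ^ ((q-2)/2)) ^ (1/q) :=
        Real.rpow_le_rpow hp0 h3 e1
    _ = c ^ (1/q) * (s ^ (1/q) * d ^ (1/2 - 1/q)) := by
        rw [Real.mul_rpow (by positivity) (by positivity),
          Real.mul_rpow hc0 hs0, ← Real.rpow_mul hd0,
          show ((q-2)/2) * (1/q) = 1/2 - 1/q by field_simp, mul_assoc]
    _ = c ^ (1/q) * lam ^ (-(1/q)) * ((lam * s) ^ (1/q) * d ^ (1/2 - 1/q)) := by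
        have hsplit : s ^ (1/q) = lam ^ (-(1/q)) * (lam * s) ^ (1/q) := by
          rw [Real.mul_rpow hlam.le hs0, ← mul_assoc, ← Real.rpow_add hlam]
          norm_num
        rw [hsplit]; ring
    _ ≤ c ^ (1/q) * lam ^ (-(1/q)) * ((d + lam * s) ^ (1/q) * (d + lam * s) ^ (1/2 - 1/q)) := by
        have h1 : (lam * s) ^ (1/q) ≤ (d + lam * s) ^ (1/q) :=
          Real.rpow_le_rpow (by positivity) (by nlinarith [mul_nonneg hlam.le hs0]) e1
        have h2 : d ^ (1/2 - 1/q) ≤ (d + lam * s) ^ (1/2 - 1/q) :=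
          Real.rpow_le_rpow hd0 (by nlinarith [mul_nonneg hlam.le hs0]) e2
        have := mul_le_mul h1 h2 (by positivity) (by positivity)
        exact mul_le_mul_of_nonneg_left this (by positivity)
    _ = c ^ (1/q) * lam ^ (-(1/q)) * (d + lam * s) ^ ((1:ℝ)/2) := by
        rw [← Real.rpow_add' hds (by norm_num : (1/q + (1/2 - 1/q) : ℝ) ≠ 0)]
        norm_num
    _ ≤ (c ^ (1/q) + 1) * lam ^ (-(1/q)) * (d + lam * s) ^ ((1:ℝ)/2) := by
        gcongr
        linarith
end
end
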